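/- arXiv:2512.00286 — 4 statements merged into one kernel-verified Lean document; each statement's English description precedes it below -/
import Mathlib

section
/- Let (H, B) be a Rota–Baxter Hopf algebra of weight −1. Then the linear map B̃ : H → H defined by B̃(x) = x₁ B(S(x₂)) is again a Rota–Baxter operator of weight −1 on H; that is, B̃ is a coalgebra map and B̃(x)B̃(y) = B̃(B̃(x₁) y S(B̃(x₂)) x₃) for all x, y ∈ H. -/
open TensorProduct LinearMap

noncomputable section

universe u

variable {K H : Type u} [Field K] [CharZero K] [Ring H] [HopfAlgebra K H]

/-- The antipode of `H` as a `K`-linear map. -/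
def aS (K H : Type u) [Field K] [Ring H] [HopfAlgebra K H] : H →ₗ[K] H :=
  HopfAlgebra.antipode K

/-- Convolution-type composite: `conv f g x = f x₁ * g x₂` in Sweedler notation,
where the source may be any coalgebra `C`. -/
def conv {C : Type u} [AddCommGroup C] [Module K C] [Coalgebra K C]
    (f g : C →ₗ[K] H) : C →ₗ[K] H :=
  LinearMap.mul' K H ∘ₗ TensorProduct.map f g ∘ₗ Coalgebra.comul

/-- `wrap f g h (a ⊗ₜ c) = f a₁ * (g c * h a₂)` in Sweedler notation. -/
def wrap {C : Type u} [AddCommGroup C] [Module K C] [Coalgebra K C]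
    (f : C →ₗ[K] H) (g : H →ₗ[K] H) (h : C →ₗ[K] H) : C ⊗[K] H →ₗ[K] H :=
  LinearMap.mul' K H ∘ₗ
    TensorProduct.map f
      (LinearMap.mul' K H ∘ₗ TensorProduct.map g h ∘ₗ (TensorProduct.comm K C H).toLinearMap) ∘ₗ
    (TensorProduct.assoc K C C H).toLinearMap ∘ₗ
    TensorProduct.map Coalgebra.comul LinearMap.id

/-- The descendent product: `mulB B (x ⊗ₜ y) = B x₁ * (y * (S (B x₂) * x₃))`,
i.e. `x *_B y = B(x₁) y S(B(x₂)) x₃` in Sweedler notation. -/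
def mulB (B : H →ₗ[K] H) : H ⊗[K] H →ₗ[K] H :=
  wrap B LinearMap.id (conv (aS K H ∘ₗ B) LinearMap.id)

/-- `Bt B x = x₁ * B (S x₂)`, i.e. the operator `B̃`. -/
def Bt (B : H →ₗ[K] H) : H →ₗ[K] H := conv LinearMap.id (B ∘ₗ aS K H)

/-- `SB B x = S(B x₁) * (S x₂ * B x₃)`, the antipode `S_B` of the descendent Hopf algebra. -/
def SB (B : H →ₗ[K] H) : H →ₗ[K] H := conv (aS K H ∘ₗ B) (conv (aS K H) B)

/-- `H` is cocommutative. -/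
def IsCocomm (K H : Type u) [Field K] [Ring H] [HopfAlgebra K H] : Prop :=
  ∀ x : H, (TensorProduct.comm K H H) (Coalgebra.comul x) = Coalgebra.comul x

/-- `B` is a Rota–Baxter operator of weight `-1` on `H`: it is a coalgebra map and
`B x * B y = B (B(x₁) y S(B(x₂)) x₃)` in Sweedler notation. -/
def IsRotaBaxter (B : H →ₗ[K] H) : Prop :=
  (Coalgebra.comul ∘ₗ B = TensorProduct.map B B ∘ₗ Coalgebra.comul) ∧
  (Coalgebra.counit ∘ₗ B = Coalgebra.counit) ∧
  ∀ x y : H, B x * B y = B (mulB B (x ⊗ₜ[K] y))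


namespace RBaux

variable {K : Type u} [Field K]

section Conv

variable {C D A A' : Type u}
  [AddCommGroup C] [Module K C] [Coalgebra K C]
  [AddCommGroup D] [Module K D] [Coalgebra K D]
  [Ring A] [Algebra K A] [Ring A'] [Algebra K A']

/-- general convolution -/
def cv (f g : C →ₗ[K] A) : C →ₗ[K] A :=
  LinearMap.mul' K A ∘ₗ TensorProduct.map f g ∘ₗ Coalgebra.comul

/-- convolution unit -/
def uu : C →ₗ[K] A := Algebra.linearMap K A ∘ₗ Coalgebra.counit

/-- coalgebra morphism predicate -/
def IsCH (f : C →ₗ[K] D) : Prop :=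
  Coalgebra.comul ∘ₗ f = TensorProduct.map f f ∘ₗ Coalgebra.comul ∧
  Coalgebra.counit ∘ₗ f = Coalgebra.counit

/-- algebra morphism predicate (linear-map level) -/
def IsAH (ψ : A →ₗ[K] A') : Prop :=
  ψ ∘ₗ LinearMap.mul' K A = LinearMap.mul' K A' ∘ₗ TensorProduct.map ψ ψ ∧
  ψ ∘ₗ Algebra.linearMap K A = Algebra.linearMap K A'

/-- cocommutativity predicate -/
def CC (C : Type u) [AddCommGroup C] [Module K C] [Coalgebra K C] : Prop :=
  (TensorProduct.comm K C C).toLinearMap ∘ₗ Coalgebra.comul = Coalgebra.comul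

lemma mul3 : LinearMap.mul' K A ∘ₗ (LinearMap.mul' K A).rTensor A =
    LinearMap.mul' K A ∘ₗ (LinearMap.mul' K A).lTensor A ∘ₗ
      (TensorProduct.assoc K A A A).toLinearMap := by
  apply TensorProduct.ext_threefold
  intro x y z
  simp [mul_assoc]

lemma nat3 {M N P M' N' P' : Type u} [AddCommGroup M] [Module K M] [AddCommGroup N] [Module K N]
    [AddCommGroup P] [Module K P] [AddCommGroup M'] [Module K M'] [AddCommGroup N'] [Module K N']
    [AddCommGroup P'] [Module K P'] (f : M →ₗ[K] M') (g : N →ₗ[K] N') (h : P →ₗ[K] P') :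
    (TensorProduct.assoc K M' N' P').toLinearMap ∘ₗ
        TensorProduct.map (TensorProduct.map f g) h =
      TensorProduct.map f (TensorProduct.map g h) ∘ₗ (TensorProduct.assoc K M N P).toLinearMap := by
  apply TensorProduct.ext_threefold
  intro x y z
  simp

lemma cv_assoc (f g h : C →ₗ[K] A) : cv (cv f g) h = cv f (cv g h) := by
  unfold cv
  have h1 : TensorProduct.map
      (LinearMap.mul' K A ∘ₗ TensorProduct.map f g ∘ₗ Coalgebra.comul) h =
      (LinearMap.mul' K A).rTensor A ∘ₗ TensorProduct.map (TensorProduct.map f g) h ∘ₗ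
        (Coalgebra.comul (R := K) (A := C)).rTensor C := by
    apply TensorProduct.ext'
    intro a b
    simp
  have h2 : TensorProduct.map f
      (LinearMap.mul' K A ∘ₗ TensorProduct.map g h ∘ₗ Coalgebra.comul) =
      (LinearMap.mul' K A).lTensor A ∘ₗ TensorProduct.map f (TensorProduct.map g h) ∘ₗ
        (Coalgebra.comul (R := K) (A := C)).lTensor C := by
    apply TensorProduct.ext'
    intro a b
    simp
  rw [h1, h2]
  calc LinearMap.mul' K A ∘ₗ ((LinearMap.mul' K A).rTensor A ∘ₗ
        TensorProduct.map (TensorProduct.map f g) h ∘ₗ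
          (Coalgebra.comul (R := K) (A := C)).rTensor C) ∘ₗ Coalgebra.comul
      = (LinearMap.mul' K A ∘ₗ (LinearMap.mul' K A).rTensor A) ∘ₗ
          TensorProduct.map (TensorProduct.map f g) h ∘ₗ
          ((Coalgebra.comul (R := K) (A := C)).rTensor C ∘ₗ Coalgebra.comul) := by
        simp only [LinearMap.comp_assoc]
    _ = LinearMap.mul' K A ∘ₗ (LinearMap.mul' K A).lTensor A ∘ₗ
          ((TensorProduct.assoc K A A A).toLinearMap ∘ₗ
            TensorProduct.map (TensorProduct.map f g) h) ∘ₗ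
          ((Coalgebra.comul (R := K) (A := C)).rTensor C ∘ₗ Coalgebra.comul) := by
        rw [mul3]; simp only [LinearMap.comp_assoc]
    _ = LinearMap.mul' K A ∘ₗ (LinearMap.mul' K A).lTensor A ∘ₗ
          TensorProduct.map f (TensorProduct.map g h) ∘ₗ
          ((TensorProduct.assoc K C C C).toLinearMap ∘ₗ
            (Coalgebra.comul (R := K) (A := C)).rTensor C ∘ₗ Coalgebra.comul) := by
        rw [nat3]; simp only [LinearMap.comp_assoc]
    _ = LinearMap.mul' K A ∘ₗ ((LinearMap.mul' K A).lTensor A ∘ₗ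
          TensorProduct.map f (TensorProduct.map g h) ∘ₗ
          (Coalgebra.comul (R := K) (A := C)).lTensor C) ∘ₗ Coalgebra.comul := by
        rw [Coalgebra.coassoc]; simp only [LinearMap.comp_assoc]

lemma cv_uu (f : C →ₗ[K] A) : cv f uu = f := by
  apply LinearMap.ext; intro x
  have h : TensorProduct.map f (uu : C →ₗ[K] A) =
      TensorProduct.map f (Algebra.linearMap K A) ∘ₗ
        (Coalgebra.counit (R := K) (A := C)).lTensor C := by
    apply TensorProduct.ext'; intro a b; simp [uu]
  simp only [cv, comp_apply, h]
  rw [Coalgebra.lTensor_counit_comul]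
  simp

lemma uu_cv (f : C →ₗ[K] A) : cv uu f = f := by
  apply LinearMap.ext; intro x
  have h : TensorProduct.map (uu : C →ₗ[K] A) f =
      TensorProduct.map (Algebra.linearMap K A) f ∘ₗ
        (Coalgebra.counit (R := K) (A := C)).rTensor C := by
    apply TensorProduct.ext'; intro a b; simp [uu]
  simp only [cv, comp_apply, h]
  rw [Coalgebra.rTensor_counit_comul]
  simp

lemma cv_precomp (f g : C →ₗ[K] A) {φ : D →ₗ[K] C} (hφ : IsCH φ) :
    cv f g ∘ₗ φ = cv (f ∘ₗ φ) (g ∘ₗ φ) := by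
  unfold cv
  rw [LinearMap.comp_assoc, LinearMap.comp_assoc, hφ.1, TensorProduct.map_comp]
  simp only [LinearMap.comp_assoc]

lemma cv_postcomp (f g : C →ₗ[K] A) {ψ : A →ₗ[K] A'} (hψ : IsAH ψ) :
    ψ ∘ₗ cv f g = cv (ψ ∘ₗ f) (ψ ∘ₗ g) := by
  unfold cv
  rw [← LinearMap.comp_assoc, ← LinearMap.comp_assoc, hψ.1, TensorProduct.map_comp]
  simp only [LinearMap.comp_assoc]

lemma uu_precomp {φ : D →ₗ[K] C} (hφ : IsCH φ) : (uu : C →ₗ[K] A) ∘ₗ φ = uu := by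
  unfold uu
  rw [LinearMap.comp_assoc, hφ.2]

lemma uu_postcomp {ψ : A →ₗ[K] A'} (hψ : IsAH ψ) : ψ ∘ₗ (uu : C →ₗ[K] A) = uu := by
  unfold uu
  rw [← LinearMap.comp_assoc, hψ.2]

lemma IsCH.id : IsCH (LinearMap.id : C →ₗ[K] C) := by
  constructor <;> simp [TensorProduct.map_id]

lemma IsCH.comp {E : Type u} [AddCommGroup E] [Module K E] [Coalgebra K E]
    {f : D →ₗ[K] E} {g : C →ₗ[K] D} (hf : IsCH f) (hg : IsCH g) : IsCH (f ∘ₗ g) := by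
  constructor
  · rw [← LinearMap.comp_assoc, hf.1, LinearMap.comp_assoc, hg.1, TensorProduct.map_comp,
      LinearMap.comp_assoc]
  · rw [← LinearMap.comp_assoc, hf.2, hg.2]

end Conv

section Hopf

variable {H : Type u} [Ring H] [HopfAlgebra K H]

local notation "σ" => (HopfAlgebra.antipode K : H →ₗ[K] H)
local notation "Δ" => (Coalgebra.comul : H →ₗ[K] H ⊗[K] H)
local notation "ε" => (Coalgebra.counit : H →ₗ[K] K)
local notation "μ" => (LinearMap.mul' K H)

/-- right unit inclusion x ↦ x ⊗ 1 -/
def i1 : H →ₗ[K] H ⊗[K] H := (TensorProduct.mk K H H).flip 1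
/-- left unit inclusion x ↦ 1 ⊗ x -/
def i2 : H →ₗ[K] H ⊗[K] H := TensorProduct.mk K H H 1
/-- left leg projection x ⊗ y ↦ ε(y) x -/
def LL : H ⊗[K] H →ₗ[K] H :=
  (TensorProduct.rid K H).toLinearMap ∘ₗ (Coalgebra.counit (R := K) (A := H)).lTensor H
/-- right leg projection x ⊗ y ↦ ε(x) y -/
def RR : H ⊗[K] H →ₗ[K] H :=
  (TensorProduct.lid K H).toLinearMap ∘ₗ (Coalgebra.counit (R := K) (A := H)).rTensor H

@[simp] lemma i1_apply (x : H) : (i1 : H →ₗ[K] H ⊗[K] H) x = x ⊗ₜ[K] 1 := rfl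
@[simp] lemma i2_apply (x : H) : (i2 : H →ₗ[K] H ⊗[K] H) x = (1 : H) ⊗ₜ[K] x := rfl
@[simp] lemma LL_apply (x y : H) : (LL : H ⊗[K] H →ₗ[K] H) (x ⊗ₜ[K] y) =
    Coalgebra.counit (R := K) y • x := by simp [LL]
@[simp] lemma RR_apply (x y : H) : (RR : H ⊗[K] H →ₗ[K] H) (x ⊗ₜ[K] y) =
    Coalgebra.counit (R := K) x • y := by simp [RR]

lemma comulC_def : (Coalgebra.comul (R := K) (A := H ⊗[K] H)) =
    (TensorProduct.tensorTensorTensorComm K H H H H).toLinearMap ∘ₗ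
      TensorProduct.map (Coalgebra.comul : H →ₗ[K] H ⊗[K] H)
        (Coalgebra.comul : H →ₗ[K] H ⊗[K] H) := rfl

lemma counitC_def : (Coalgebra.counit (R := K) (A := H ⊗[K] H)) =
    LinearMap.mul' K K ∘ₗ TensorProduct.map ε ε := by
  apply TensorProduct.ext'; intro a b; simp [mul_comm]

@[simp] lemma counitC_tmul (x y : H) :
    Coalgebra.counit (R := K) (x ⊗ₜ[K] y) = Coalgebra.counit x * Coalgebra.counit y := by
  simp [mul_comm]

lemma comm_nat {M N P Q : Type u} [AddCommGroup M] [Module K M] [AddCommGroup N] [Module K N]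
    [AddCommGroup P] [Module K P] [AddCommGroup Q] [Module K Q]
    (f : M →ₗ[K] P) (g : N →ₗ[K] Q) :
    (TensorProduct.comm K P Q).toLinearMap ∘ₗ TensorProduct.map f g =
      TensorProduct.map g f ∘ₗ (TensorProduct.comm K M N).toLinearMap := by
  apply TensorProduct.ext'; intro a b; simp

lemma isAH_i1 : IsAH (i1 : H →ₗ[K] H ⊗[K] H) := by
  constructor
  · apply TensorProduct.ext'; intro a b
    simp [Algebra.TensorProduct.tmul_mul_tmul]
  · apply LinearMap.ext; intro k
    simp [Algebra.TensorProduct.algebraMap_apply]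

lemma isAH_i2 : IsAH (i2 : H →ₗ[K] H ⊗[K] H) := by
  constructor
  · apply TensorProduct.ext'; intro a b
    simp [Algebra.TensorProduct.tmul_mul_tmul]
  · apply LinearMap.ext; intro k
    simp only [comp_apply, Algebra.linearMap_apply, i2_apply,
      Algebra.TensorProduct.algebraMap_apply]
    simp [Algebra.algebraMap_eq_smul_one, TensorProduct.smul_tmul]

lemma isAH_comul : IsAH (Δ : H →ₗ[K] H ⊗[K] H) := by
  constructor
  · apply TensorProduct.ext'; intro a b
    simp [Bialgebra.comul_mul]
  · apply LinearMap.ext; intro k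
    simp [Bialgebra.comul_algebraMap]

lemma isAH_counit : IsAH (ε : H →ₗ[K] K) := by
  constructor
  · apply TensorProduct.ext'; intro a b
    simp [Bialgebra.counit_mul]
  · apply LinearMap.ext; intro k
    simp

lemma uu_eq_counit {C : Type u} [AddCommGroup C] [Module K C] [Coalgebra K C] :
    (uu : C →ₗ[K] K) = Coalgebra.counit := by
  apply LinearMap.ext; intro x
  simp [uu]

lemma cvee {C : Type u} [AddCommGroup C] [Module K C] [Coalgebra K C] :
    cv (Coalgebra.counit : C →ₗ[K] K) Coalgebra.counit = Coalgebra.counit := by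
  have h := cv_uu (Coalgebra.counit : C →ₗ[K] K)
  rwa [uu_eq_counit] at h

lemma mui : LinearMap.mul' K (H ⊗[K] H) ∘ₗ TensorProduct.map i1 i2 = LinearMap.id := by
  apply TensorProduct.ext'; intro a b
  simp [Algebra.TensorProduct.tmul_mul_tmul]

lemma mui' : LinearMap.mul' K (H ⊗[K] H) ∘ₗ TensorProduct.map i2 i1 =
    (TensorProduct.comm K H H).toLinearMap := by
  apply TensorProduct.ext'; intro a b
  simp [Algebra.TensorProduct.tmul_mul_tmul]

lemma comul_eq_cv : (Δ : H →ₗ[K] H ⊗[K] H) = cv i1 i2 := by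
  unfold cv
  rw [← LinearMap.comp_assoc, mui, LinearMap.id_comp]

lemma map_comul_eq {C : Type u} [AddCommGroup C] [Module K C] [Coalgebra K C] (f : C →ₗ[K] H) :
    TensorProduct.map f f ∘ₗ (Coalgebra.comul (R := K) (A := C)) = cv (i1 ∘ₗ f) (i2 ∘ₗ f) := by
  unfold cv
  rw [TensorProduct.map_comp, LinearMap.comp_assoc, ← LinearMap.comp_assoc _ _ (LinearMap.mul' K (H ⊗[K] H)), mui, LinearMap.id_comp]

lemma icomm {C : Type u} [AddCommGroup C] [Module K C] [Coalgebra K C] (hC : CC (K := K) C)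
    (p q : C →ₗ[K] H) : cv (i2 ∘ₗ p) (i1 ∘ₗ q) = cv (i1 ∘ₗ q) (i2 ∘ₗ p) := by
  unfold cv
  rw [TensorProduct.map_comp i2 i1 p q, TensorProduct.map_comp i1 i2 q p]
  simp only [← LinearMap.comp_assoc]
  rw [mui, mui']
  simp only [LinearMap.id_comp]
  rw [comm_nat]
  simp only [LinearMap.comp_assoc]
  rw [hC]

lemma cv_aS_id : cv σ LinearMap.id = (uu : H →ₗ[K] H) := by
  unfold cv uu
  rw [← HopfAlgebra.mul_antipode_rTensor_comul (R := K) (A := H)]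
  rfl

lemma cv_id_aS : cv LinearMap.id σ = (uu : H →ₗ[K] H) := by
  unfold cv uu
  rw [← HopfAlgebra.mul_antipode_lTensor_comul (R := K) (A := H)]
  rfl

lemma isCH_aS (hcc : CC (K := K) H) : IsCH (σ : H →ₗ[K] H) := by
  have e1 : cv (Δ : H →ₗ[K] H ⊗[K] H) (Δ ∘ₗ σ) = uu := by
    have h : cv (Δ ∘ₗ LinearMap.id) ((Δ : H →ₗ[K] H ⊗[K] H) ∘ₗ σ) = Δ ∘ₗ cv LinearMap.id σ :=
      (cv_postcomp (C := H) (A := H) (A' := H ⊗[K] H) (ψ := Δ) LinearMap.id σ isAH_comul).symm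
    rw [LinearMap.comp_id] at h
    rw [h, cv_id_aS, uu_postcomp isAH_comul]
  have hic : cv (i2 ∘ₗ σ) (i1 : H →ₗ[K] H ⊗[K] H) = cv i1 (i2 ∘ₗ σ) := by
    have h := icomm (K := K) hcc σ LinearMap.id
    simpa using h
  have h2 : cv (i2 ∘ₗ σ) (i2 : H →ₗ[K] H ⊗[K] H) = uu := by
    have h := cv_postcomp (σ : H →ₗ[K] H) LinearMap.id isAH_i2
    rw [cv_aS_id, uu_postcomp isAH_i2] at h
    simpa using h.symm
  have h1 : cv (i1 ∘ₗ σ) (i1 : H →ₗ[K] H ⊗[K] H) = uu := by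
    have h := cv_postcomp (σ : H →ₗ[K] H) LinearMap.id isAH_i1
    rw [cv_aS_id, uu_postcomp isAH_i1] at h
    simpa using h.symm
  have e2 : cv (TensorProduct.map σ σ ∘ₗ Δ) (Δ : H →ₗ[K] H ⊗[K] H) = uu := by
    rw [map_comul_eq, comul_eq_cv]
    rw [cv_assoc, ← cv_assoc (i2 ∘ₗ σ) i1 i2, hic, cv_assoc i1 (i2 ∘ₗ σ) i2, h2, cv_uu, h1]
  constructor
  · have key : TensorProduct.map σ σ ∘ₗ (Δ : H →ₗ[K] H ⊗[K] H) = Δ ∘ₗ σ := by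
      calc TensorProduct.map σ σ ∘ₗ (Δ : H →ₗ[K] H ⊗[K] H)
          = cv (TensorProduct.map σ σ ∘ₗ Δ) uu := (cv_uu _).symm
        _ = cv (TensorProduct.map σ σ ∘ₗ Δ) (cv (Δ : H →ₗ[K] H ⊗[K] H) (Δ ∘ₗ σ)) := by
            rw [e1]
        _ = cv (cv (TensorProduct.map σ σ ∘ₗ Δ) (Δ : H →ₗ[K] H ⊗[K] H)) (Δ ∘ₗ σ) :=
            (cv_assoc _ _ _).symm
        _ = cv uu (Δ ∘ₗ σ) := by rw [e2]
        _ = Δ ∘ₗ σ := uu_cv _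
    exact key.symm
  · have h : ε ∘ₗ cv (σ : H →ₗ[K] H) LinearMap.id = ε ∘ₗ (uu : H →ₗ[K] H) := by
      rw [cv_aS_id]
    rw [cv_postcomp _ _ isAH_counit, uu_postcomp isAH_counit, LinearMap.comp_id] at h
    have h2 : cv (ε ∘ₗ (σ : H →ₗ[K] H)) (uu : H →ₗ[K] K) = uu := by
      rw [uu_eq_counit]; exact h
    rw [cv_uu] at h2
    rw [h2, uu_eq_counit]

lemma aS_aS (hcc : CC (K := K) H) : (σ : H →ₗ[K] H) ∘ₗ σ = LinearMap.id := by
  have hS := isCH_aS (K := K) (H := H) hcc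
  have h1 : cv ((σ : H →ₗ[K] H) ∘ₗ σ) σ = uu := by
    have h := cv_precomp (σ : H →ₗ[K] H) LinearMap.id hS
    rw [cv_aS_id, uu_precomp hS, LinearMap.id_comp] at h
    exact h.symm
  have : (σ : H →ₗ[K] H) ∘ₗ σ = cv (cv ((σ : H →ₗ[K] H) ∘ₗ σ) σ) LinearMap.id := by
    rw [cv_assoc, cv_aS_id, cv_uu]
  rw [this, h1, uu_cv]

lemma LL_comul : (LL : H ⊗[K] H →ₗ[K] H) ∘ₗ Δ = LinearMap.id := by
  unfold LL
  rw [LinearMap.comp_assoc, Coalgebra.lTensor_counit_comp_comul]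
  apply LinearMap.ext; intro x; simp

lemma RR_comul : (RR : H ⊗[K] H →ₗ[K] H) ∘ₗ Δ = LinearMap.id := by
  unfold RR
  rw [LinearMap.comp_assoc, Coalgebra.rTensor_counit_comp_comul]
  apply LinearMap.ext; intro x; simp

lemma t1 : TensorProduct.map LL (LinearMap.id : H ⊗[K] H →ₗ[K] H ⊗[K] H) ∘ₗ (TensorProduct.tensorTensorTensorComm K H H H H).toLinearMap =
    (TensorProduct.assoc K H H H).toLinearMap ∘ₗ
      TensorProduct.map (LinearMap.id : H ⊗[K] H →ₗ[K] H ⊗[K] H) RR := by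
  apply TensorProduct.ext_fourfold'; intro a b c d
  simp [TensorProduct.smul_tmul, TensorProduct.tmul_smul]

lemma t2 : TensorProduct.map RR LL ∘ₗ (TensorProduct.tensorTensorTensorComm K H H H H).toLinearMap =
    (TensorProduct.comm K H H).toLinearMap ∘ₗ TensorProduct.map RR LL := by
  apply TensorProduct.ext_fourfold'; intro a b c d
  simp [TensorProduct.smul_tmul, TensorProduct.tmul_smul]

lemma t3 : TensorProduct.map LL LL ∘ₗ (TensorProduct.tensorTensorTensorComm K H H H H).toLinearMap =
    (TensorProduct.rid K (H ⊗[K] H)).toLinearMap ∘ₗ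
      TensorProduct.map LinearMap.id (Coalgebra.counit (R := K) (A := H ⊗[K] H)) := by
  apply TensorProduct.ext_fourfold'; intro a b c d
  simp [TensorProduct.smul_tmul, TensorProduct.tmul_smul, mul_smul]

lemma t3' : TensorProduct.map RR RR ∘ₗ (TensorProduct.tensorTensorTensorComm K H H H H).toLinearMap =
    (TensorProduct.lid K (H ⊗[K] H)).toLinearMap ∘ₗ
      TensorProduct.map (Coalgebra.counit (R := K) (A := H ⊗[K] H)) LinearMap.id := by
  apply TensorProduct.ext_fourfold'; intro a b c d
  simp [TensorProduct.smul_tmul, TensorProduct.tmul_smul, mul_smul]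

lemma t4 : TensorProduct.map μ μ ∘ₗ (TensorProduct.tensorTensorTensorComm K H H H H).toLinearMap = LinearMap.mul' K (H ⊗[K] H) := by
  apply TensorProduct.ext_fourfold'; intro a b c d
  simp [Algebra.TensorProduct.tmul_mul_tmul]

lemma t5 (f g p q : H →ₗ[K] H) :
    (TensorProduct.tensorTensorTensorComm K H H H H).toLinearMap ∘ₗ TensorProduct.map (TensorProduct.map f g) (TensorProduct.map p q) =
      TensorProduct.map (TensorProduct.map f p) (TensorProduct.map g q) ∘ₗ (TensorProduct.tensorTensorTensorComm K H H H H).toLinearMap := by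
  apply TensorProduct.ext_fourfold'; intro a b c d
  simp

lemma t6 : (TensorProduct.comm K (H ⊗[K] H) (H ⊗[K] H)).toLinearMap ∘ₗ (TensorProduct.tensorTensorTensorComm K H H H H).toLinearMap =
    (TensorProduct.tensorTensorTensorComm K H H H H).toLinearMap ∘ₗ TensorProduct.map (TensorProduct.comm K H H).toLinearMap
      (TensorProduct.comm K H H).toLinearMap := by
  apply TensorProduct.ext_fourfold'; intro a b c d
  simp

lemma ce : (Coalgebra.counit (R := K) (A := H ⊗[K] H)) ∘ₗ Δ = ε := by
  have h := cvee (C := H) (K := K)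
  unfold cv at h
  rw [counitC_def, LinearMap.comp_assoc]
  exact h

lemma isCH_LL : IsCH (LL : H ⊗[K] H →ₗ[K] H) := by
  constructor
  · have lhs : Δ ∘ₗ (LL : H ⊗[K] H →ₗ[K] H) =
        (TensorProduct.rid K (H ⊗[K] H)).toLinearMap ∘ₗ TensorProduct.map Δ ε := by
      apply TensorProduct.ext'; intro x y; simp
    have rhs : TensorProduct.map (LL : H ⊗[K] H →ₗ[K] H) LL ∘ₗ
        Coalgebra.comul (R := K) (A := H ⊗[K] H) =
        (TensorProduct.rid K (H ⊗[K] H)).toLinearMap ∘ₗ TensorProduct.map Δ ε := by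
      rw [comulC_def, ← LinearMap.comp_assoc, t3, LinearMap.comp_assoc,
        ← TensorProduct.map_comp, LinearMap.id_comp, ce]
    rw [lhs, rhs]
  · apply TensorProduct.ext'; intro x y
    simp [mul_comm]

lemma isCH_RR : IsCH (RR : H ⊗[K] H →ₗ[K] H) := by
  constructor
  · have lhs : Δ ∘ₗ (RR : H ⊗[K] H →ₗ[K] H) =
        (TensorProduct.lid K (H ⊗[K] H)).toLinearMap ∘ₗ TensorProduct.map ε Δ := by
      apply TensorProduct.ext'; intro x y; simp
    have rhs : TensorProduct.map (RR : H ⊗[K] H →ₗ[K] H) RR ∘ₗ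
        Coalgebra.comul (R := K) (A := H ⊗[K] H) =
        (TensorProduct.lid K (H ⊗[K] H)).toLinearMap ∘ₗ TensorProduct.map ε Δ := by
      rw [comulC_def, ← LinearMap.comp_assoc, t3', LinearMap.comp_assoc,
        ← TensorProduct.map_comp, LinearMap.id_comp, ce]
    rw [lhs, rhs]
  · apply TensorProduct.ext'; intro x y
    simp [mul_comm]

lemma isCH_mul : IsCH (μ : H ⊗[K] H →ₗ[K] H) := by
  constructor
  · have base : Δ ∘ₗ (μ : H ⊗[K] H →ₗ[K] H) =
        LinearMap.mul' K (H ⊗[K] H) ∘ₗ TensorProduct.map Δ Δ := by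
      apply TensorProduct.ext'; intro a b
      simp [Bialgebra.comul_mul]
    rw [base, comulC_def, ← LinearMap.comp_assoc, t4]
  · rw [counitC_def]
    apply TensorProduct.ext'; intro a b
    simp [Bialgebra.counit_mul]

lemma LLD : TensorProduct.map LL (LinearMap.id : H ⊗[K] H →ₗ[K] H ⊗[K] H) ∘ₗ
    Coalgebra.comul (R := K) (A := H ⊗[K] H) =
    (TensorProduct.assoc K H H H).toLinearMap ∘ₗ
      TensorProduct.map Δ (LinearMap.id : H →ₗ[K] H) := by
  rw [comulC_def, ← LinearMap.comp_assoc, t1, LinearMap.comp_assoc,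
    ← TensorProduct.map_comp, LinearMap.id_comp, RR_comul]

lemma MD : TensorProduct.map (LinearMap.id : H →ₗ[K] H) RR ∘ₗ
    (TensorProduct.assoc K H H H).toLinearMap ∘ₗ
      TensorProduct.map Δ (LinearMap.id : H →ₗ[K] H) = LinearMap.id := by
  apply TensorProduct.ext'; intro x y
  simp only [comp_apply, TensorProduct.map_tmul, LinearMap.id_coe, id_eq]
  have key : TensorProduct.map (LinearMap.id : H →ₗ[K] H) RR ∘ₗ
      (TensorProduct.assoc K H H H).toLinearMap ∘ₗ (TensorProduct.mk K (H ⊗[K] H) H).flip y =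
      TensorProduct.map LinearMap.id (LinearMap.toSpanSingleton K H y) ∘ₗ
        (Coalgebra.counit (R := K) (A := H)).lTensor H := by
    apply TensorProduct.ext'; intro a b
    simp [LinearMap.toSpanSingleton_apply, TensorProduct.tmul_smul]
  have h2 := LinearMap.congr_fun key ((Coalgebra.comul : H →ₗ[K] H ⊗[K] H) x)
  simp only [comp_apply, LinearMap.flip_apply, TensorProduct.mk_apply] at h2
  rw [h2, Coalgebra.lTensor_counit_comul]
  simp

lemma mapLRD : TensorProduct.map LL RR ∘ₗ Coalgebra.comul (R := K) (A := H ⊗[K] H) =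
    LinearMap.id := by
  have hsplit : TensorProduct.map (LL : H ⊗[K] H →ₗ[K] H) RR =
      TensorProduct.map (LinearMap.id : H →ₗ[K] H) RR ∘ₗ
        TensorProduct.map LL (LinearMap.id : H ⊗[K] H →ₗ[K] H ⊗[K] H) := by
    rw [← TensorProduct.map_comp, LinearMap.id_comp, LinearMap.comp_id]
  rw [hsplit, LinearMap.comp_assoc, LLD, MD]

lemma mulmap (p q : H →ₗ[K] H) : μ ∘ₗ TensorProduct.map p q = cv (p ∘ₗ LL) (q ∘ₗ RR) := by
  unfold cv
  rw [TensorProduct.map_comp p q LL RR, LinearMap.comp_assoc, mapLRD, LinearMap.comp_id]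

lemma RLD : TensorProduct.map RR LL ∘ₗ Coalgebra.comul (R := K) (A := H ⊗[K] H) =
    (TensorProduct.comm K H H).toLinearMap := by
  rw [comulC_def, ← LinearMap.comp_assoc, t2, LinearMap.comp_assoc,
    ← TensorProduct.map_comp, RR_comul, LL_comul, TensorProduct.map_id, LinearMap.comp_id]

lemma Santimul : (σ : H →ₗ[K] H) ∘ₗ μ =
    μ ∘ₗ (TensorProduct.comm K H H).toLinearMap ∘ₗ TensorProduct.map σ σ := by
  have hnu : cv ((σ : H →ₗ[K] H) ∘ₗ RR) (σ ∘ₗ LL) =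
      μ ∘ₗ (TensorProduct.comm K H H).toLinearMap ∘ₗ TensorProduct.map σ σ := by
    unfold cv
    rw [TensorProduct.map_comp σ σ RR LL, LinearMap.comp_assoc, RLD]
    rw [show (TensorProduct.map σ σ : H ⊗[K] H →ₗ[K] H ⊗[K] H) ∘ₗ
        (TensorProduct.comm K H H).toLinearMap =
        (TensorProduct.comm K H H).toLinearMap ∘ₗ TensorProduct.map σ σ from
      (comm_nat σ σ).symm]
  have e1 : cv ((σ : H →ₗ[K] H) ∘ₗ μ) (μ : H ⊗[K] H →ₗ[K] H) = uu := by
    have h := cv_precomp (σ : H →ₗ[K] H) LinearMap.id isCH_mul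
    rw [cv_aS_id, uu_precomp isCH_mul] at h
    simpa using h.symm
  have e2 : cv (μ : H ⊗[K] H →ₗ[K] H) (cv ((σ : H →ₗ[K] H) ∘ₗ RR) (σ ∘ₗ LL)) = uu := by
    have hmucv : (μ : H ⊗[K] H →ₗ[K] H) = cv LL RR := by
      have h := mulmap (LinearMap.id : H →ₗ[K] H) LinearMap.id
      rw [TensorProduct.map_id] at h
      simpa using h
    have hr : cv (RR : H ⊗[K] H →ₗ[K] H) ((σ : H →ₗ[K] H) ∘ₗ RR) = uu := by
      have h := cv_precomp LinearMap.id (σ : H →ₗ[K] H) isCH_RR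
      rw [cv_id_aS, uu_precomp isCH_RR] at h
      simpa using h.symm
    have hl : cv (LL : H ⊗[K] H →ₗ[K] H) ((σ : H →ₗ[K] H) ∘ₗ LL) = uu := by
      have h := cv_precomp LinearMap.id (σ : H →ₗ[K] H) isCH_LL
      rw [cv_id_aS, uu_precomp isCH_LL] at h
      simpa using h.symm
    rw [hmucv, cv_assoc, ← cv_assoc RR ((σ : H →ₗ[K] H) ∘ₗ RR) ((σ : H →ₗ[K] H) ∘ₗ LL),
      hr, uu_cv, hl]
  calc (σ : H →ₗ[K] H) ∘ₗ μ = cv ((σ : H →ₗ[K] H) ∘ₗ μ) uu := (cv_uu _).symm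
    _ = cv ((σ : H →ₗ[K] H) ∘ₗ μ)
        (cv (μ : H ⊗[K] H →ₗ[K] H) (cv ((σ : H →ₗ[K] H) ∘ₗ RR) (σ ∘ₗ LL))) := by rw [e2]
    _ = cv (cv ((σ : H →ₗ[K] H) ∘ₗ μ) (μ : H ⊗[K] H →ₗ[K] H))
        (cv ((σ : H →ₗ[K] H) ∘ₗ RR) (σ ∘ₗ LL)) := (cv_assoc _ _ _).symm
    _ = cv uu (cv ((σ : H →ₗ[K] H) ∘ₗ RR) (σ ∘ₗ LL)) := by rw [e1]
    _ = cv ((σ : H →ₗ[K] H) ∘ₗ RR) (σ ∘ₗ LL) := uu_cv _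
    _ = μ ∘ₗ (TensorProduct.comm K H H).toLinearMap ∘ₗ TensorProduct.map σ σ := hnu

lemma anti {C : Type u} [AddCommGroup C] [Module K C] [Coalgebra K C] (hC : CC (K := K) C)
    (f g : C →ₗ[K] H) : (σ : H →ₗ[K] H) ∘ₗ cv f g = cv (σ ∘ₗ g) (σ ∘ₗ f) := by
  unfold cv
  simp only [← LinearMap.comp_assoc]
  rw [Santimul]
  simp only [← LinearMap.comp_assoc]
  rw [LinearMap.comp_assoc (TensorProduct.map f g) (TensorProduct.map (σ : H →ₗ[K] H) σ)
      (μ ∘ₗ (TensorProduct.comm K H H).toLinearMap)]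
  rw [show (TensorProduct.map (σ : H →ₗ[K] H) σ) ∘ₗ TensorProduct.map f g =
    TensorProduct.map (σ ∘ₗ f) (σ ∘ₗ g) from (TensorProduct.map_comp σ σ f g).symm]
  rw [LinearMap.comp_assoc (TensorProduct.map ((σ : H →ₗ[K] H) ∘ₗ f) (σ ∘ₗ g))
    (TensorProduct.comm K H H).toLinearMap μ]
  rw [comm_nat]
  simp only [← LinearMap.comp_assoc]
  rw [LinearMap.comp_assoc Coalgebra.comul (TensorProduct.comm K C C).toLinearMap]
  rw [hC]

lemma isCH_i1 : IsCH (i1 : H →ₗ[K] H ⊗[K] H) := by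
  constructor
  · have step1 : TensorProduct.map Δ Δ ∘ₗ (i1 : H →ₗ[K] H ⊗[K] H) =
        (TensorProduct.mk K (H ⊗[K] H) (H ⊗[K] H)).flip ((1 : H) ⊗ₜ[K] (1 : H)) ∘ₗ Δ := by
      apply LinearMap.ext; intro x
      simp [Algebra.TensorProduct.one_def]
    have step2 : (TensorProduct.tensorTensorTensorComm K H H H H).toLinearMap ∘ₗ
        (TensorProduct.mk K (H ⊗[K] H) (H ⊗[K] H)).flip ((1 : H) ⊗ₜ[K] (1 : H)) =
        TensorProduct.map i1 i1 := by
      apply TensorProduct.ext'; intro a b; simp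
    rw [comulC_def, LinearMap.comp_assoc, step1, ← LinearMap.comp_assoc, step2]
  · apply LinearMap.ext; intro x
    simp [counitC_tmul]

lemma isCH_i2 : IsCH (i2 : H →ₗ[K] H ⊗[K] H) := by
  constructor
  · have step1 : TensorProduct.map Δ Δ ∘ₗ (i2 : H →ₗ[K] H ⊗[K] H) =
        TensorProduct.mk K (H ⊗[K] H) (H ⊗[K] H) ((1 : H) ⊗ₜ[K] (1 : H)) ∘ₗ Δ := by
      apply LinearMap.ext; intro x
      simp [Algebra.TensorProduct.one_def]
    have step2 : (TensorProduct.tensorTensorTensorComm K H H H H).toLinearMap ∘ₗ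
        TensorProduct.mk K (H ⊗[K] H) (H ⊗[K] H) ((1 : H) ⊗ₜ[K] (1 : H)) =
        TensorProduct.map i2 i2 := by
      apply TensorProduct.ext'; intro a b; simp
    rw [comulC_def, LinearMap.comp_assoc, step1, ← LinearMap.comp_assoc, step2]
  · apply LinearMap.ext; intro x
    simp [counitC_tmul]

lemma isCH_cv {C : Type u} [AddCommGroup C] [Module K C] [Coalgebra K C] (hC : CC (K := K) C)
    {f g : C →ₗ[K] H} (hf : IsCH f) (hg : IsCH g) : IsCH (cv f g) := by
  constructor
  · rw [cv_postcomp f g isAH_comul, hf.1, hg.1, map_comul_eq f, map_comul_eq g,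
      cv_assoc, ← cv_assoc (i2 ∘ₗ f) (i1 ∘ₗ g) (i2 ∘ₗ g), icomm hC f g,
      cv_assoc (i1 ∘ₗ g) (i2 ∘ₗ f) (i2 ∘ₗ g), ← cv_assoc (i1 ∘ₗ f) (i1 ∘ₗ g),
      ← cv_postcomp f g isAH_i1, ← cv_postcomp f g isAH_i2, ← map_comul_eq (cv f g)]
  · rw [cv_postcomp f g isAH_counit, hf.2, hg.2, cvee]

lemma cc_tensor (hcc : CC (K := K) H) : CC (K := K) (H ⊗[K] H) := by
  unfold CC
  rw [comulC_def, ← LinearMap.comp_assoc, t6, LinearMap.comp_assoc, ← TensorProduct.map_comp]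
  unfold CC at hcc
  rw [hcc]

lemma isCH_Phi (hcc : CC (K := K) H) :
    IsCH (TensorProduct.map σ σ : H ⊗[K] H →ₗ[K] H ⊗[K] H) := by
  have hS := isCH_aS (K := K) (H := H) hcc
  constructor
  · rw [comulC_def, LinearMap.comp_assoc, ← TensorProduct.map_comp, hS.1,
      TensorProduct.map_comp, ← LinearMap.comp_assoc, t5, LinearMap.comp_assoc]
  · rw [counitC_def, LinearMap.comp_assoc, ← TensorProduct.map_comp, hS.2]

lemma aS_LL (hcc : CC (K := K) H) :
    (σ : H →ₗ[K] H) ∘ₗ LL = LL ∘ₗ TensorProduct.map σ σ := by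
  have hε := (isCH_aS (K := K) (H := H) hcc).2
  apply TensorProduct.ext'; intro x y
  have hy := LinearMap.congr_fun hε y
  simp only [comp_apply] at hy
  simp only [comp_apply, TensorProduct.map_tmul, LL_apply, map_smul, hy]

lemma aS_RR (hcc : CC (K := K) H) :
    (σ : H →ₗ[K] H) ∘ₗ RR = RR ∘ₗ TensorProduct.map σ σ := by
  have hε := (isCH_aS (K := K) (H := H) hcc).2
  apply TensorProduct.ext'; intro x y
  have hx := LinearMap.congr_fun hε x
  simp only [comp_apply] at hx
  simp only [comp_apply, TensorProduct.map_tmul, RR_apply, map_smul, hx]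

lemma wrapcv (f g h : H →ₗ[K] H) :
    cv (f ∘ₗ LL) (cv (g ∘ₗ RR) (h ∘ₗ LL)) = wrap f g h := by
  have hZ : cv (g ∘ₗ RR) (h ∘ₗ LL) =
      μ ∘ₗ TensorProduct.map g h ∘ₗ (TensorProduct.comm K H H).toLinearMap := by
    unfold cv
    rw [TensorProduct.map_comp g h RR LL, LinearMap.comp_assoc, RLD]
  rw [hZ]
  unfold cv wrap
  have hsplit : TensorProduct.map (f ∘ₗ LL)
      (μ ∘ₗ TensorProduct.map g h ∘ₗ (TensorProduct.comm K H H).toLinearMap) =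
      TensorProduct.map f (μ ∘ₗ TensorProduct.map g h ∘ₗ (TensorProduct.comm K H H).toLinearMap)
        ∘ₗ TensorProduct.map LL (LinearMap.id : H ⊗[K] H →ₗ[K] H ⊗[K] H) := by
    rw [← TensorProduct.map_comp, LinearMap.comp_id]
  rw [hsplit, LinearMap.comp_assoc, LLD]

lemma mulB_eq (B' : H →ₗ[K] H) :
    mulB B' = cv (B' ∘ₗ LL) (cv RR (cv (((σ : H →ₗ[K] H) ∘ₗ B') ∘ₗ LL) LL)) := by
  unfold mulB aS
  rw [← wrapcv B' LinearMap.id (conv (HopfAlgebra.antipode K ∘ₗ B') LinearMap.id)]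
  rw [LinearMap.id_comp]
  congr 2
  rw [show conv ((HopfAlgebra.antipode K : H →ₗ[K] H) ∘ₗ B') LinearMap.id =
    cv ((σ : H →ₗ[K] H) ∘ₗ B') LinearMap.id from rfl]
  rw [cv_precomp _ _ isCH_LL, LinearMap.id_comp]

theorem main (B : H →ₗ[K] H) (hcc : CC (K := K) H)
    (hB1 : Coalgebra.comul ∘ₗ B = TensorProduct.map B B ∘ₗ Coalgebra.comul)
    (hB2 : Coalgebra.counit ∘ₗ B = Coalgebra.counit)
    (hB3 : LinearMap.mul' K H ∘ₗ TensorProduct.map B B = B ∘ₗ mulB B) :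
    (Coalgebra.comul ∘ₗ Bt B = TensorProduct.map (Bt B) (Bt B) ∘ₗ Coalgebra.comul) ∧
    (Coalgebra.counit ∘ₗ Bt B = Coalgebra.counit) ∧
    LinearMap.mul' K H ∘ₗ TensorProduct.map (Bt B) (Bt B) = Bt B ∘ₗ mulB (Bt B) := by
  have hS : IsCH (σ : H →ₗ[K] H) := isCH_aS hcc
  have hBc : IsCH B := ⟨hB1, hB2⟩
  have hβ : IsCH (B ∘ₗ (σ : H →ₗ[K] H)) := IsCH.comp hBc hS
  have hBtdef : Bt B = cv LinearMap.id (B ∘ₗ (σ : H →ₗ[K] H)) := rfl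
  have hBt : IsCH (Bt B) := by
    rw [hBtdef]; exact isCH_cv hcc IsCH.id hβ
  -- step 1 : S(B̃(x₁)) x₂ = S(B(S x))
  have hstep1b : cv ((σ : H →ₗ[K] H) ∘ₗ Bt B) LinearMap.id =
      (σ : H →ₗ[K] H) ∘ₗ (B ∘ₗ (σ : H →ₗ[K] H)) := by
    rw [hBtdef, anti hcc, LinearMap.comp_id, cv_assoc, cv_aS_id, cv_uu]
  -- the descendent product of B̃ in convolution form
  have hw : mulB (Bt B) = cv (Bt B ∘ₗ LL)
      (cv RR (((σ : H →ₗ[K] H) ∘ₗ (B ∘ₗ (σ : H →ₗ[K] H))) ∘ₗ LL)) := by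
    rw [mulB_eq (Bt B)]
    congr 2
    have h := cv_precomp ((σ : H →ₗ[K] H) ∘ₗ Bt B) LinearMap.id isCH_LL
    rw [LinearMap.id_comp] at h
    rw [← h, hstep1b]
  have hwCH : IsCH (mulB (Bt B)) := by
    rw [hw]
    exact isCH_cv (cc_tensor hcc) (IsCH.comp hBt isCH_LL)
      (isCH_cv (cc_tensor hcc) isCH_RR (IsCH.comp (IsCH.comp hS hβ) isCH_LL))
  -- S ∘ (descendent product of B̃) = (descendent product of B) ∘ (S ⊗ S)
  have hSw : (σ : H →ₗ[K] H) ∘ₗ mulB (Bt B) =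
      mulB B ∘ₗ TensorProduct.map (σ : H →ₗ[K] H) σ := by
    rw [hw, anti (cc_tensor hcc)]
    have hY : (σ : H →ₗ[K] H) ∘ₗ
        cv RR (((σ : H →ₗ[K] H) ∘ₗ (B ∘ₗ (σ : H →ₗ[K] H))) ∘ₗ LL) =
        cv ((B ∘ₗ LL) ∘ₗ TensorProduct.map (σ : H →ₗ[K] H) σ)
          (RR ∘ₗ TensorProduct.map (σ : H →ₗ[K] H) σ) := by
      rw [anti (cc_tensor hcc)]
      congr 1
      · simp only [← LinearMap.comp_assoc]
        rw [aS_aS hcc]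
        simp only [LinearMap.id_comp]
        rw [LinearMap.comp_assoc, aS_LL hcc, ← LinearMap.comp_assoc]
      · exact aS_RR hcc
    have hX : (σ : H →ₗ[K] H) ∘ₗ (Bt B ∘ₗ LL) =
        cv (((σ : H →ₗ[K] H) ∘ₗ B) ∘ₗ LL) LL ∘ₗ TensorProduct.map (σ : H →ₗ[K] H) σ := by
      rw [← LinearMap.comp_assoc, hBtdef, anti hcc, LinearMap.comp_id,
        cv_precomp _ _ isCH_LL]
      have e1 : ((σ : H →ₗ[K] H) ∘ₗ (B ∘ₗ (σ : H →ₗ[K] H))) ∘ₗ LL =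
          (((σ : H →ₗ[K] H) ∘ₗ B) ∘ₗ LL) ∘ₗ TensorProduct.map (σ : H →ₗ[K] H) σ := by
        simp only [LinearMap.comp_assoc]
        rw [aS_LL hcc]
      have e2 : (σ : H →ₗ[K] H) ∘ₗ LL = LL ∘ₗ TensorProduct.map (σ : H →ₗ[K] H) σ :=
        aS_LL hcc
      rw [e1, e2, ← cv_precomp _ _ (isCH_Phi hcc)]
    rw [hY, hX]
    rw [← cv_precomp _ _ (isCH_Phi hcc)]
    rw [← cv_precomp _ _ (isCH_Phi hcc)]
    rw [mulB_eq B]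
    simp only [← cv_assoc]
  -- β ∘ (descendent product of B̃)
  have hβw : (B ∘ₗ (σ : H →ₗ[K] H)) ∘ₗ mulB (Bt B) =
      cv ((B ∘ₗ (σ : H →ₗ[K] H)) ∘ₗ LL) ((B ∘ₗ (σ : H →ₗ[K] H)) ∘ₗ RR) := by
    rw [LinearMap.comp_assoc, hSw, ← LinearMap.comp_assoc, ← hB3, mulmap,
      cv_precomp _ _ (isCH_Phi hcc)]
    congr 1
    · rw [LinearMap.comp_assoc, ← aS_LL hcc, ← LinearMap.comp_assoc]
    · rw [LinearMap.comp_assoc, ← aS_RR hcc, ← LinearMap.comp_assoc]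
  refine ⟨hBt.1, hBt.2, ?_⟩
  -- the main identity
  have hBtLL : Bt B ∘ₗ LL = cv LL ((B ∘ₗ (σ : H →ₗ[K] H)) ∘ₗ LL) := by
    rw [hBtdef, cv_precomp _ _ isCH_LL, LinearMap.id_comp]
  have hBtRR : Bt B ∘ₗ RR = cv RR ((B ∘ₗ (σ : H →ₗ[K] H)) ∘ₗ RR) := by
    rw [hBtdef, cv_precomp _ _ isCH_RR, LinearMap.id_comp]
  have hzz : cv (((σ : H →ₗ[K] H) ∘ₗ (B ∘ₗ (σ : H →ₗ[K] H))) ∘ₗ LL)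
      ((B ∘ₗ (σ : H →ₗ[K] H)) ∘ₗ LL) = uu := by
    have h := cv_precomp (σ : H →ₗ[K] H) LinearMap.id (IsCH.comp hβ isCH_LL)
    rw [cv_aS_id, uu_precomp (IsCH.comp hβ isCH_LL), LinearMap.id_comp] at h
    rw [LinearMap.comp_assoc]
    exact h.symm
  calc LinearMap.mul' K H ∘ₗ TensorProduct.map (Bt B) (Bt B)
      = cv (Bt B ∘ₗ LL) (Bt B ∘ₗ RR) := mulmap _ _
    _ = cv (cv LL ((B ∘ₗ (σ : H →ₗ[K] H)) ∘ₗ LL))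
        (cv RR ((B ∘ₗ (σ : H →ₗ[K] H)) ∘ₗ RR)) := by rw [hBtLL, hBtRR]
    _ = cv (cv (cv LL ((B ∘ₗ (σ : H →ₗ[K] H)) ∘ₗ LL))
          (cv RR (((σ : H →ₗ[K] H) ∘ₗ (B ∘ₗ (σ : H →ₗ[K] H))) ∘ₗ LL)))
        (cv ((B ∘ₗ (σ : H →ₗ[K] H)) ∘ₗ LL) ((B ∘ₗ (σ : H →ₗ[K] H)) ∘ₗ RR)) := by
        have hE : cv (cv (cv LL ((B ∘ₗ (σ : H →ₗ[K] H)) ∘ₗ LL))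
              (cv RR (((σ : H →ₗ[K] H) ∘ₗ (B ∘ₗ (σ : H →ₗ[K] H))) ∘ₗ LL)))
            (cv ((B ∘ₗ (σ : H →ₗ[K] H)) ∘ₗ LL) ((B ∘ₗ (σ : H →ₗ[K] H)) ∘ₗ RR)) =
            cv (cv LL ((B ∘ₗ (σ : H →ₗ[K] H)) ∘ₗ LL))
              (cv RR ((B ∘ₗ (σ : H →ₗ[K] H)) ∘ₗ RR)) := by
          rw [cv_assoc (cv LL ((B ∘ₗ (σ : H →ₗ[K] H)) ∘ₗ LL))
            (cv RR (((σ : H →ₗ[K] H) ∘ₗ (B ∘ₗ (σ : H →ₗ[K] H))) ∘ₗ LL))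
            (cv ((B ∘ₗ (σ : H →ₗ[K] H)) ∘ₗ LL) ((B ∘ₗ (σ : H →ₗ[K] H)) ∘ₗ RR))]
          rw [cv_assoc RR (((σ : H →ₗ[K] H) ∘ₗ (B ∘ₗ (σ : H →ₗ[K] H))) ∘ₗ LL)
            (cv ((B ∘ₗ (σ : H →ₗ[K] H)) ∘ₗ LL) ((B ∘ₗ (σ : H →ₗ[K] H)) ∘ₗ RR))]
          rw [← cv_assoc (((σ : H →ₗ[K] H) ∘ₗ (B ∘ₗ (σ : H →ₗ[K] H))) ∘ₗ LL)
            ((B ∘ₗ (σ : H →ₗ[K] H)) ∘ₗ LL) ((B ∘ₗ (σ : H →ₗ[K] H)) ∘ₗ RR)]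
          rw [hzz, uu_cv]
        exact hE.symm
    _ = cv (mulB (Bt B)) (cv ((B ∘ₗ (σ : H →ₗ[K] H)) ∘ₗ LL)
          ((B ∘ₗ (σ : H →ₗ[K] H)) ∘ₗ RR)) := by
        rw [hw, hBtLL]
    _ = cv (LinearMap.id ∘ₗ mulB (Bt B))
        ((B ∘ₗ (σ : H →ₗ[K] H)) ∘ₗ mulB (Bt B)) := by
        rw [hβw, LinearMap.id_comp]
    _ = cv LinearMap.id (B ∘ₗ (σ : H →ₗ[K] H)) ∘ₗ mulB (Bt B) :=
        (cv_precomp _ _ hwCH).symm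
    _ = Bt B ∘ₗ mulB (Bt B) := by rw [← hBtdef]
  
end Hopf

end RBaux

/-- `B̃ = Bt B` is again a Rota–Baxter operator of weight `-1` on `H`. -/
theorem stmt0 (B : H →ₗ[K] H) (hcc : IsCocomm K H) (hB : IsRotaBaxter B) :
    IsRotaBaxter (Bt B) := by
  have hccH : RBaux.CC (K := K) H := by
    apply LinearMap.ext; intro x
    exact hcc x
  have hB3 : LinearMap.mul' K H ∘ₗ TensorProduct.map B B = B ∘ₗ mulB B := by
    apply TensorProduct.ext'; intro x y
    simpa using hB.2.2 x y
  obtain ⟨h1, h2, h3⟩ := RBaux.main B hccH hB.1 hB.2.1 hB3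
  refine ⟨h1, h2, ?_⟩
  intro x y
  have h := LinearMap.congr_fun h3 (x ⊗ₜ[K] y)
  simpa using h


end
end

section
/- Let (H, B) be a Rota–Baxter Hopf algebra of weight −1. Define x *_B y = B(x₁) y S(B(x₂)) x₃ and S_B(x) = S(B(x₁)) S(x₂) B(x₃). Then H_B = (H, *_B, 1, Δ, ε, S_B) is a cocommutative Hopf algebra; explicitly: (i) *_B is associative, (ii) 1 is a two-sided unit for *_B, (iii) Δ(x *_B y) = (x₁ *_B y₁) ⊗ (x₂ *_B y₂) and ε(x *_B y) = ε(x)ε(y) for all x, y ∈ H (so Δ and ε are algebra maps for *_B), and (iv) S_B(x₁) *_B x₂ = ε(x)1 = x₁ *_B S_B(x₂) for all x ∈ H. -/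
open TensorProduct LinearMap

noncomputable section

universe u

namespace RBTools

open Coalgebra HopfAlgebra

variable {K : Type u} [Field K]

section CoalgebraTools

variable {C : Type u} [AddCommGroup C] [Module K C] [Coalgebra K C]
variable {D : Type u} [AddCommGroup D] [Module K D] [Coalgebra K D]
variable {M : Type u} [AddCommGroup M] [Module K M]

/-- Cocommutativity of a coalgebra. -/
def Cocomm (K : Type u) (C : Type u) [Field K] [AddCommGroup C] [Module K C]
    [Coalgebra K C] : Prop :=
  ∀ x : C, (TensorProduct.comm K C C) (Coalgebra.comul x) = Coalgebra.comul x

/-- Fold a sum over a representation through a linear map. -/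
lemma repr_fold (x : C) {ι : Type*} (r : Coalgebra.Repr K x ι) (F : C ⊗[K] C →ₗ[K] M) :
    ∑ i ∈ r.index, F (r.left i ⊗ₜ[K] r.right i) = F (Coalgebra.comul x) := by
  rw [← r.eq, map_sum]

/-- Cocommutativity master lemma. -/
lemma repr_comm (hC : Cocomm K C) (x : C) {ι : Type*} (r : Coalgebra.Repr K x ι)
    (F : C ⊗[K] C →ₗ[K] M) :
    ∑ i ∈ r.index, F (r.right i ⊗ₜ[K] r.left i) =
      ∑ i ∈ r.index, F (r.left i ⊗ₜ[K] r.right i) := by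
  have h1 : ∑ i ∈ r.index, F (r.right i ⊗ₜ[K] r.left i)
      = (F ∘ₗ (TensorProduct.comm K C C).toLinearMap) (Coalgebra.comul x) := by
    rw [← r.eq, map_sum]; simp
  rw [h1]; simp only [LinearMap.comp_apply, LinearEquiv.coe_coe, hC x]
  rw [← r.eq, map_sum]

/-- Coassociativity master lemma. -/
lemma repr_assoc (x : C) {ι κ Λ : Type*} (r : Coalgebra.Repr K x ι)
    (rL : (i : ι) → Coalgebra.Repr K (r.left i) κ)
    (rR : (i : ι) → Coalgebra.Repr K (r.right i) Λ)
    (F : C ⊗[K] (C ⊗[K] C) →ₗ[K] M) :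
    ∑ i ∈ r.index, ∑ j ∈ (rL i).index,
      F ((rL i).left j ⊗ₜ[K] ((rL i).right j ⊗ₜ[K] r.right i)) =
    ∑ i ∈ r.index, ∑ k ∈ (rR i).index,
      F (r.left i ⊗ₜ[K] ((rR i).left k ⊗ₜ[K] (rR i).right k)) := by
  simpa [map_sum] using congrArg F (Coalgebra.sum_tmul_tmul_eq r rL rR)

/-- Left counit master lemma. -/
lemma repr_counit_left (x : C) {ι : Type*} (r : Coalgebra.Repr K x ι) (ψ : C →ₗ[K] M) :
    ∑ i ∈ r.index, Coalgebra.counit (R := K) (r.left i) • ψ (r.right i) = ψ x := by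
  have h := congrArg (ψ ∘ₗ (TensorProduct.lid K C).toLinearMap)
    (Coalgebra.sum_counit_tmul_eq (R := K) r)
  rw [map_sum] at h
  simpa [-Coalgebra.sum_counit_tmul_eq, map_smul] using h

/-- Right counit master lemma. -/
lemma repr_counit_right (x : C) {ι : Type*} (r : Coalgebra.Repr K x ι) (ψ : C →ₗ[K] M) :
    ∑ i ∈ r.index, Coalgebra.counit (R := K) (r.right i) • ψ (r.left i) = ψ x := by
  have h := congrArg (ψ ∘ₗ (TensorProduct.rid K C).toLinearMap)
    (Coalgebra.sum_tmul_counit_eq (R := K) r)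
  rw [map_sum] at h
  simpa [-Coalgebra.sum_tmul_counit_eq, map_smul] using h

end CoalgebraTools


section CV

variable {C : Type u} [AddCommGroup C] [Module K C] [Coalgebra K C]
variable {D : Type u} [AddCommGroup D] [Module K D] [Coalgebra K D]
variable {A : Type u} [Ring A] [Algebra K A]
variable {A' : Type u} [Ring A'] [Algebra K A']

/-- Convolution product. -/
def cv (f g : C →ₗ[K] A) : C →ₗ[K] A :=
  LinearMap.mul' K A ∘ₗ TensorProduct.map f g ∘ₗ Coalgebra.comul

/-- Convolution unit. -/
def cu : C →ₗ[K] A := Algebra.linearMap K A ∘ₗ Coalgebra.counit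

lemma cu_apply (x : C) : (cu (K := K) (A := A)) x = algebraMap K A (Coalgebra.counit x) := rfl

lemma cv_repr (f g : C →ₗ[K] A) (x : C) {ι : Type*} (r : Coalgebra.Repr K x ι) :
    cv f g x = ∑ i ∈ r.index, f (r.left i) * g (r.right i) := by
  simp only [cv, LinearMap.comp_apply, ← r.eq, map_sum, TensorProduct.map_tmul,
    LinearMap.mul'_apply]

lemma cv_cu_left (f : C →ₗ[K] A) : cv cu f = f := by
  ext x
  rw [cv_repr cu f x (Coalgebra.Repr.arbitrary K x)]
  simp only [cu_apply, ← Algebra.smul_def]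
  exact repr_counit_left x _ f

lemma cv_cu_right (f : C →ₗ[K] A) : cv f cu = f := by
  ext x
  rw [cv_repr f cu x (Coalgebra.Repr.arbitrary K x)]
  have : ∀ i ∈ (Coalgebra.Repr.arbitrary K x).index,
      f ((Coalgebra.Repr.arbitrary K x).left i) *
        cu (K := K) (A := A) ((Coalgebra.Repr.arbitrary K x).right i)
      = Coalgebra.counit (R := K) ((Coalgebra.Repr.arbitrary K x).right i) •
          f ((Coalgebra.Repr.arbitrary K x).left i) := by
    intro i _
    rw [cu_apply, ← Algebra.commutes, ← Algebra.smul_def]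
  rw [Finset.sum_congr rfl this]
  exact repr_counit_right x _ f

lemma cv_assoc (f g h : C →ₗ[K] A) : cv (cv f g) h = cv f (cv g h) := by
  ext x
  set r := Coalgebra.Repr.arbitrary K x
  set rL := fun i => Coalgebra.Repr.arbitrary K (r.left i)
  set rR := fun i => Coalgebra.Repr.arbitrary K (r.right i)
  have key := repr_assoc x r rL rR
    (LinearMap.mul' K A ∘ₗ TensorProduct.map f
      (LinearMap.mul' K A ∘ₗ TensorProduct.map g h))
  simp only [LinearMap.comp_apply, TensorProduct.map_tmul, LinearMap.mul'_apply] at key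
  calc cv (cv f g) h x = ∑ i ∈ r.index, cv f g (r.left i) * h (r.right i) := cv_repr _ _ x r
    _ = ∑ i ∈ r.index, (∑ j ∈ (rL i).index, f ((rL i).left j) * g ((rL i).right j))
          * h (r.right i) := by
        refine Finset.sum_congr rfl fun i _ => ?_
        rw [cv_repr f g _ (rL i)]
    _ = ∑ i ∈ r.index, ∑ j ∈ (rL i).index,
          f ((rL i).left j) * (g ((rL i).right j) * h (r.right i)) := by
        simp_rw [Finset.sum_mul, mul_assoc]
    _ = ∑ i ∈ r.index, ∑ k ∈ (rR i).index,
          f (r.left i) * (g ((rR i).left k) * h ((rR i).right k)) := key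
    _ = ∑ i ∈ r.index, f (r.left i) * cv g h (r.right i) := by
        refine Finset.sum_congr rfl fun i _ => ?_
        rw [cv_repr g h _ (rR i), Finset.mul_sum]
    _ = cv f (cv g h) x := (cv_repr _ _ x r).symm

lemma cv_comp (f g : C →ₗ[K] A) (φ : D →ₗc[K] C) :
    cv f g ∘ₗ (φ : D →ₗ[K] C) = cv (f ∘ₗ (φ : D →ₗ[K] C)) (g ∘ₗ (φ : D →ₗ[K] C)) := by
  unfold cv
  rw [LinearMap.comp_assoc, LinearMap.comp_assoc, ← CoalgHomClass.map_comp_comul φ,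
    TensorProduct.map_comp]
  simp only [LinearMap.comp_assoc]

lemma cu_comp (φ : D →ₗc[K] C) :
    (cu (K := K) (A := A)) ∘ₗ (φ : D →ₗ[K] C) = cu := by
  unfold cu
  rw [LinearMap.comp_assoc, CoalgHomClass.counit_comp φ]

lemma alghom_cv (ψ : A →ₐ[K] A') (f g : C →ₗ[K] A) :
    ψ.toLinearMap ∘ₗ cv f g = cv (ψ.toLinearMap ∘ₗ f) (ψ.toLinearMap ∘ₗ g) := by
  ext x
  rw [LinearMap.comp_apply, cv_repr f g x (Coalgebra.Repr.arbitrary K x),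
    cv_repr _ _ x (Coalgebra.Repr.arbitrary K x)]
  simp [map_sum]

lemma alghom_cu (ψ : A →ₐ[K] A') :
    ψ.toLinearMap ∘ₗ (cu (K := K) (A := A)) = cu (K := K) (A := A') (C := C) := by
  ext x; simp [cu_apply, AlgHom.commutes]

end CV
section HopfBasics

variable {C : Type u} [AddCommGroup C] [Module K C] [Coalgebra K C]
variable {D : Type u} [AddCommGroup D] [Module K D] [Coalgebra K D]
variable {C' : Type u} [AddCommGroup C'] [Module K C'] [Coalgebra K C']
variable {D' : Type u} [AddCommGroup D'] [Module K D'] [Coalgebra K D']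
variable {H : Type u} [Ring H] [HopfAlgebra K H]

/-- Push a representation through a coalgebra morphism. -/
def reprMap (φ : C →ₗc[K] D) (x : C) {ι : Type*} (r : Coalgebra.Repr K x ι) :
    Coalgebra.Repr K (φ x) ι where
  index := r.index
  left := fun i => φ (r.left i)
  right := fun i => φ (r.right i)
  eq := by
    have h := congrArg (TensorProduct.map (φ : C →ₗ[K] D) (φ : C →ₗ[K] D)) r.eq
    rw [map_sum] at h
    simpa using h.trans (congrFun (congrArg DFunLike.coe (CoalgHomClass.map_comp_comul φ)) x)

lemma cv_antipode_right (φ : C →ₗc[K] H) :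
    cv ((φ : C →ₗ[K] H)) ((HopfAlgebra.antipode K) ∘ₗ (φ : C →ₗ[K] H)) = cu := by
  ext x
  rw [cv_repr _ _ x (Coalgebra.Repr.arbitrary K x), cu_apply]
  have h := HopfAlgebra.sum_mul_antipode_eq_algebraMap_counit (reprMap φ x (Coalgebra.Repr.arbitrary K x))
  simp only [reprMap, CoalgHom.coe_toLinearMap] at h
  simp only [LinearMap.comp_apply, CoalgHom.coe_toLinearMap]
  rw [h, CoalgHomClass.counit_comp_apply]

lemma cv_antipode_left (φ : C →ₗc[K] H) :
    cv ((HopfAlgebra.antipode K) ∘ₗ (φ : C →ₗ[K] H)) ((φ : C →ₗ[K] H)) = cu := by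
  ext x
  rw [cv_repr _ _ x (Coalgebra.Repr.arbitrary K x), cu_apply]
  have h := HopfAlgebra.sum_antipode_mul_eq_algebraMap_counit (reprMap φ x (Coalgebra.Repr.arbitrary K x))
  simp only [reprMap, CoalgHom.coe_toLinearMap] at h
  simp only [LinearMap.comp_apply, CoalgHom.coe_toLinearMap]
  rw [h, CoalgHomClass.counit_comp_apply]

lemma cv_id_antipode : cv LinearMap.id ((HopfAlgebra.antipode K) : H →ₗ[K] H) = cu :=
  cv_antipode_right (CoalgHom.id K H)

lemma cv_antipode_id : cv ((HopfAlgebra.antipode K) : H →ₗ[K] H) LinearMap.id = cu :=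
  cv_antipode_left (CoalgHom.id K H)

lemma antipode_one : HopfAlgebra.antipode (R := K) (1 : H) = 1 := by
  have h := HopfAlgebra.mul_antipode_rTensor_comul_apply (R := K) (A := H) (1 : H)
  rw [Bialgebra.comul_one, Algebra.TensorProduct.one_def] at h
  simpa using h

lemma antipode_cu :
    ((HopfAlgebra.antipode K) : H →ₗ[K] H) ∘ₗ (cu (K := K) (A := H) (C := C)) = cu := by
  ext x
  simp [cu_apply, Algebra.algebraMap_eq_smul_one, map_smul, antipode_one]

lemma counit_antipode (x : H) :
    Coalgebra.counit (R := K) (HopfAlgebra.antipode (R := K) x) = Coalgebra.counit (R := K) x := by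
  set r := Coalgebra.Repr.arbitrary K x
  have h1 : HopfAlgebra.antipode (R := K) x
      = ∑ i ∈ r.index, Coalgebra.counit (R := K) (r.right i) •
          HopfAlgebra.antipode (R := K) (r.left i) :=
    (repr_counit_right x r (HopfAlgebra.antipode K)).symm
  rw [h1, map_sum]
  have h2 : ∀ i ∈ r.index,
      Coalgebra.counit (R := K)
        (Coalgebra.counit (R := K) (r.right i) • HopfAlgebra.antipode (R := K) (r.left i))
      = Coalgebra.counit (R := K)
          (HopfAlgebra.antipode (R := K) (r.left i) * r.right i) := by
    intro i _
    rw [map_smul, Bialgebra.counit_mul, smul_eq_mul, mul_comm]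
  rw [Finset.sum_congr rfl h2, ← map_sum, HopfAlgebra.sum_antipode_mul_eq_algebraMap_counit r,
    Bialgebra.counit_algebraMap]

/-- Multiplication of `H` as a coalgebra morphism `H ⊗ H →ₗc H`. -/
def mulCoalgHom : (H ⊗[K] H) →ₗc[K] H where
  toLinearMap := LinearMap.mul' K H
  counit_comp := by
    ext x y
    simp [Bialgebra.counit_mul, mul_comm]
  map_comp_comul := by
    refine TensorProduct.ext' fun x y => ?_
    set rx := Coalgebra.Repr.arbitrary K x
    set ry := Coalgebra.Repr.arbitrary K y
    simp only [LinearMap.comp_apply, TensorProduct.comul_tmul,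
      LinearMap.mul'_apply, Bialgebra.comul_mul, TensorProduct.map_tmul]
    rw [← rx.eq, ← ry.eq]
    rw [TensorProduct.sum_tmul]
    simp only [TensorProduct.tmul_sum, map_sum, TensorProduct.tensorTensorTensorComm_tmul,
      TensorProduct.AlgebraTensorModule.tensorTensorTensorComm_tmul,
      TensorProduct.map_tmul, LinearMap.mul'_apply]
    rw [Finset.sum_mul]
    refine Finset.sum_congr rfl fun i _ => ?_
    rw [Finset.mul_sum]
    refine Finset.sum_congr rfl fun j _ => ?_
    simp [Algebra.TensorProduct.tmul_mul_tmul]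

/-- Left projection `C ⊗ D →ₗc C`. -/
def prL : C ⊗[K] D →ₗc[K] C :=
  (Coalgebra.TensorProduct.rid K K C).toCoalgHom.comp
    (CoalgHom.lTensor C (Coalgebra.counitCoalgHom K D))

/-- Right projection `C ⊗ D →ₗc D`. -/
def prR : C ⊗[K] D →ₗc[K] D :=
  (Coalgebra.TensorProduct.lid K D).toCoalgHom.comp
    (CoalgHom.rTensor D (Coalgebra.counitCoalgHom K C))

@[simp] lemma prL_tmul (c : C) (d : D) :
    (prL : C ⊗[K] D →ₗc[K] C) (c ⊗ₜ[K] d) = Coalgebra.counit (R := K) d • c := by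
  simp [prL]

@[simp] lemma prR_tmul (c : C) (d : D) :
    (prR : C ⊗[K] D →ₗc[K] D) (c ⊗ₜ[K] d) = Coalgebra.counit (R := K) c • d := by
  simp [prR]

lemma prL_comp_comul :
    ((prL : C ⊗[K] C →ₗc[K] C) : C ⊗[K] C →ₗ[K] C) ∘ₗ Coalgebra.comul = LinearMap.id := by
  ext x
  set r := Coalgebra.Repr.arbitrary K x
  simp only [LinearMap.comp_apply, LinearMap.id_apply, ← r.eq, map_sum,
    CoalgHom.coe_toLinearMap, prL_tmul]
  exact repr_counit_right x r LinearMap.id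


lemma prR_comp_comul :
    ((prR : C ⊗[K] C →ₗc[K] C) : C ⊗[K] C →ₗ[K] C) ∘ₗ Coalgebra.comul = LinearMap.id := by
  ext x
  set r := Coalgebra.Repr.arbitrary K x
  simp only [LinearMap.comp_apply, LinearMap.id_apply, ← r.eq, map_sum,
    CoalgHom.coe_toLinearMap, prR_tmul]
  exact repr_counit_left x r LinearMap.id

lemma prL_map (f : C →ₗ[K] C') (g : D →ₗc[K] D') :
    ((prL : C' ⊗[K] D' →ₗc[K] C') : C' ⊗[K] D' →ₗ[K] C') ∘ₗ
      TensorProduct.map f (g : D →ₗ[K] D')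
    = f ∘ₗ ((prL : C ⊗[K] D →ₗc[K] C) : C ⊗[K] D →ₗ[K] C) := by
  refine TensorProduct.ext' fun c d => ?_
  simp [CoalgHomClass.counit_comp_apply]

lemma prR_map (f : C →ₗc[K] C') (g : D →ₗ[K] D') :
    ((prR : C' ⊗[K] D' →ₗc[K] D') : C' ⊗[K] D' →ₗ[K] D') ∘ₗ
      TensorProduct.map (f : C →ₗ[K] C') g
    = g ∘ₗ ((prR : C ⊗[K] D →ₗc[K] D) : C ⊗[K] D →ₗ[K] D) := by
  refine TensorProduct.ext' fun c d => ?_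
  simp [CoalgHomClass.counit_comp_apply]

end HopfBasics

section Antipode

variable {C : Type u} [AddCommGroup C] [Module K C] [Coalgebra K C]
variable {D : Type u} [AddCommGroup D] [Module K D] [Coalgebra K D]
variable {H : Type u} [Ring H] [HopfAlgebra K H]

/-- Evaluate a convolution on a pure tensor. -/
lemma cv_tmul {A : Type u} [Ring A] [Algebra K A] (f g : C ⊗[K] D →ₗ[K] A)
    (c : C) (d : D) {ι κ : Type*} (rc : Coalgebra.Repr K c ι) (rd : Coalgebra.Repr K d κ) :
    cv f g (c ⊗ₜ[K] d) = ∑ i ∈ rc.index, ∑ j ∈ rd.index,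
      f (rc.left i ⊗ₜ[K] rd.left j) * g (rc.right i ⊗ₜ[K] rd.right j) := by
  simp only [cv, LinearMap.comp_apply, TensorProduct.comul_tmul,
    TensorProduct.AlgebraTensorModule.tensorTensorTensorComm_eq, TensorProduct.map_tmul]
  rw [← rc.eq, ← rd.eq, TensorProduct.sum_tmul]
  simp only [TensorProduct.tmul_sum, map_sum, LinearEquiv.coe_coe,
    TensorProduct.tensorTensorTensorComm_tmul, TensorProduct.map_tmul, LinearMap.mul'_apply]

lemma mul'_eq_cv :
    (LinearMap.mul' K H : H ⊗[K] H →ₗ[K] H) =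
      cv ((prL : H ⊗[K] H →ₗc[K] H) : H ⊗[K] H →ₗ[K] H)
        ((prR : H ⊗[K] H →ₗc[K] H) : H ⊗[K] H →ₗ[K] H) := by
  refine TensorProduct.ext' fun x y => ?_
  set rx := Coalgebra.Repr.arbitrary K x
  set ry := Coalgebra.Repr.arbitrary K y
  rw [LinearMap.mul'_apply, cv_tmul _ _ x y rx ry]
  have hterm : ∀ i j, ((prL : H ⊗[K] H →ₗc[K] H) : H ⊗[K] H →ₗ[K] H)
        (rx.left i ⊗ₜ[K] ry.left j) *
      ((prR : H ⊗[K] H →ₗc[K] H) : H ⊗[K] H →ₗ[K] H) (rx.right i ⊗ₜ[K] ry.right j)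
      = Coalgebra.counit (R := K) (rx.right i) •
          (Coalgebra.counit (R := K) (ry.left j) • (rx.left i * ry.right j)) := by
    intro i j
    simp only [CoalgHom.coe_toLinearMap, prL_tmul, prR_tmul]
    rw [smul_mul_assoc, mul_smul_comm, smul_comm]
  simp_rw [hterm, ← Finset.smul_sum]
  have hj : ∀ i, ∑ j ∈ ry.index, Coalgebra.counit (R := K) (ry.left j) •
      (rx.left i * ry.right j) = rx.left i * y := fun i =>
    repr_counit_left y ry (LinearMap.mulLeft K (rx.left i))
  simp_rw [hj]
  exact (repr_counit_right x rx (LinearMap.mulRight K y)).symm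

lemma cvN_eval (x y : H) :
    cv ((HopfAlgebra.antipode K) ∘ₗ ((prR : H ⊗[K] H →ₗc[K] H) : H ⊗[K] H →ₗ[K] H))
       ((HopfAlgebra.antipode K) ∘ₗ ((prL : H ⊗[K] H →ₗc[K] H) : H ⊗[K] H →ₗ[K] H))
       (x ⊗ₜ[K] y)
    = HopfAlgebra.antipode (R := K) y * HopfAlgebra.antipode (R := K) x := by
  set rx := Coalgebra.Repr.arbitrary K x
  set ry := Coalgebra.Repr.arbitrary K y
  rw [cv_tmul _ _ x y rx ry]
  have hterm : ∀ i j,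
      ((HopfAlgebra.antipode K) ∘ₗ ((prR : H ⊗[K] H →ₗc[K] H) : H ⊗[K] H →ₗ[K] H))
        (rx.left i ⊗ₜ[K] ry.left j) *
      ((HopfAlgebra.antipode K) ∘ₗ ((prL : H ⊗[K] H →ₗc[K] H) : H ⊗[K] H →ₗ[K] H))
        (rx.right i ⊗ₜ[K] ry.right j)
      = Coalgebra.counit (R := K) (rx.left i) • (Coalgebra.counit (R := K) (ry.right j) •
          (HopfAlgebra.antipode (R := K) (ry.left j) *
            HopfAlgebra.antipode (R := K) (rx.right i))) := by
    intro i j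
    simp only [LinearMap.comp_apply, CoalgHom.coe_toLinearMap, prL_tmul, prR_tmul,
      map_smul]
    rw [smul_mul_assoc, mul_smul_comm, smul_comm]
  simp_rw [hterm, ← Finset.smul_sum]
  have hj : ∀ i, ∑ j ∈ ry.index, Coalgebra.counit (R := K) (ry.right j) •
      (HopfAlgebra.antipode (R := K) (ry.left j) * HopfAlgebra.antipode (R := K) (rx.right i))
      = HopfAlgebra.antipode (R := K) y * HopfAlgebra.antipode (R := K) (rx.right i) :=
    fun i => repr_counit_right y ry
      ((LinearMap.mulRight K (HopfAlgebra.antipode (R := K) (rx.right i))) ∘ₗ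
        (HopfAlgebra.antipode K))
  simp_rw [hj]
  exact repr_counit_left x rx
    ((LinearMap.mulLeft K (HopfAlgebra.antipode (R := K) y)) ∘ₗ (HopfAlgebra.antipode K))

lemma antipode_comp_mul' :
    ((HopfAlgebra.antipode K) : H →ₗ[K] H) ∘ₗ LinearMap.mul' K H =
      cv ((HopfAlgebra.antipode K) ∘ₗ ((prR : H ⊗[K] H →ₗc[K] H) : H ⊗[K] H →ₗ[K] H))
         ((HopfAlgebra.antipode K) ∘ₗ ((prL : H ⊗[K] H →ₗc[K] H) : H ⊗[K] H →ₗ[K] H)) := by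
  have h2 : cv (LinearMap.mul' K H)
      (cv ((HopfAlgebra.antipode K) ∘ₗ ((prR : H ⊗[K] H →ₗc[K] H) : H ⊗[K] H →ₗ[K] H))
         ((HopfAlgebra.antipode K) ∘ₗ ((prL : H ⊗[K] H →ₗc[K] H) : H ⊗[K] H →ₗ[K] H))) = cu := by
    rw [mul'_eq_cv, cv_assoc,
      ← cv_assoc ((prR : H ⊗[K] H →ₗc[K] H) : H ⊗[K] H →ₗ[K] H) _ _,
      cv_antipode_right (prR : H ⊗[K] H →ₗc[K] H), cv_cu_left,
      cv_antipode_right (prL : H ⊗[K] H →ₗc[K] H)]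
  have h1 : cv (((HopfAlgebra.antipode K) : H →ₗ[K] H) ∘ₗ LinearMap.mul' K H)
      (LinearMap.mul' K H) = cu := cv_antipode_left (mulCoalgHom (K := K) (H := H))
  calc ((HopfAlgebra.antipode K) : H →ₗ[K] H) ∘ₗ LinearMap.mul' K H
      = cv (((HopfAlgebra.antipode K) : H →ₗ[K] H) ∘ₗ LinearMap.mul' K H) cu := by
        rw [cv_cu_right]
    _ = cv (((HopfAlgebra.antipode K) : H →ₗ[K] H) ∘ₗ LinearMap.mul' K H)
          (cv (LinearMap.mul' K H)
            (cv ((HopfAlgebra.antipode K) ∘ₗ ((prR : H ⊗[K] H →ₗc[K] H) : H ⊗[K] H →ₗ[K] H))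
               ((HopfAlgebra.antipode K) ∘ₗ ((prL : H ⊗[K] H →ₗc[K] H) : H ⊗[K] H →ₗ[K] H)))) := by
        rw [h2]
    _ = cv (cv (((HopfAlgebra.antipode K) : H →ₗ[K] H) ∘ₗ LinearMap.mul' K H)
          (LinearMap.mul' K H))
          (cv ((HopfAlgebra.antipode K) ∘ₗ ((prR : H ⊗[K] H →ₗc[K] H) : H ⊗[K] H →ₗ[K] H))
             ((HopfAlgebra.antipode K) ∘ₗ ((prL : H ⊗[K] H →ₗc[K] H) : H ⊗[K] H →ₗ[K] H))) := by
        rw [cv_assoc]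
    _ = cv cu (cv ((HopfAlgebra.antipode K) ∘ₗ ((prR : H ⊗[K] H →ₗc[K] H) : H ⊗[K] H →ₗ[K] H))
             ((HopfAlgebra.antipode K) ∘ₗ ((prL : H ⊗[K] H →ₗc[K] H) : H ⊗[K] H →ₗ[K] H))) := by
        rw [h1]
    _ = _ := cv_cu_left _

lemma antipode_mul (x y : H) :
    HopfAlgebra.antipode (R := K) (x * y) =
      HopfAlgebra.antipode (R := K) y * HopfAlgebra.antipode (R := K) x := by
  have h := congrFun (congrArg DFunLike.coe (antipode_comp_mul' (K := K) (H := H))) (x ⊗ₜ[K] y)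
  simpa [cvN_eval x y] using h

end Antipode

section ComulAntipode

variable {C : Type u} [AddCommGroup C] [Module K C] [Coalgebra K C]
variable {H : Type u} [Ring H] [HopfAlgebra K H]

/-- `cv ι₁ ι₂ = Δ` where `ι₁ x = x ⊗ 1` and `ι₂ x = 1 ⊗ x`. -/
lemma cv_incl :
    cv (Algebra.TensorProduct.includeLeft (R := K) (S := K) (A := H) (B := H)).toLinearMap
       (Algebra.TensorProduct.includeRight (R := K) (A := H) (B := H)).toLinearMap
    = (Coalgebra.comul : H →ₗ[K] H ⊗[K] H) := by
  ext x
  rw [cv_repr _ _ x (Coalgebra.Repr.arbitrary K x)]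
  have : ∀ i ∈ (Coalgebra.Repr.arbitrary K x).index,
      (Algebra.TensorProduct.includeLeft (R := K) (S := K) (A := H) (B := H)).toLinearMap
          ((Coalgebra.Repr.arbitrary K x).left i) *
        (Algebra.TensorProduct.includeRight (R := K) (A := H) (B := H)).toLinearMap
          ((Coalgebra.Repr.arbitrary K x).right i)
      = (Coalgebra.Repr.arbitrary K x).left i ⊗ₜ[K] (Coalgebra.Repr.arbitrary K x).right i := by
    intro i _
    simp [Algebra.TensorProduct.tmul_mul_tmul]
  rw [Finset.sum_congr rfl this, (Coalgebra.Repr.arbitrary K x).eq]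

lemma comul_antipode (hcc : Cocomm K H) :
    (Coalgebra.comul : H →ₗ[K] H ⊗[K] H) ∘ₗ (HopfAlgebra.antipode K)
    = TensorProduct.map (HopfAlgebra.antipode K) (HopfAlgebra.antipode K) ∘ₗ Coalgebra.comul := by
  set ι₁ := (Algebra.TensorProduct.includeLeft (R := K) (S := K) (A := H) (B := H)).toLinearMap
    with hι₁
  set ι₂ := (Algebra.TensorProduct.includeRight (R := K) (A := H) (B := H)).toLinearMap with hι₂
  -- left inverse of Δ
  have hL : cv (cv (ι₂ ∘ₗ (HopfAlgebra.antipode K)) (ι₁ ∘ₗ (HopfAlgebra.antipode K)))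
      (Coalgebra.comul : H →ₗ[K] H ⊗[K] H) = cu := by
    rw [← cv_incl, cv_assoc, ← cv_assoc (ι₁ ∘ₗ (HopfAlgebra.antipode K)) ι₁ ι₂]
    have e1 : cv (ι₁ ∘ₗ ((HopfAlgebra.antipode K) : H →ₗ[K] H)) ι₁ = cu := by
      have := alghom_cv (Algebra.TensorProduct.includeLeft (R := K) (S := K) (A := H) (B := H))
        ((HopfAlgebra.antipode K) : H →ₗ[K] H) LinearMap.id
      rw [cv_antipode_id, alghom_cu, LinearMap.comp_id] at this
      exact this.symm
    rw [e1, cv_cu_left]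
    have e2 : cv (ι₂ ∘ₗ ((HopfAlgebra.antipode K) : H →ₗ[K] H)) ι₂ = cu := by
      have := alghom_cv (Algebra.TensorProduct.includeRight (R := K) (A := H) (B := H))
        ((HopfAlgebra.antipode K) : H →ₗ[K] H) LinearMap.id
      rw [cv_antipode_id, alghom_cu, LinearMap.comp_id] at this
      exact this.symm
    exact e2
  -- right inverse of Δ
  have hR : cv (Coalgebra.comul : H →ₗ[K] H ⊗[K] H)
      ((Coalgebra.comul : H →ₗ[K] H ⊗[K] H) ∘ₗ (HopfAlgebra.antipode K)) = cu := by
    have := alghom_cv (Bialgebra.comulAlgHom K H) LinearMap.id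
      ((HopfAlgebra.antipode K) : H →ₗ[K] H)
    rw [cv_id_antipode, alghom_cu, LinearMap.comp_id] at this
    have hco : (Bialgebra.comulAlgHom K H).toLinearMap = (Coalgebra.comul : H →ₗ[K] H ⊗[K] H) :=
      rfl
    rw [hco] at this
    exact this.symm
  -- uniqueness of inverses
  have huniq : cv (ι₂ ∘ₗ ((HopfAlgebra.antipode K) : H →ₗ[K] H))
        (ι₁ ∘ₗ ((HopfAlgebra.antipode K) : H →ₗ[K] H))
      = (Coalgebra.comul : H →ₗ[K] H ⊗[K] H) ∘ₗ (HopfAlgebra.antipode K) := by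
    calc cv (ι₂ ∘ₗ ((HopfAlgebra.antipode K) : H →ₗ[K] H))
          (ι₁ ∘ₗ ((HopfAlgebra.antipode K) : H →ₗ[K] H))
        = cv (cv (ι₂ ∘ₗ ((HopfAlgebra.antipode K) : H →ₗ[K] H))
            (ι₁ ∘ₗ ((HopfAlgebra.antipode K) : H →ₗ[K] H))) cu := (cv_cu_right _).symm
      _ = cv (cv (ι₂ ∘ₗ ((HopfAlgebra.antipode K) : H →ₗ[K] H))
            (ι₁ ∘ₗ ((HopfAlgebra.antipode K) : H →ₗ[K] H)))
            (cv (Coalgebra.comul : H →ₗ[K] H ⊗[K] H)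
              ((Coalgebra.comul : H →ₗ[K] H ⊗[K] H) ∘ₗ (HopfAlgebra.antipode K))) := by rw [hR]
      _ = cv (cv (cv (ι₂ ∘ₗ ((HopfAlgebra.antipode K) : H →ₗ[K] H))
            (ι₁ ∘ₗ ((HopfAlgebra.antipode K) : H →ₗ[K] H)))
            (Coalgebra.comul : H →ₗ[K] H ⊗[K] H))
            ((Coalgebra.comul : H →ₗ[K] H ⊗[K] H) ∘ₗ (HopfAlgebra.antipode K)) :=
          (cv_assoc _ _ _).symm
      _ = cv cu ((Coalgebra.comul : H →ₗ[K] H ⊗[K] H) ∘ₗ (HopfAlgebra.antipode K)) := by rw [hL]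
      _ = _ := cv_cu_left _
  -- evaluate the left-hand side
  have hev : cv (ι₂ ∘ₗ ((HopfAlgebra.antipode K) : H →ₗ[K] H))
        (ι₁ ∘ₗ ((HopfAlgebra.antipode K) : H →ₗ[K] H))
      = TensorProduct.map (HopfAlgebra.antipode K) (HopfAlgebra.antipode K) ∘ₗ Coalgebra.comul := by
    ext x
    rw [cv_repr _ _ x (Coalgebra.Repr.arbitrary K x)]
    have : ∀ i ∈ (Coalgebra.Repr.arbitrary K x).index,
        (ι₂ ∘ₗ (HopfAlgebra.antipode K)) ((Coalgebra.Repr.arbitrary K x).left i) *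
          (ι₁ ∘ₗ (HopfAlgebra.antipode K)) ((Coalgebra.Repr.arbitrary K x).right i)
        = (TensorProduct.map (HopfAlgebra.antipode K) (HopfAlgebra.antipode K))
            ((Coalgebra.Repr.arbitrary K x).right i ⊗ₜ[K]
              (Coalgebra.Repr.arbitrary K x).left i) := by
      intro i _
      simp [hι₁, hι₂, Algebra.TensorProduct.tmul_mul_tmul]
    rw [Finset.sum_congr rfl this,
      repr_comm hcc x (Coalgebra.Repr.arbitrary K x)
        (TensorProduct.map (HopfAlgebra.antipode K) (HopfAlgebra.antipode K)),
      repr_fold x (Coalgebra.Repr.arbitrary K x)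
        (TensorProduct.map (HopfAlgebra.antipode K) (HopfAlgebra.antipode K))]
    rfl
  exact huniq.symm.trans hev

/-- The antipode as a coalgebra morphism (cocommutative case). -/
def antipodeCoalgHom (hcc : Cocomm K H) : H →ₗc[K] H where
  toLinearMap := (HopfAlgebra.antipode K)
  counit_comp := by ext x; exact counit_antipode (K := K) x
  map_comp_comul := (comul_antipode hcc).symm

lemma antipode_comp_cv (hC : Cocomm K C) (f g : C →ₗ[K] H) :
    ((HopfAlgebra.antipode K) : H →ₗ[K] H) ∘ₗ cv f g
    = cv ((HopfAlgebra.antipode K) ∘ₗ g) ((HopfAlgebra.antipode K) ∘ₗ f) := by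
  ext x
  rw [LinearMap.comp_apply, cv_repr f g x (Coalgebra.Repr.arbitrary K x), map_sum,
    cv_repr _ _ x (Coalgebra.Repr.arbitrary K x)]
  have : ∀ i ∈ (Coalgebra.Repr.arbitrary K x).index,
      HopfAlgebra.antipode (R := K)
        (f ((Coalgebra.Repr.arbitrary K x).left i) * g ((Coalgebra.Repr.arbitrary K x).right i))
      = (LinearMap.mul' K H ∘ₗ
          TensorProduct.map ((HopfAlgebra.antipode K) ∘ₗ g) ((HopfAlgebra.antipode K) ∘ₗ f))
          ((Coalgebra.Repr.arbitrary K x).right i ⊗ₜ[K] (Coalgebra.Repr.arbitrary K x).left i) := by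
    intro i _
    simp [antipode_mul]
  rw [Finset.sum_congr rfl this,
    repr_comm hC x (Coalgebra.Repr.arbitrary K x) (LinearMap.mul' K H ∘ₗ
      TensorProduct.map ((HopfAlgebra.antipode K) ∘ₗ g) ((HopfAlgebra.antipode K) ∘ₗ f))]
  simp

lemma antipode_antipode (hcc : Cocomm K H) :
    ((HopfAlgebra.antipode K) : H →ₗ[K] H) ∘ₗ ((HopfAlgebra.antipode K) : H →ₗ[K] H)
    = LinearMap.id := by
  have h1 : cv ((HopfAlgebra.antipode K) : H →ₗ[K] H)
      (((HopfAlgebra.antipode K) : H →ₗ[K] H) ∘ₗ (HopfAlgebra.antipode K)) = cu := by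
    have := congrArg (fun m => ((HopfAlgebra.antipode K) : H →ₗ[K] H) ∘ₗ m)
      (cv_antipode_id (K := K) (H := H))
    rw [antipode_comp_cv hcc, antipode_cu] at this
    rw [← this]
    have : ((HopfAlgebra.antipode K) : H →ₗ[K] H) ∘ₗ LinearMap.id
        = ((HopfAlgebra.antipode K) : H →ₗ[K] H) := LinearMap.comp_id _
    rw [this]
  calc ((HopfAlgebra.antipode K) : H →ₗ[K] H) ∘ₗ ((HopfAlgebra.antipode K) : H →ₗ[K] H)
      = cv cu (((HopfAlgebra.antipode K) : H →ₗ[K] H) ∘ₗ (HopfAlgebra.antipode K)) := by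
        rw [cv_cu_left]
    _ = cv (cv LinearMap.id ((HopfAlgebra.antipode K) : H →ₗ[K] H))
          (((HopfAlgebra.antipode K) : H →ₗ[K] H) ∘ₗ (HopfAlgebra.antipode K)) := by
        rw [cv_id_antipode]
    _ = cv LinearMap.id (cv ((HopfAlgebra.antipode K) : H →ₗ[K] H)
          (((HopfAlgebra.antipode K) : H →ₗ[K] H) ∘ₗ (HopfAlgebra.antipode K))) := by rw [cv_assoc]
    _ = cv LinearMap.id cu := by rw [h1]
    _ = LinearMap.id := cv_cu_right _

end ComulAntipode

section ComulCoalgHom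

variable {C : Type u} [AddCommGroup C] [Module K C] [Coalgebra K C]
variable {D : Type u} [AddCommGroup D] [Module K D] [Coalgebra K D]

lemma comm_comp_comul_of_cocomm (hC : Cocomm K C) :
    (TensorProduct.comm K C C).toLinearMap ∘ₗ (Coalgebra.comul : C →ₗ[K] C ⊗[K] C)
      = Coalgebra.comul := LinearMap.ext hC

lemma cocomm_tensor (hC : Cocomm K C) (hD : Cocomm K D) : Cocomm K (C ⊗[K] D) := by
  have hcomm : (TensorProduct.comm K (C ⊗[K] D) (C ⊗[K] D)).toLinearMap ∘ₗ
      (TensorProduct.tensorTensorTensorComm K C C D D).toLinearMap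
      = (TensorProduct.tensorTensorTensorComm K C C D D).toLinearMap ∘ₗ
        TensorProduct.map (TensorProduct.comm K C C).toLinearMap
          (TensorProduct.comm K D D).toLinearMap := by
    refine TensorProduct.ext' fun u v => ?_
    induction u with
    | zero => simp
    | tmul a b =>
      induction v with
      | zero => simp
      | tmul c d => simp
      | add v₁ v₂ h₁ h₂ => simp only [TensorProduct.tmul_add, map_add, h₁, h₂]
    | add u₁ u₂ h₁ h₂ => simp only [TensorProduct.add_tmul, map_add, h₁, h₂]
  intro z
  have : (TensorProduct.comm K (C ⊗[K] D) (C ⊗[K] D)).toLinearMap ∘ₗ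
      (Coalgebra.comul : C ⊗[K] D →ₗ[K] _) = Coalgebra.comul := by
    rw [TensorProduct.comul_def, TensorProduct.AlgebraTensorModule.tensorTensorTensorComm_eq,
      TensorProduct.AlgebraTensorModule.map_eq, ← LinearMap.comp_assoc, hcomm,
      LinearMap.comp_assoc, ← TensorProduct.map_comp,
      comm_comp_comul_of_cocomm hC, comm_comp_comul_of_cocomm hD]
  exact congrFun (congrArg DFunLike.coe this) z

lemma map_comul_comul_comp_comul (hC : Cocomm K C) :
    TensorProduct.map (Coalgebra.comul : C →ₗ[K] C ⊗[K] C) Coalgebra.comul ∘ₗ Coalgebra.comul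
      = (Coalgebra.comul : C ⊗[K] C →ₗ[K] (C ⊗[K] C) ⊗[K] (C ⊗[K] C)) ∘ₗ
          (Coalgebra.comul : C →ₗ[K] C ⊗[K] C) := by
  ext x
  set r := Coalgebra.Repr.arbitrary K x with hr
  set rl := fun i => Coalgebra.Repr.arbitrary K (r.left i) with hrl
  set rt := fun i => Coalgebra.Repr.arbitrary K (r.right i) with hrt
  set rll := fun i j => Coalgebra.Repr.arbitrary K ((rl i).left j) with hrll
  set rlr := fun i j => Coalgebra.Repr.arbitrary K ((rl i).right j) with hrlr
  set rtl := fun i k => Coalgebra.Repr.arbitrary K ((rt i).left k) with hrtl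
  set rtr := fun i k => Coalgebra.Repr.arbitrary K ((rt i).right k) with hrtr
  have goalL : (TensorProduct.map (Coalgebra.comul (R := K)) (Coalgebra.comul (R := K))
        ∘ₗ Coalgebra.comul) x
      = ∑ i ∈ r.index, Coalgebra.comul (R := K) (r.left i) ⊗ₜ[K]
          Coalgebra.comul (R := K) (r.right i) := by
    rw [LinearMap.comp_apply, ← r.eq, map_sum]
    simp
  have goalR : ((Coalgebra.comul : C ⊗[K] C →ₗ[K] (C ⊗[K] C) ⊗[K] (C ⊗[K] C)) ∘ₗ
        (Coalgebra.comul : C →ₗ[K] C ⊗[K] C)) x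
      = ∑ i ∈ r.index, (TensorProduct.tensorTensorTensorComm K C C C C)
          (Coalgebra.comul (R := K) (r.left i) ⊗ₜ[K] Coalgebra.comul (R := K) (r.right i)) := by
    rw [LinearMap.comp_apply, ← r.eq, map_sum]
    simp [TensorProduct.AlgebraTensorModule.tensorTensorTensorComm_eq]
  rw [goalL, goalR]
  symm
  -- now prove  ∑ ttt (Δl ⊗ Δt) = ∑ Δl ⊗ Δt   (reversed orientation handled at the end)
  -- maps used in the calc
  set F₀ : C ⊗[K] (C ⊗[K] C) →ₗ[K] (C ⊗[K] C) ⊗[K] (C ⊗[K] C) :=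
    TensorProduct.map LinearMap.id Coalgebra.comul ∘ₗ
      (TensorProduct.assoc K C C C).symm.toLinearMap with hF₀
  set F₃ : C ⊗[K] (C ⊗[K] C) →ₗ[K] (C ⊗[K] C) ⊗[K] (C ⊗[K] C) :=
    (TensorProduct.tensorTensorTensorComm K C C C C).toLinearMap ∘ₗ
      TensorProduct.map Coalgebra.comul LinearMap.id with hF₃
  set H₁ : C ⊗[K] (C ⊗[K] C) →ₗ[K] (C ⊗[K] C) ⊗[K] (C ⊗[K] C) :=
    (TensorProduct.assoc K C C (C ⊗[K] C)).symm.toLinearMap ∘ₗ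
      TensorProduct.map LinearMap.id (TensorProduct.assoc K C C C).toLinearMap ∘ₗ
      TensorProduct.map LinearMap.id (TensorProduct.map Coalgebra.comul LinearMap.id) with hH₁
  have hF₀t : ∀ (a b c : C), F₀ (a ⊗ₜ[K] (b ⊗ₜ[K] c))
      = (a ⊗ₜ[K] b) ⊗ₜ[K] Coalgebra.comul (R := K) c := by intros; simp [hF₀]
  have hF₃t : ∀ (a b c : C), F₃ (a ⊗ₜ[K] (b ⊗ₜ[K] c))
      = (TensorProduct.tensorTensorTensorComm K C C C C)
          (Coalgebra.comul (R := K) a ⊗ₜ[K] (b ⊗ₜ[K] c)) := by intros; simp [hF₃]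
  have hH₁t : ∀ (a b c : C), H₁ (a ⊗ₜ[K] (b ⊗ₜ[K] c))
      = ((TensorProduct.assoc K C C (C ⊗[K] C)).symm.toLinearMap ∘ₗ
          TensorProduct.map LinearMap.id (TensorProduct.assoc K C C C).toLinearMap)
          (a ⊗ₜ[K] (Coalgebra.comul (R := K) b ⊗ₜ[K] c)) := by intros; simp [hH₁]
  calc
    ∑ i ∈ r.index, (TensorProduct.tensorTensorTensorComm K C C C C)
        (Coalgebra.comul (R := K) (r.left i) ⊗ₜ[K] Coalgebra.comul (R := K) (r.right i))
      = ∑ i ∈ r.index, ∑ k ∈ (rt i).index,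
          F₃ (r.left i ⊗ₜ[K] ((rt i).left k ⊗ₜ[K] (rt i).right k)) := by
        refine Finset.sum_congr rfl fun i _ => ?_
        rw [← (rt i).eq]
        simp only [TensorProduct.tmul_sum, TensorProduct.sum_tmul, map_sum]
        exact Finset.sum_congr rfl fun k _ => (hF₃t _ _ _).symm
    _ = ∑ i ∈ r.index, ∑ j ∈ (rl i).index,
          F₃ ((rl i).left j ⊗ₜ[K] ((rl i).right j ⊗ₜ[K] r.right i)) :=
        (repr_assoc x r rl rt F₃).symm
    _ = ∑ i ∈ r.index, ∑ j ∈ (rl i).index, ∑ m ∈ (rll i j).index,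
          ((rll i j).left m ⊗ₜ[K] (rl i).right j) ⊗ₜ[K] ((rll i j).right m ⊗ₜ[K] r.right i) := by
        refine Finset.sum_congr rfl fun i _ => Finset.sum_congr rfl fun j _ => ?_
        rw [hF₃t, ← (rll i j).eq]
        simp only [TensorProduct.tmul_sum, TensorProduct.sum_tmul, map_sum]
        exact Finset.sum_congr rfl fun m _ => by simp
    _ = ∑ i ∈ r.index, ∑ j ∈ (rl i).index, ∑ m ∈ (rlr i j).index,
          ((rl i).left j ⊗ₜ[K] (rlr i j).right m) ⊗ₜ[K] ((rlr i j).left m ⊗ₜ[K] r.right i) := by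
        refine Finset.sum_congr rfl fun i _ => ?_
        have := repr_assoc (r.left i) (rl i) (rll i) (rlr i)
          ((TensorProduct.map LinearMap.id ((TensorProduct.mk K C C).flip (r.right i))) ∘ₗ
            (TensorProduct.assoc K C C C).symm.toLinearMap ∘ₗ
            (TensorProduct.map LinearMap.id (TensorProduct.comm K C C).toLinearMap))
        simpa using this
    _ = ∑ i ∈ r.index, ∑ j ∈ (rl i).index, ∑ m ∈ (rlr i j).index,
          ((rl i).left j ⊗ₜ[K] (rlr i j).left m) ⊗ₜ[K] ((rlr i j).right m ⊗ₜ[K] r.right i) := by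
        refine Finset.sum_congr rfl fun i _ => Finset.sum_congr rfl fun j _ => ?_
        have := repr_comm hC ((rl i).right j) (rlr i j)
          (TensorProduct.map ((TensorProduct.mk K C C) ((rl i).left j))
            ((TensorProduct.mk K C C).flip (r.right i)))
        simpa using this
    _ = ∑ i ∈ r.index, ∑ j ∈ (rl i).index,
          H₁ ((rl i).left j ⊗ₜ[K] ((rl i).right j ⊗ₜ[K] r.right i)) := by
        refine Finset.sum_congr rfl fun i _ => Finset.sum_congr rfl fun j _ => ?_
        rw [hH₁t, ← (rlr i j).eq]
        simp only [TensorProduct.tmul_sum, TensorProduct.sum_tmul, map_sum]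
        exact Finset.sum_congr rfl fun m _ => by simp
    _ = ∑ i ∈ r.index, ∑ k ∈ (rt i).index,
          H₁ (r.left i ⊗ₜ[K] ((rt i).left k ⊗ₜ[K] (rt i).right k)) :=
        repr_assoc x r rl rt H₁
    _ = ∑ i ∈ r.index, ∑ k ∈ (rt i).index, ∑ m ∈ (rtl i k).index,
          (r.left i ⊗ₜ[K] (rtl i k).left m) ⊗ₜ[K] ((rtl i k).right m ⊗ₜ[K] (rt i).right k) := by
        refine Finset.sum_congr rfl fun i _ => Finset.sum_congr rfl fun k _ => ?_
        rw [hH₁t, ← (rtl i k).eq]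
        simp only [TensorProduct.tmul_sum, TensorProduct.sum_tmul, map_sum]
        exact Finset.sum_congr rfl fun m _ => by simp
    _ = ∑ i ∈ r.index, ∑ k ∈ (rt i).index, ∑ m ∈ (rtr i k).index,
          (r.left i ⊗ₜ[K] (rt i).left k) ⊗ₜ[K] ((rtr i k).left m ⊗ₜ[K] (rtr i k).right m) := by
        refine Finset.sum_congr rfl fun i _ => ?_
        have := repr_assoc (r.right i) (rt i) (rtl i) (rtr i)
          (TensorProduct.map ((TensorProduct.mk K C C) (r.left i)) LinearMap.id)
        simpa using this
    _ = ∑ i ∈ r.index, ∑ k ∈ (rt i).index,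
          F₀ (r.left i ⊗ₜ[K] ((rt i).left k ⊗ₜ[K] (rt i).right k)) := by
        refine Finset.sum_congr rfl fun i _ => Finset.sum_congr rfl fun k _ => ?_
        rw [hF₀t, ← (rtr i k).eq]
        simp only [TensorProduct.tmul_sum, TensorProduct.sum_tmul, map_sum]
    _ = ∑ i ∈ r.index, ∑ j ∈ (rl i).index,
          F₀ ((rl i).left j ⊗ₜ[K] ((rl i).right j ⊗ₜ[K] r.right i)) :=
        (repr_assoc x r rl rt F₀).symm
    _ = ∑ i ∈ r.index, Coalgebra.comul (R := K) (r.left i) ⊗ₜ[K]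
          Coalgebra.comul (R := K) (r.right i) := by
        refine Finset.sum_congr rfl fun i _ => ?_
        rw [← (rl i).eq]
        simp only [TensorProduct.tmul_sum, TensorProduct.sum_tmul, map_sum]
        exact Finset.sum_congr rfl fun j _ => hF₀t _ _ _

/-- Comultiplication as a coalgebra morphism (cocommutative case). -/
def comulCoalgHom (hC : Cocomm K C) : C →ₗc[K] C ⊗[K] C where
  toLinearMap := Coalgebra.comul
  counit_comp := by
    ext x
    set r := Coalgebra.Repr.arbitrary K x
    rw [LinearMap.comp_apply, ← r.eq, map_sum]
    simp only [TensorProduct.counit_tmul, LinearMap.comp_apply,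
      TensorProduct.map_tmul, LinearMap.mul'_apply]
    exact repr_counit_right x r Coalgebra.counit
  map_comp_comul := map_comul_comul_comp_comul hC

end ComulCoalgHom

section Glue

variable {C : Type u} [AddCommGroup C] [Module K C] [Coalgebra K C]
variable {H : Type u} [Ring H] [HopfAlgebra K H]

/-- Convolution of two coalgebra morphisms into `H` is a coalgebra morphism
(cocommutative source). -/
def cvCoalgHom (hC : Cocomm K C) (φ ψ : C →ₗc[K] H) : C →ₗc[K] H :=
  (mulCoalgHom (K := K) (H := H)).comp
    ((Coalgebra.TensorProduct.map φ ψ).comp (comulCoalgHom hC))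

lemma cvCoalgHom_toLin (hC : Cocomm K C) (φ ψ : C →ₗc[K] H) :
    ((cvCoalgHom hC φ ψ : C →ₗc[K] H) : C →ₗ[K] H)
      = cv (φ : C →ₗ[K] H) (ψ : C →ₗ[K] H) := rfl

/-- `x ↦ x ⊗ 1` as a coalgebra morphism. -/
def inclL : H →ₗc[K] H ⊗[K] H where
  toLinearMap := (TensorProduct.mk K H H).flip 1
  counit_comp := by
    ext x
    simp [TensorProduct.counit_tmul]
  map_comp_comul := by
    ext x
    set r := Coalgebra.Repr.arbitrary K x
    simp only [LinearMap.comp_apply, LinearMap.flip_apply, TensorProduct.mk_apply,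
      TensorProduct.comul_tmul, TensorProduct.AlgebraTensorModule.tensorTensorTensorComm_eq,
      TensorProduct.map_tmul, Bialgebra.comul_one, Algebra.TensorProduct.one_def]
    rw [← r.eq, TensorProduct.sum_tmul]
    simp only [map_sum, TensorProduct.map_tmul, LinearEquiv.coe_coe,
      TensorProduct.tensorTensorTensorComm_tmul, TensorProduct.mk_apply,
      LinearMap.flip_apply]

/-- `x ↦ 1 ⊗ x` as a coalgebra morphism. -/
def inclR : H →ₗc[K] H ⊗[K] H where
  toLinearMap := TensorProduct.mk K H H 1
  counit_comp := by
    ext x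
    simp [TensorProduct.counit_tmul]
  map_comp_comul := by
    ext x
    set r := Coalgebra.Repr.arbitrary K x
    simp only [LinearMap.comp_apply, TensorProduct.mk_apply,
      TensorProduct.comul_tmul, TensorProduct.AlgebraTensorModule.tensorTensorTensorComm_eq,
      TensorProduct.map_tmul, Bialgebra.comul_one, Algebra.TensorProduct.one_def]
    rw [← r.eq, TensorProduct.tmul_sum]
    simp only [map_sum, TensorProduct.map_tmul, LinearEquiv.coe_coe,
      TensorProduct.tensorTensorTensorComm_tmul, TensorProduct.mk_apply]

@[simp] lemma inclL_apply (x : H) : (inclL : H →ₗc[K] H ⊗[K] H) x = x ⊗ₜ[K] 1 := rfl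
@[simp] lemma inclR_apply (x : H) : (inclR : H →ₗc[K] H ⊗[K] H) x = 1 ⊗ₜ[K] x := rfl

lemma prL_comp_inclL :
    ((prL : H ⊗[K] H →ₗc[K] H) : H ⊗[K] H →ₗ[K] H) ∘ₗ
      ((inclL : H →ₗc[K] H ⊗[K] H) : H →ₗ[K] H ⊗[K] H) = LinearMap.id := by
  ext x; simp

lemma prR_comp_inclL :
    ((prR : H ⊗[K] H →ₗc[K] H) : H ⊗[K] H →ₗ[K] H) ∘ₗ
      ((inclL : H →ₗc[K] H ⊗[K] H) : H →ₗ[K] H ⊗[K] H) = cu := by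
  ext x; simp [cu_apply, Algebra.algebraMap_eq_smul_one]

lemma prL_comp_inclR :
    ((prL : H ⊗[K] H →ₗc[K] H) : H ⊗[K] H →ₗ[K] H) ∘ₗ
      ((inclR : H →ₗc[K] H ⊗[K] H) : H →ₗ[K] H ⊗[K] H) = cu := by
  ext x; simp [cu_apply, Algebra.algebraMap_eq_smul_one]

lemma prR_comp_inclR :
    ((prR : H ⊗[K] H →ₗc[K] H) : H ⊗[K] H →ₗ[K] H) ∘ₗ
      ((inclR : H →ₗc[K] H ⊗[K] H) : H →ₗ[K] H ⊗[K] H) = LinearMap.id := by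
  ext x; simp

/-- `cv (g ∘ q) (h ∘ p) (a ⊗ b) = g b * h a`. -/
lemma cv_qp (g h : H →ₗ[K] H) (a b : H) :
    cv (g ∘ₗ ((prR : H ⊗[K] H →ₗc[K] H) : H ⊗[K] H →ₗ[K] H))
       (h ∘ₗ ((prL : H ⊗[K] H →ₗc[K] H) : H ⊗[K] H →ₗ[K] H)) (a ⊗ₜ[K] b)
    = g b * h a := by
  set ra := Coalgebra.Repr.arbitrary K a
  set rb := Coalgebra.Repr.arbitrary K b
  rw [cv_tmul _ _ a b ra rb]
  have hterm : ∀ i j,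
      (g ∘ₗ ((prR : H ⊗[K] H →ₗc[K] H) : H ⊗[K] H →ₗ[K] H)) (ra.left i ⊗ₜ[K] rb.left j) *
      (h ∘ₗ ((prL : H ⊗[K] H →ₗc[K] H) : H ⊗[K] H →ₗ[K] H)) (ra.right i ⊗ₜ[K] rb.right j)
      = Coalgebra.counit (R := K) (ra.left i) • (Coalgebra.counit (R := K) (rb.right j) •
          (g (rb.left j) * h (ra.right i))) := by
    intro i j
    simp only [LinearMap.comp_apply, CoalgHom.coe_toLinearMap, prL_tmul, prR_tmul, map_smul]
    rw [smul_mul_assoc, mul_smul_comm, smul_comm]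
  simp_rw [hterm, ← Finset.smul_sum]
  have hj : ∀ i, ∑ j ∈ rb.index, Coalgebra.counit (R := K) (rb.right j) •
      (g (rb.left j) * h (ra.right i)) = g b * h (ra.right i) := fun i =>
    repr_counit_right b rb ((LinearMap.mulRight K (h (ra.right i))) ∘ₗ g)
  simp_rw [hj]
  exact repr_counit_left a ra ((LinearMap.mulLeft K (g b)) ∘ₗ h)

lemma cu_apply_smul (x : C) :
    (cu (K := K) (A := H)) x = Coalgebra.counit (R := K) x • (1 : H) := by
  rw [cu_apply, Algebra.algebraMap_eq_smul_one]

end Glue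

section Glue2

variable {H : Type u} [Ring H] [HopfAlgebra K H]

lemma cv_pq (f g : H →ₗ[K] H) (a b : H) :
    cv (f ∘ₗ ((prL : H ⊗[K] H →ₗc[K] H) : H ⊗[K] H →ₗ[K] H))
       (g ∘ₗ ((prR : H ⊗[K] H →ₗc[K] H) : H ⊗[K] H →ₗ[K] H)) (a ⊗ₜ[K] b)
    = f a * g b := by
  set ra := Coalgebra.Repr.arbitrary K a
  set rb := Coalgebra.Repr.arbitrary K b
  rw [cv_tmul _ _ a b ra rb]
  have hterm : ∀ i j,
      (f ∘ₗ ((prL : H ⊗[K] H →ₗc[K] H) : H ⊗[K] H →ₗ[K] H)) (ra.left i ⊗ₜ[K] rb.left j) *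
      (g ∘ₗ ((prR : H ⊗[K] H →ₗc[K] H) : H ⊗[K] H →ₗ[K] H)) (ra.right i ⊗ₜ[K] rb.right j)
      = Coalgebra.counit (R := K) (ra.right i) • (Coalgebra.counit (R := K) (rb.left j) •
          (f (ra.left i) * g (rb.right j))) := by
    intro i j
    simp only [LinearMap.comp_apply, CoalgHom.coe_toLinearMap, prL_tmul, prR_tmul, map_smul]
    rw [smul_mul_assoc, mul_smul_comm, smul_comm]
  simp_rw [hterm, ← Finset.smul_sum]
  have hj : ∀ i, ∑ j ∈ rb.index, Coalgebra.counit (R := K) (rb.left j) •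
      (f (ra.left i) * g (rb.right j)) = f (ra.left i) * g b := fun i =>
    repr_counit_left b rb ((LinearMap.mulLeft K (f (ra.left i))) ∘ₗ g)
  simp_rw [hj]
  exact repr_counit_right a ra ((LinearMap.mulRight K (g b)) ∘ₗ f)

end Glue2

end RBTools


variable {K H : Type u} [Field K] [CharZero K] [Ring H] [HopfAlgebra K H]


open RBTools Coalgebra HopfAlgebra in
lemma aS_eq : aS K H = (HopfAlgebra.antipode K) := rfl

open RBTools HopfAlgebra
open Coalgebra hiding IsCocomm

lemma conv_eq_cv {C : Type u} [AddCommGroup C] [Module K C] [Coalgebra K C]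
    (f g : C →ₗ[K] H) : conv f g = cv f g := rfl

/-- A Rota–Baxter operator as a coalgebra morphism. -/
def BCoalg (B : H →ₗ[K] H) (hB : IsRotaBaxter B) : H →ₗc[K] H where
  toLinearMap := B
  counit_comp := hB.2.1
  map_comp_comul := hB.1.symm

lemma BCoalg_coe (B : H →ₗ[K] H) (hB : IsRotaBaxter B) :
    ((BCoalg B hB) : H →ₗ[K] H) = B := rfl

lemma comul_B_one (B : H →ₗ[K] H) (hB : IsRotaBaxter B) :
    Coalgebra.comul (R := K) (B 1) = B 1 ⊗ₜ[K] B 1 := by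
  have h := congrFun (congrArg DFunLike.coe hB.1) (1 : H)
  simp only [LinearMap.comp_apply] at h
  rw [h, Bialgebra.comul_one, Algebra.TensorProduct.one_def, TensorProduct.map_tmul]

lemma counit_B_one (B : H →ₗ[K] H) (hB : IsRotaBaxter B) :
    Coalgebra.counit (R := K) (B (1 : H)) = 1 := by
  have h := congrFun (congrArg DFunLike.coe hB.2.1) (1 : H)
  simp only [LinearMap.comp_apply] at h
  rw [h, Bialgebra.counit_one]

lemma mulB_one_one (B : H →ₗ[K] H) :
    mulB B ((1 : H) ⊗ₜ[K] (1 : H)) = B 1 * HopfAlgebra.antipode (R := K) (B 1) := by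
  simp [mulB, wrap, conv, aS, Bialgebra.comul_one, Algebra.TensorProduct.one_def]

lemma B_one (B : H →ₗ[K] H) (hB : IsRotaBaxter B) : B (1 : H) = 1 := by
  have hmul : B (1 : H) * HopfAlgebra.antipode (R := K) (B 1) = 1 := by
    have h := HopfAlgebra.mul_antipode_lTensor_comul_apply (R := K) (B (1 : H))
    rw [comul_B_one B hB] at h
    simpa [counit_B_one B hB] using h
  have hmul' : HopfAlgebra.antipode (R := K) (B (1 : H)) * B 1 = 1 := by
    have h := HopfAlgebra.mul_antipode_rTensor_comul_apply (R := K) (B (1 : H))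
    rw [comul_B_one B hB] at h
    simpa [counit_B_one B hB] using h
  have h4 : B (1 : H) * B 1 = B 1 := by
    have h := hB.2.2 1 1
    rw [mulB_one_one B, hmul] at h
    exact h
  calc B (1 : H) = 1 * B 1 := (one_mul _).symm
    _ = (HopfAlgebra.antipode (R := K) (B (1 : H)) * B 1) * B 1 := by rw [hmul']
    _ = HopfAlgebra.antipode (R := K) (B (1 : H)) * (B 1 * B 1) := mul_assoc _ _ _
    _ = HopfAlgebra.antipode (R := K) (B (1 : H)) * B 1 := by rw [h4]
    _ = 1 := hmul'

lemma B_cu {C : Type u} [AddCommGroup C] [Module K C] [Coalgebra K C]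
    (B : H →ₗ[K] H) (hB : IsRotaBaxter B) :
    B ∘ₗ (cu (K := K) (A := H) (C := C)) = cu := by
  ext x
  simp only [LinearMap.comp_apply, cu_apply_smul, map_smul, B_one B hB]

lemma wrap_tmul (f g h : H →ₗ[K] H) (x y : H) :
    wrap f g h (x ⊗ₜ[K] y) = ∑ i ∈ (Coalgebra.Repr.arbitrary K x).index,
      f ((Coalgebra.Repr.arbitrary K x).left i) *
        (g y * h ((Coalgebra.Repr.arbitrary K x).right i)) := by
  simp only [wrap, LinearMap.comp_apply, TensorProduct.map_tmul, LinearMap.id_coe, id_eq]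
  rw [← (Coalgebra.Repr.arbitrary K x).eq, TensorProduct.sum_tmul]
  simp only [map_sum, LinearEquiv.coe_coe, TensorProduct.assoc_tmul, TensorProduct.map_tmul,
    TensorProduct.comm_tmul, LinearMap.mul'_apply, LinearMap.comp_apply]

lemma wrap_eq (f g h : H →ₗ[K] H) :
    wrap f g h = cv (f ∘ₗ ((prL : H ⊗[K] H →ₗc[K] H) : H ⊗[K] H →ₗ[K] H))
      (cv (g ∘ₗ ((prR : H ⊗[K] H →ₗc[K] H) : H ⊗[K] H →ₗ[K] H))
          (h ∘ₗ ((prL : H ⊗[K] H →ₗc[K] H) : H ⊗[K] H →ₗ[K] H))) := by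
  refine TensorProduct.ext' fun x y => ?_
  rw [wrap_tmul]
  set rx := Coalgebra.Repr.arbitrary K x
  set ry := Coalgebra.Repr.arbitrary K y
  rw [cv_tmul _ _ x y rx ry]
  have hterm : ∀ i j,
      (f ∘ₗ ((prL : H ⊗[K] H →ₗc[K] H) : H ⊗[K] H →ₗ[K] H)) (rx.left i ⊗ₜ[K] ry.left j) *
      (cv (g ∘ₗ ((prR : H ⊗[K] H →ₗc[K] H) : H ⊗[K] H →ₗ[K] H))
          (h ∘ₗ ((prL : H ⊗[K] H →ₗc[K] H) : H ⊗[K] H →ₗ[K] H)))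
        (rx.right i ⊗ₜ[K] ry.right j)
      = Coalgebra.counit (R := K) (ry.left j) •
          (f (rx.left i) * (g (ry.right j) * h (rx.right i))) := by
    intro i j
    rw [cv_qp g h (rx.right i) (ry.right j)]
    simp only [LinearMap.comp_apply, CoalgHom.coe_toLinearMap, prL_tmul, map_smul]
    rw [smul_mul_assoc]
  simp_rw [hterm]
  refine (Finset.sum_congr rfl fun i _ => ?_).symm
  exact repr_counit_left y ry
    ((LinearMap.mulLeft K (f (rx.left i))) ∘ₗ (LinearMap.mulRight K (h (rx.right i))) ∘ₗ g)

lemma mulB_eq (B : H →ₗ[K] H) :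
    mulB B = cv (B ∘ₗ ((prL : H ⊗[K] H →ₗc[K] H) : H ⊗[K] H →ₗ[K] H))
      (cv ((prR : H ⊗[K] H →ₗc[K] H) : H ⊗[K] H →ₗ[K] H)
          (cv (((HopfAlgebra.antipode K) ∘ₗ B) ∘ₗ
                ((prL : H ⊗[K] H →ₗc[K] H) : H ⊗[K] H →ₗ[K] H))
              ((prL : H ⊗[K] H →ₗc[K] H) : H ⊗[K] H →ₗ[K] H))) := by
  rw [mulB, wrap_eq, LinearMap.id_comp]
  congr 1
  congr 1
  rw [conv_eq_cv, aS_eq, cv_comp _ _ (prL : H ⊗[K] H →ₗc[K] H), LinearMap.id_comp]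


lemma hcc_cocomm (hcc : IsCocomm K H) : Cocomm K H := hcc

/-- `mulB` as a coalgebra morphism. -/
def mulBCoalgHom (B : H →ₗ[K] H) (hcc : IsCocomm K H) (hB : IsRotaBaxter B) :
    (H ⊗[K] H) →ₗc[K] H :=
  cvCoalgHom (cocomm_tensor (hcc_cocomm hcc) (hcc_cocomm hcc))
    ((BCoalg B hB).comp (prL : H ⊗[K] H →ₗc[K] H))
    (cvCoalgHom (cocomm_tensor (hcc_cocomm hcc) (hcc_cocomm hcc)) (prR : H ⊗[K] H →ₗc[K] H)
      (cvCoalgHom (cocomm_tensor (hcc_cocomm hcc) (hcc_cocomm hcc))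
        (((antipodeCoalgHom (hcc_cocomm hcc)).comp (BCoalg B hB)).comp
          (prL : H ⊗[K] H →ₗc[K] H))
        (prL : H ⊗[K] H →ₗc[K] H)))

lemma mulBCoalgHom_coe (B : H →ₗ[K] H) (hcc : IsCocomm K H) (hB : IsRotaBaxter B) :
    ((mulBCoalgHom B hcc hB) : H ⊗[K] H →ₗ[K] H) = mulB B := by
  rw [mulB_eq]; rfl

/-- `SB` as a coalgebra morphism. -/
def SBCoalgHom (B : H →ₗ[K] H) (hcc : IsCocomm K H) (hB : IsRotaBaxter B) :
    H →ₗc[K] H :=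
  cvCoalgHom (hcc_cocomm hcc)
    ((antipodeCoalgHom (hcc_cocomm hcc)).comp (BCoalg B hB))
    (cvCoalgHom (hcc_cocomm hcc) (antipodeCoalgHom (hcc_cocomm hcc)) (BCoalg B hB))

lemma SB_eq (B : H →ₗ[K] H) :
    SB B = cv ((HopfAlgebra.antipode K) ∘ₗ B) (cv (HopfAlgebra.antipode K) B) := rfl

lemma SBCoalgHom_coe (B : H →ₗ[K] H) (hcc : IsCocomm K H) (hB : IsRotaBaxter B) :
    ((SBCoalgHom B hcc hB) : H →ₗ[K] H) = SB B := rfl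

lemma rbB_map (B : H →ₗ[K] H) (hB : IsRotaBaxter B) :
    B ∘ₗ mulB B = cv (B ∘ₗ ((prL : H ⊗[K] H →ₗc[K] H) : H ⊗[K] H →ₗ[K] H))
      (B ∘ₗ ((prR : H ⊗[K] H →ₗc[K] H) : H ⊗[K] H →ₗ[K] H)) := by
  refine TensorProduct.ext' fun x y => ?_
  rw [LinearMap.comp_apply, ← hB.2.2 x y, cv_pq]

lemma cvB_SB (B : H →ₗ[K] H) (hB : IsRotaBaxter B) :
    cv B ((HopfAlgebra.antipode K) ∘ₗ B) = cu := by
  have h := cv_antipode_right (BCoalg B hB)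
  rwa [BCoalg_coe] at h

lemma cvSB_B (B : H →ₗ[K] H) (hB : IsRotaBaxter B) :
    cv ((HopfAlgebra.antipode K) ∘ₗ B) B = cu := by
  have h := cv_antipode_left (BCoalg B hB)
  rwa [BCoalg_coe] at h

-- Part (ii)
lemma mulB_comp_inclR (B : H →ₗ[K] H) (hB : IsRotaBaxter B) :
    mulB B ∘ₗ ((inclR : H →ₗc[K] H ⊗[K] H) : H →ₗ[K] H ⊗[K] H) = LinearMap.id := by
  rw [mulB_eq, cv_comp _ _ (inclR : H →ₗc[K] H ⊗[K] H),
    cv_comp _ _ (inclR : H →ₗc[K] H ⊗[K] H), cv_comp _ _ (inclR : H →ₗc[K] H ⊗[K] H)]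
  have h1 : (B ∘ₗ ((prL : H ⊗[K] H →ₗc[K] H) : H ⊗[K] H →ₗ[K] H)) ∘ₗ
      ((inclR : H →ₗc[K] H ⊗[K] H) : H →ₗ[K] H ⊗[K] H) = cu := by
    rw [LinearMap.comp_assoc, prL_comp_inclR, B_cu B hB]
  have h3 : (((HopfAlgebra.antipode K) ∘ₗ B) ∘ₗ
        ((prL : H ⊗[K] H →ₗc[K] H) : H ⊗[K] H →ₗ[K] H)) ∘ₗ
      ((inclR : H →ₗc[K] H ⊗[K] H) : H →ₗ[K] H ⊗[K] H) = cu := by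
    rw [LinearMap.comp_assoc, prL_comp_inclR, LinearMap.comp_assoc, B_cu B hB, antipode_cu]
  rw [h1, h3, prR_comp_inclR, prL_comp_inclR, cv_cu_left, cv_cu_left, cv_cu_right]

lemma mulB_comp_inclL (B : H →ₗ[K] H) (hB : IsRotaBaxter B) :
    mulB B ∘ₗ ((inclL : H →ₗc[K] H ⊗[K] H) : H →ₗ[K] H ⊗[K] H) = LinearMap.id := by
  rw [mulB_eq, cv_comp _ _ (inclL : H →ₗc[K] H ⊗[K] H),
    cv_comp _ _ (inclL : H →ₗc[K] H ⊗[K] H), cv_comp _ _ (inclL : H →ₗc[K] H ⊗[K] H)]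
  have h1 : (B ∘ₗ ((prL : H ⊗[K] H →ₗc[K] H) : H ⊗[K] H →ₗ[K] H)) ∘ₗ
      ((inclL : H →ₗc[K] H ⊗[K] H) : H →ₗ[K] H ⊗[K] H) = B := by
    rw [LinearMap.comp_assoc, prL_comp_inclL, LinearMap.comp_id]
  have h3 : (((HopfAlgebra.antipode K) ∘ₗ B) ∘ₗ
        ((prL : H ⊗[K] H →ₗc[K] H) : H ⊗[K] H →ₗ[K] H)) ∘ₗ
      ((inclL : H →ₗc[K] H ⊗[K] H) : H →ₗ[K] H ⊗[K] H) = (HopfAlgebra.antipode K) ∘ₗ B := by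
    rw [LinearMap.comp_assoc, prL_comp_inclL, LinearMap.comp_id]
  rw [h1, h3, prR_comp_inclL, prL_comp_inclL, cv_cu_left, ← cv_assoc, cvB_SB B hB, cv_cu_left]

lemma part_ii (B : H →ₗ[K] H) (hB : IsRotaBaxter B) (x : H) :
    mulB B ((1 : H) ⊗ₜ[K] x) = x ∧ mulB B (x ⊗ₜ[K] (1 : H)) = x := by
  constructor
  · have h := congrFun (congrArg DFunLike.coe (mulB_comp_inclR B hB)) x
    simpa using h
  · have h := congrFun (congrArg DFunLike.coe (mulB_comp_inclL B hB)) x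
    simpa using h

-- Part (iii)
lemma part_iii (B : H →ₗ[K] H) (hcc : IsCocomm K H) (hB : IsRotaBaxter B) (x y : H) :
    Coalgebra.comul (R := K) (mulB B (x ⊗ₜ[K] y)) =
      TensorProduct.map (mulB B) (mulB B)
        (TensorProduct.tensorTensorTensorComm K H H H H
          (Coalgebra.comul (R := K) x ⊗ₜ[K] Coalgebra.comul (R := K) y)) ∧
    Coalgebra.counit (R := K) (mulB B (x ⊗ₜ[K] y)) =
      Coalgebra.counit (R := K) x * Coalgebra.counit (R := K) y := by
  constructor
  · have h := (mulBCoalgHom B hcc hB).map_comp_comul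
    simp only [CoalgHom.toLinearMap_eq_coe, mulBCoalgHom_coe B hcc hB] at h
    have h2 := congrFun (congrArg DFunLike.coe h) (x ⊗ₜ[K] y)
    simp only [LinearMap.comp_apply] at h2
    rw [← h2]
    simp only [TensorProduct.comul_tmul, TensorProduct.AlgebraTensorModule.tensorTensorTensorComm_eq,
      LinearMap.comp_apply,
      TensorProduct.map_tmul, LinearEquiv.coe_coe]
  · have h := (mulBCoalgHom B hcc hB).counit_comp
    simp only [CoalgHom.toLinearMap_eq_coe, mulBCoalgHom_coe B hcc hB] at h
    have h2 := congrFun (congrArg DFunLike.coe h) (x ⊗ₜ[K] y)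
    simp only [LinearMap.comp_apply] at h2
    rw [h2]
    simp [TensorProduct.counit_tmul, mul_comm]


-- Part (iv)
/-- `x ↦ x₁ ⊗ S_B(x₂)` as a coalgebra morphism. -/
def thetaR (B : H →ₗ[K] H) (hcc : IsCocomm K H) (hB : IsRotaBaxter B) :
    H →ₗc[K] H ⊗[K] H :=
  (Coalgebra.TensorProduct.map (CoalgHom.id K H) (SBCoalgHom B hcc hB)).comp
    (comulCoalgHom (hcc_cocomm hcc))

/-- `x ↦ S_B(x₁) ⊗ x₂` as a coalgebra morphism. -/
def thetaL (B : H →ₗ[K] H) (hcc : IsCocomm K H) (hB : IsRotaBaxter B) :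
    H →ₗc[K] H ⊗[K] H :=
  (Coalgebra.TensorProduct.map (SBCoalgHom B hcc hB) (CoalgHom.id K H)).comp
    (comulCoalgHom (hcc_cocomm hcc))

lemma thetaR_coe (B : H →ₗ[K] H) (hcc : IsCocomm K H) (hB : IsRotaBaxter B) :
    ((thetaR B hcc hB) : H →ₗ[K] H ⊗[K] H)
      = TensorProduct.map LinearMap.id (SB B) ∘ₗ Coalgebra.comul := rfl

lemma thetaL_coe (B : H →ₗ[K] H) (hcc : IsCocomm K H) (hB : IsRotaBaxter B) :
    ((thetaL B hcc hB) : H →ₗ[K] H ⊗[K] H)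
      = TensorProduct.map (SB B) LinearMap.id ∘ₗ Coalgebra.comul := rfl

lemma prL_thetaR (B : H →ₗ[K] H) (hcc : IsCocomm K H) (hB : IsRotaBaxter B) :
    ((prL : H ⊗[K] H →ₗc[K] H) : H ⊗[K] H →ₗ[K] H) ∘ₗ
      ((thetaR B hcc hB) : H →ₗ[K] H ⊗[K] H) = LinearMap.id := by
  rw [thetaR_coe, ← SBCoalgHom_coe B hcc hB, ← LinearMap.comp_assoc,
    prL_map LinearMap.id (SBCoalgHom B hcc hB), LinearMap.comp_assoc,
    LinearMap.id_comp, prL_comp_comul]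

lemma prR_thetaR (B : H →ₗ[K] H) (hcc : IsCocomm K H) (hB : IsRotaBaxter B) :
    ((prR : H ⊗[K] H →ₗc[K] H) : H ⊗[K] H →ₗ[K] H) ∘ₗ
      ((thetaR B hcc hB) : H →ₗ[K] H ⊗[K] H) = SB B := by
  have hid : (LinearMap.id : H →ₗ[K] H) = ((CoalgHom.id K H : H →ₗc[K] H) : H →ₗ[K] H) := rfl
  rw [thetaR_coe, hid, ← LinearMap.comp_assoc, prR_map (CoalgHom.id K H) (SB B),
    LinearMap.comp_assoc, prR_comp_comul, LinearMap.comp_id]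

lemma prL_thetaL (B : H →ₗ[K] H) (hcc : IsCocomm K H) (hB : IsRotaBaxter B) :
    ((prL : H ⊗[K] H →ₗc[K] H) : H ⊗[K] H →ₗ[K] H) ∘ₗ
      ((thetaL B hcc hB) : H →ₗ[K] H ⊗[K] H) = SB B := by
  have hid : (LinearMap.id : H →ₗ[K] H) = ((CoalgHom.id K H : H →ₗc[K] H) : H →ₗ[K] H) := rfl
  rw [thetaL_coe, hid, ← LinearMap.comp_assoc, prL_map (SB B) (CoalgHom.id K H),
    LinearMap.comp_assoc, prL_comp_comul, LinearMap.comp_id]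

lemma prR_thetaL (B : H →ₗ[K] H) (hcc : IsCocomm K H) (hB : IsRotaBaxter B) :
    ((prR : H ⊗[K] H →ₗc[K] H) : H ⊗[K] H →ₗ[K] H) ∘ₗ
      ((thetaL B hcc hB) : H →ₗ[K] H ⊗[K] H) = LinearMap.id := by
  rw [thetaL_coe, ← SBCoalgHom_coe B hcc hB, ← LinearMap.comp_assoc,
    prR_map (SBCoalgHom B hcc hB) LinearMap.id, LinearMap.comp_assoc,
    LinearMap.id_comp, prR_comp_comul]

lemma mulB_thetaR (B : H →ₗ[K] H) (hcc : IsCocomm K H) (hB : IsRotaBaxter B) :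
    mulB B ∘ₗ ((thetaR B hcc hB) : H →ₗ[K] H ⊗[K] H) = cu := by
  rw [mulB_eq, cv_comp _ _ (thetaR B hcc hB), cv_comp _ _ (thetaR B hcc hB),
    cv_comp _ _ (thetaR B hcc hB), LinearMap.comp_assoc, LinearMap.comp_assoc,
    LinearMap.comp_assoc, prL_thetaR B hcc hB, prR_thetaR B hcc hB,
    LinearMap.comp_id]
  -- now: cv B (cv (SB B) (cv (S∘B) id)) = cu
  rw [SB_eq, cv_assoc, cv_assoc]
  rw [← cv_assoc B ((HopfAlgebra.antipode K) ∘ₗ B) _, cvB_SB B hB, cv_cu_left,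
    ← cv_assoc B ((HopfAlgebra.antipode K) ∘ₗ B) _, cvB_SB B hB, cv_cu_left, cv_antipode_id]

lemma part_iv_right (B : H →ₗ[K] H) (hcc : IsCocomm K H) (hB : IsRotaBaxter B) (x : H) :
    mulB B (TensorProduct.map LinearMap.id (SB B) (Coalgebra.comul (R := K) x)) =
      Coalgebra.counit (R := K) x • (1 : H) := by
  have h := congrFun (congrArg DFunLike.coe (mulB_thetaR B hcc hB)) x
  rw [thetaR_coe] at h
  simpa [cu_apply_smul] using h

lemma B_SB (B : H →ₗ[K] H) (hcc : IsCocomm K H) (hB : IsRotaBaxter B) :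
    B ∘ₗ SB B = (HopfAlgebra.antipode K) ∘ₗ B := by
  have h1 : cv B (B ∘ₗ SB B) = cu := by
    have hc : (B ∘ₗ mulB B) ∘ₗ ((thetaR B hcc hB) : H →ₗ[K] H ⊗[K] H)
        = cv B (B ∘ₗ SB B) := by
      rw [rbB_map B hB, cv_comp _ _ (thetaR B hcc hB), LinearMap.comp_assoc,
        LinearMap.comp_assoc, prL_thetaR B hcc hB, prR_thetaR B hcc hB,
        LinearMap.comp_id]
    rw [← hc, LinearMap.comp_assoc, mulB_thetaR B hcc hB, B_cu B hB]
  calc B ∘ₗ SB B = cv cu (B ∘ₗ SB B) := (cv_cu_left _).symm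
    _ = cv (cv ((HopfAlgebra.antipode K) ∘ₗ B) B) (B ∘ₗ SB B) := by rw [cvSB_B B hB]
    _ = cv ((HopfAlgebra.antipode K) ∘ₗ B) (cv B (B ∘ₗ SB B)) := cv_assoc _ _ _
    _ = cv ((HopfAlgebra.antipode K) ∘ₗ B) cu := by rw [h1]
    _ = (HopfAlgebra.antipode K) ∘ₗ B := cv_cu_right _

lemma mulB_thetaL (B : H →ₗ[K] H) (hcc : IsCocomm K H) (hB : IsRotaBaxter B) :
    mulB B ∘ₗ ((thetaL B hcc hB) : H →ₗ[K] H ⊗[K] H) = cu := by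
  rw [mulB_eq, cv_comp _ _ (thetaL B hcc hB), cv_comp _ _ (thetaL B hcc hB),
    cv_comp _ _ (thetaL B hcc hB), LinearMap.comp_assoc, LinearMap.comp_assoc,
    LinearMap.comp_assoc, prL_thetaL B hcc hB, prR_thetaL B hcc hB]
  -- now: cv (B ∘ SB) (cv id (cv (S ∘ (B ∘ SB)) (SB B))) = cu
  have hBSB : B ∘ₗ SB B = (HopfAlgebra.antipode K) ∘ₗ B := B_SB B hcc hB
  rw [hBSB, ← LinearMap.comp_assoc B (HopfAlgebra.antipode K) (HopfAlgebra.antipode K),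
    antipode_antipode (hcc_cocomm hcc), LinearMap.id_comp, SB_eq]
  -- cv (S∘B) (cv id (cv B (cv (S∘B) (cv S B)))) = cu
  rw [← cv_assoc B ((HopfAlgebra.antipode K) ∘ₗ B) _, cvB_SB B hB, cv_cu_left,
    ← cv_assoc (LinearMap.id : H →ₗ[K] H) (HopfAlgebra.antipode K) _, cv_id_antipode, cv_cu_left,
    cvSB_B B hB]

lemma part_iv_left (B : H →ₗ[K] H) (hcc : IsCocomm K H) (hB : IsRotaBaxter B) (x : H) :
    mulB B (TensorProduct.map (SB B) LinearMap.id (Coalgebra.comul (R := K) x)) =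
      Coalgebra.counit (R := K) x • (1 : H) := by
  have h := congrFun (congrArg DFunLike.coe (mulB_thetaL B hcc hB)) x
  rw [thetaL_coe] at h
  simpa [cu_apply_smul] using h


-- Part (i): associativity
/-- `mulB ⊗ id` as a coalgebra morphism. -/
def PhiC (B : H →ₗ[K] H) (hcc : IsCocomm K H) (hB : IsRotaBaxter B) :
    (H ⊗[K] H) ⊗[K] H →ₗc[K] H ⊗[K] H :=
  Coalgebra.TensorProduct.map (mulBCoalgHom B hcc hB) (CoalgHom.id K H)

/-- `id ⊗ mulB` as a coalgebra morphism. -/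
def PsiC (B : H →ₗ[K] H) (hcc : IsCocomm K H) (hB : IsRotaBaxter B) :
    H ⊗[K] (H ⊗[K] H) →ₗc[K] H ⊗[K] H :=
  Coalgebra.TensorProduct.map (CoalgHom.id K H) (mulBCoalgHom B hcc hB)

/-- The associator as a coalgebra morphism. -/
def alC : (H ⊗[K] H) ⊗[K] H →ₗc[K] H ⊗[K] (H ⊗[K] H) :=
  (Coalgebra.TensorProduct.assoc K K H H H).toCoalgHom

lemma mulBCoalgHom_apply (B : H →ₗ[K] H) (hcc : IsCocomm K H) (hB : IsRotaBaxter B)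
    (w : H ⊗[K] H) : (mulBCoalgHom B hcc hB) w = mulB B w := by
  have := congrFun (congrArg DFunLike.coe (mulBCoalgHom_coe B hcc hB)) w
  simpa using this

lemma counit_mulB (B : H →ₗ[K] H) (hcc : IsCocomm K H) (hB : IsRotaBaxter B)
    (w : H ⊗[K] H) :
    Coalgebra.counit (R := K) (mulB B w) = Coalgebra.counit (R := K) w := by
  rw [← mulBCoalgHom_apply B hcc hB]
  exact CoalgHomClass.counit_comp_apply (mulBCoalgHom B hcc hB) w

-- component lemmas
lemma pp_Phi (B : H →ₗ[K] H) (hcc : IsCocomm K H) (hB : IsRotaBaxter B) :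
    ((prL : H ⊗[K] H →ₗc[K] H) : H ⊗[K] H →ₗ[K] H) ∘ₗ
        ((PhiC B hcc hB) : (H ⊗[K] H) ⊗[K] H →ₗ[K] H ⊗[K] H)
      = mulB B ∘ₗ ((prL : (H ⊗[K] H) ⊗[K] H →ₗc[K] H ⊗[K] H) :
          (H ⊗[K] H) ⊗[K] H →ₗ[K] H ⊗[K] H) := by
  refine TensorProduct.ext_threefold fun x y z => ?_
  simp [PhiC, mulBCoalgHom_apply B hcc hB]

lemma qq_Phi (B : H →ₗ[K] H) (hcc : IsCocomm K H) (hB : IsRotaBaxter B) :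
    ((prR : H ⊗[K] H →ₗc[K] H) : H ⊗[K] H →ₗ[K] H) ∘ₗ
        ((PhiC B hcc hB) : (H ⊗[K] H) ⊗[K] H →ₗ[K] H ⊗[K] H)
      = ((prR : (H ⊗[K] H) ⊗[K] H →ₗc[K] H) : (H ⊗[K] H) ⊗[K] H →ₗ[K] H) := by
  refine TensorProduct.ext_threefold fun x y z => ?_
  simp [PhiC, mulBCoalgHom_apply B hcc hB, counit_mulB B hcc hB,
    TensorProduct.counit_tmul]

lemma pp_Psi (B : H →ₗ[K] H) (hcc : IsCocomm K H) (hB : IsRotaBaxter B) :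
    ((prL : H ⊗[K] H →ₗc[K] H) : H ⊗[K] H →ₗ[K] H) ∘ₗ
        ((PsiC B hcc hB) : H ⊗[K] (H ⊗[K] H) →ₗ[K] H ⊗[K] H)
      = ((prL : H ⊗[K] (H ⊗[K] H) →ₗc[K] H) : H ⊗[K] (H ⊗[K] H) →ₗ[K] H) := by
  refine TensorProduct.ext' fun x w => ?_
  induction w with
  | zero => simp
  | tmul y z =>
    simp [PsiC, mulBCoalgHom_apply B hcc hB, counit_mulB B hcc hB,
      TensorProduct.counit_tmul]
  | add u v hu hv => simp only [TensorProduct.tmul_add, map_add, hu, hv]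

lemma qq_Psi (B : H →ₗ[K] H) (hcc : IsCocomm K H) (hB : IsRotaBaxter B) :
    ((prR : H ⊗[K] H →ₗc[K] H) : H ⊗[K] H →ₗ[K] H) ∘ₗ
        ((PsiC B hcc hB) : H ⊗[K] (H ⊗[K] H) →ₗ[K] H ⊗[K] H)
      = mulB B ∘ₗ ((prR : H ⊗[K] (H ⊗[K] H) →ₗc[K] H ⊗[K] H) :
          H ⊗[K] (H ⊗[K] H) →ₗ[K] H ⊗[K] H) := by
  refine TensorProduct.ext' fun x w => ?_
  induction w with
  | zero => simp
  | tmul y z => simp [PsiC, mulBCoalgHom_apply B hcc hB]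
  | add u v hu hv => simp only [TensorProduct.tmul_add, map_add, hu, hv]

-- transported legs
lemma leg1_al :
    (prL : H ⊗[K] (H ⊗[K] H) →ₗc[K] H).comp (alC (K := K) (H := H))
      = (prL : H ⊗[K] H →ₗc[K] H).comp (prL : (H ⊗[K] H) ⊗[K] H →ₗc[K] H ⊗[K] H) := by
  apply CoalgHom.ext
  intro w
  have : ∀ w₀ : (H ⊗[K] H) ⊗[K] H,
      ((prL : H ⊗[K] (H ⊗[K] H) →ₗc[K] H).comp (alC (K := K) (H := H)) :
        (H ⊗[K] H) ⊗[K] H →ₗ[K] H) w₀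
      = ((prL : H ⊗[K] H →ₗc[K] H).comp (prL : (H ⊗[K] H) ⊗[K] H →ₗc[K] H ⊗[K] H) :
        (H ⊗[K] H) ⊗[K] H →ₗ[K] H) w₀ := by
    intro w₀
    have h : ((prL : H ⊗[K] (H ⊗[K] H) →ₗc[K] H).comp (alC (K := K) (H := H)) :
        (H ⊗[K] H) ⊗[K] H →ₗ[K] H)
        = ((prL : H ⊗[K] H →ₗc[K] H).comp (prL : (H ⊗[K] H) ⊗[K] H →ₗc[K] H ⊗[K] H) :
        (H ⊗[K] H) ⊗[K] H →ₗ[K] H) := by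
      refine TensorProduct.ext_threefold fun x y z => ?_
      simp [alC, TensorProduct.counit_tmul, mul_comm, smul_smul]
    exact congrFun (congrArg DFunLike.coe h) w₀
  exact this w

lemma leg2_al :
    ((prL : H ⊗[K] H →ₗc[K] H).comp
        (prR : H ⊗[K] (H ⊗[K] H) →ₗc[K] H ⊗[K] H)).comp (alC (K := K) (H := H))
      = (prR : H ⊗[K] H →ₗc[K] H).comp (prL : (H ⊗[K] H) ⊗[K] H →ₗc[K] H ⊗[K] H) := by
  apply CoalgHom.ext
  intro w
  have h : (((prL : H ⊗[K] H →ₗc[K] H).comp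
        (prR : H ⊗[K] (H ⊗[K] H) →ₗc[K] H ⊗[K] H)).comp (alC (K := K) (H := H)) :
        (H ⊗[K] H) ⊗[K] H →ₗ[K] H)
      = ((prR : H ⊗[K] H →ₗc[K] H).comp (prL : (H ⊗[K] H) ⊗[K] H →ₗc[K] H ⊗[K] H) :
        (H ⊗[K] H) ⊗[K] H →ₗ[K] H) := by
    refine TensorProduct.ext_threefold fun x y z => ?_
    simp [alC, TensorProduct.counit_tmul, mul_comm, smul_smul]
  exact congrFun (congrArg DFunLike.coe h) w

lemma leg3_al :
    ((prR : H ⊗[K] H →ₗc[K] H).comp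
        (prR : H ⊗[K] (H ⊗[K] H) →ₗc[K] H ⊗[K] H)).comp (alC (K := K) (H := H))
      = (prR : (H ⊗[K] H) ⊗[K] H →ₗc[K] H) := by
  apply CoalgHom.ext
  intro w
  have h : (((prR : H ⊗[K] H →ₗc[K] H).comp
        (prR : H ⊗[K] (H ⊗[K] H) →ₗc[K] H ⊗[K] H)).comp (alC (K := K) (H := H)) :
        (H ⊗[K] H) ⊗[K] H →ₗ[K] H)
      = ((prR : (H ⊗[K] H) ⊗[K] H →ₗc[K] H) : (H ⊗[K] H) ⊗[K] H →ₗ[K] H) := by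
    refine TensorProduct.ext_threefold fun x y z => ?_
    simp [alC, TensorProduct.counit_tmul, mul_comm, smul_smul]
  exact congrFun (congrArg DFunLike.coe h) w

/-- The common 7-letter convolution word. -/
def word {D : Type u} [AddCommGroup D] [Module K D] [Coalgebra K D]
    (B : H →ₗ[K] H) (R1 R2 : D →ₗc[K] H) (R3 : D →ₗc[K] H) : D →ₗ[K] H :=
  cv (B ∘ₗ (R1 : D →ₗ[K] H))
    (cv (B ∘ₗ (R2 : D →ₗ[K] H))
      (cv (R3 : D →ₗ[K] H)
        (cv ((HopfAlgebra.antipode K) ∘ₗ (B ∘ₗ (R2 : D →ₗ[K] H)))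
          (cv (R2 : D →ₗ[K] H)
            (cv ((HopfAlgebra.antipode K) ∘ₗ (B ∘ₗ (R1 : D →ₗ[K] H)))
              (R1 : D →ₗ[K] H))))))

lemma coalg_comp_coe {D D' : Type u} [AddCommGroup D] [Module K D] [Coalgebra K D]
    [AddCommGroup D'] [Module K D'] [Coalgebra K D']
    (f : D' →ₗc[K] H) (g : D →ₗc[K] D') :
    ((f.comp g : D →ₗc[K] H) : D →ₗ[K] H) = (f : D' →ₗ[K] H) ∘ₗ (g : D →ₗ[K] D') := rfl

lemma word_comp {D D' : Type u} [AddCommGroup D] [Module K D] [Coalgebra K D]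
    [AddCommGroup D'] [Module K D'] [Coalgebra K D']
    (B : H →ₗ[K] H) (R1 R2 R3 : D' →ₗc[K] H) (φ : D →ₗc[K] D') :
    word B R1 R2 R3 ∘ₗ (φ : D →ₗ[K] D')
      = word B (R1.comp φ) (R2.comp φ) (R3.comp φ) := by
  unfold word
  rw [cv_comp _ _ φ, cv_comp _ _ φ, cv_comp _ _ φ, cv_comp _ _ φ, cv_comp _ _ φ,
    cv_comp _ _ φ]
  simp only [LinearMap.comp_assoc, coalg_comp_coe]


lemma mulB_Psi (B : H →ₗ[K] H) (hcc : IsCocomm K H) (hB : IsRotaBaxter B) :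
    mulB B ∘ₗ ((PsiC B hcc hB) : H ⊗[K] (H ⊗[K] H) →ₗ[K] H ⊗[K] H)
      = word B (prL : H ⊗[K] (H ⊗[K] H) →ₗc[K] H)
          ((prL : H ⊗[K] H →ₗc[K] H).comp (prR : H ⊗[K] (H ⊗[K] H) →ₗc[K] H ⊗[K] H))
          ((prR : H ⊗[K] H →ₗc[K] H).comp (prR : H ⊗[K] (H ⊗[K] H) →ₗc[K] H ⊗[K] H)) := by
  rw [mulB_eq, cv_comp _ _ (PsiC B hcc hB), cv_comp _ _ (PsiC B hcc hB),
    cv_comp _ _ (PsiC B hcc hB)]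
  simp only [LinearMap.comp_assoc]
  rw [pp_Psi B hcc hB, qq_Psi B hcc hB]
  rw [mulB_eq, cv_comp _ _ (prR : H ⊗[K] (H ⊗[K] H) →ₗc[K] H ⊗[K] H),
    cv_comp _ _ (prR : H ⊗[K] (H ⊗[K] H) →ₗc[K] H ⊗[K] H),
    cv_comp _ _ (prR : H ⊗[K] (H ⊗[K] H) →ₗc[K] H ⊗[K] H)]
  simp only [word, coalg_comp_coe, LinearMap.comp_assoc, cv_assoc]

lemma mulB_Phi (B : H →ₗ[K] H) (hcc : IsCocomm K H) (hB : IsRotaBaxter B) :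
    mulB B ∘ₗ ((PhiC B hcc hB) : (H ⊗[K] H) ⊗[K] H →ₗ[K] H ⊗[K] H)
      = word B ((prL : H ⊗[K] H →ₗc[K] H).comp (prL : (H ⊗[K] H) ⊗[K] H →ₗc[K] H ⊗[K] H))
          ((prR : H ⊗[K] H →ₗc[K] H).comp (prL : (H ⊗[K] H) ⊗[K] H →ₗc[K] H ⊗[K] H))
          (prR : (H ⊗[K] H) ⊗[K] H →ₗc[K] H) := by
  have hBmul : B ∘ₗ (mulB B ∘ₗ ((prL : (H ⊗[K] H) ⊗[K] H →ₗc[K] H ⊗[K] H) :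
        (H ⊗[K] H) ⊗[K] H →ₗ[K] H ⊗[K] H))
      = cv (B ∘ₗ (((prL : H ⊗[K] H →ₗc[K] H) : H ⊗[K] H →ₗ[K] H) ∘ₗ
            ((prL : (H ⊗[K] H) ⊗[K] H →ₗc[K] H ⊗[K] H) : _ →ₗ[K] _)))
          (B ∘ₗ (((prR : H ⊗[K] H →ₗc[K] H) : H ⊗[K] H →ₗ[K] H) ∘ₗ
            ((prL : (H ⊗[K] H) ⊗[K] H →ₗc[K] H ⊗[K] H) : _ →ₗ[K] _))) := by
    rw [← LinearMap.comp_assoc, rbB_map B hB,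
      cv_comp _ _ (prL : (H ⊗[K] H) ⊗[K] H →ₗc[K] H ⊗[K] H)]
    simp only [LinearMap.comp_assoc]
  rw [mulB_eq, cv_comp _ _ (PhiC B hcc hB), cv_comp _ _ (PhiC B hcc hB),
    cv_comp _ _ (PhiC B hcc hB)]
  simp only [LinearMap.comp_assoc]
  rw [pp_Phi B hcc hB, qq_Phi B hcc hB, hBmul]
  rw [antipode_comp_cv (cocomm_tensor (cocomm_tensor (hcc_cocomm hcc) (hcc_cocomm hcc))
    (hcc_cocomm hcc))]
  rw [mulB_eq, cv_comp _ _ (prL : (H ⊗[K] H) ⊗[K] H →ₗc[K] H ⊗[K] H),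
    cv_comp _ _ (prL : (H ⊗[K] H) ⊗[K] H →ₗc[K] H ⊗[K] H),
    cv_comp _ _ (prL : (H ⊗[K] H) ⊗[K] H →ₗc[K] H ⊗[K] H)]
  simp only [LinearMap.comp_assoc, cv_assoc]
  -- collapse the middle pair S(B P1) ⋆ B P1
  have hx : B ∘ₗ (((prL : H ⊗[K] H →ₗc[K] H) : H ⊗[K] H →ₗ[K] H) ∘ₗ
        ((prL : (H ⊗[K] H) ⊗[K] H →ₗc[K] H ⊗[K] H) : _ →ₗ[K] _))
      = (((BCoalg B hB).comp ((prL : H ⊗[K] H →ₗc[K] H).comp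
          (prL : (H ⊗[K] H) ⊗[K] H →ₗc[K] H ⊗[K] H))) :
            (H ⊗[K] H) ⊗[K] H →ₗ[K] H) := rfl
  rw [hx, ← cv_assoc ((HopfAlgebra.antipode K) ∘ₗ ((((BCoalg B hB).comp
      ((prL : H ⊗[K] H →ₗc[K] H).comp (prL : (H ⊗[K] H) ⊗[K] H →ₗc[K] H ⊗[K] H))) :
        (H ⊗[K] H) ⊗[K] H →ₗ[K] H)))
      ((((BCoalg B hB).comp ((prL : H ⊗[K] H →ₗc[K] H).comp
        (prL : (H ⊗[K] H) ⊗[K] H →ₗc[K] H ⊗[K] H))) : (H ⊗[K] H) ⊗[K] H →ₗ[K] H)) _,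
    cv_antipode_left, cv_cu_left]
  simp only [word, coalg_comp_coe, BCoalg_coe, LinearMap.comp_assoc, cv_assoc]

lemma part_i (B : H →ₗ[K] H) (hcc : IsCocomm K H) (hB : IsRotaBaxter B) (x y z : H) :
    mulB B (mulB B (x ⊗ₜ[K] y) ⊗ₜ[K] z) = mulB B (x ⊗ₜ[K] mulB B (y ⊗ₜ[K] z)) := by
  have h : mulB B ∘ₗ ((PhiC B hcc hB) : (H ⊗[K] H) ⊗[K] H →ₗ[K] H ⊗[K] H)
      = (mulB B ∘ₗ ((PsiC B hcc hB) : H ⊗[K] (H ⊗[K] H) →ₗ[K] H ⊗[K] H)) ∘ₗ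
          ((alC (K := K) (H := H)) : (H ⊗[K] H) ⊗[K] H →ₗ[K] H ⊗[K] (H ⊗[K] H)) := by
    rw [mulB_Phi B hcc hB, mulB_Psi B hcc hB, word_comp, leg1_al, leg2_al, leg3_al]
  have h2 := congrFun (congrArg DFunLike.coe h) ((x ⊗ₜ[K] y) ⊗ₜ[K] z)
  simpa [PhiC, PsiC, alC, mulBCoalgHom_apply B hcc hB] using h2


/-- the descendent structure `H_B = (H, *_B, 1, Δ, ε, S_B)` is a Hopf algebra. -/
theorem stmt2 (B : H →ₗ[K] H) (hcc : IsCocomm K H) (hB : IsRotaBaxter B) :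
    (∀ x y z : H,
      mulB B (mulB B (x ⊗ₜ[K] y) ⊗ₜ[K] z) = mulB B (x ⊗ₜ[K] mulB B (y ⊗ₜ[K] z))) ∧
    (∀ x : H, mulB B ((1 : H) ⊗ₜ[K] x) = x ∧ mulB B (x ⊗ₜ[K] (1 : H)) = x) ∧
    (∀ x y : H,
      Coalgebra.comul (R := K) (mulB B (x ⊗ₜ[K] y)) =
        TensorProduct.map (mulB B) (mulB B)
          (TensorProduct.tensorTensorTensorComm K H H H H
            (Coalgebra.comul (R := K) x ⊗ₜ[K] Coalgebra.comul (R := K) y)) ∧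
      Coalgebra.counit (R := K) (mulB B (x ⊗ₜ[K] y)) =
        Coalgebra.counit (R := K) x * Coalgebra.counit (R := K) y) ∧
    (∀ x : H,
      mulB B (TensorProduct.map (SB B) LinearMap.id (Coalgebra.comul (R := K) x)) =
        Coalgebra.counit (R := K) x • (1 : H) ∧
      mulB B (TensorProduct.map LinearMap.id (SB B) (Coalgebra.comul (R := K) x)) =
        Coalgebra.counit (R := K) x • (1 : H)) :=
  ⟨fun x y z => part_i B hcc hB x y z,
   fun x => part_ii B hB x,
   fun x y => part_iii B hcc hB x y,
   fun x => ⟨part_iv_left B hcc hB x, part_iv_right B hcc hB x⟩⟩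

end
end

section
/- Let (H, B) be a Rota–Baxter Hopf algebra of weight −1 and let H_B = (H, *_B, 1, Δ, ε, S_B) be its descendent Hopf algebra, where x *_B y = B(x₁) y S(B(x₂)) x₃ and S_B(x) = S(B(x₁)) S(x₂) B(x₃). Then B is a Rota–Baxter operator of weight −1 on H_B; that is, for all x, y ∈ H one has B(x) *_B B(y) = B(((B(x₁) *_B y) *_B S_B(B(x₂))) *_B x₃). -/
open TensorProduct LinearMap

set_option synthInstance.maxHeartbeats 1000000
set_option maxHeartbeats 2000000
set_option linter.unusedSectionVars false

noncomputable section

universe u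

variable {K H : Type u} [Field K] [CharZero K] [Ring H] [HopfAlgebra K H]

-- unit of convolution
def eH (K H : Type u) [Field K] [Ring H] [HopfAlgebra K H] : H →ₗ[K] H :=
  Algebra.linearMap K H ∘ₗ Coalgebra.counit


lemma conv_apply (f g : H →ₗ[K] H) (x : H) :
    conv f g x = LinearMap.mul' K H (TensorProduct.map f g (Coalgebra.comul x)) := rfl

lemma coassoc_pt (x : H) :
    TensorProduct.map LinearMap.id Coalgebra.comul (Coalgebra.comul x) =
      (TensorProduct.assoc K H H H)
        (TensorProduct.map Coalgebra.comul LinearMap.id (Coalgebra.comul x)) := by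
  have := Coalgebra.coassoc_apply (R := K) x
  simpa [LinearMap.rTensor, LinearMap.lTensor] using this.symm

lemma map_split₁ {C : Type u} [AddCommGroup C] [Module K C] [Coalgebra K C]
    (p : C ⊗[K] C →ₗ[K] H) (q : C →ₗ[K] H) (t : C ⊗[K] C) :
    TensorProduct.map (p ∘ₗ Coalgebra.comul) q t =
      TensorProduct.map p q (TensorProduct.map Coalgebra.comul LinearMap.id t) := by
  rw [← comp_apply, ← TensorProduct.map_comp, LinearMap.comp_id]

lemma map_split₂ {C : Type u} [AddCommGroup C] [Module K C] [Coalgebra K C]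
    (q : C →ₗ[K] H) (p : C ⊗[K] C →ₗ[K] H) (t : C ⊗[K] C) :
    TensorProduct.map q (p ∘ₗ Coalgebra.comul) t =
      TensorProduct.map q p (TensorProduct.map LinearMap.id Coalgebra.comul t) := by
  rw [← comp_apply, ← TensorProduct.map_comp, LinearMap.comp_id]

lemma conv_assoc (f g h : H →ₗ[K] H) : conv (conv f g) h = conv f (conv g h) := by
  ext x
  rw [conv_apply, conv_apply,
    show conv f g = (LinearMap.mul' K H ∘ₗ TensorProduct.map f g) ∘ₗ Coalgebra.comul from rfl,
    show conv g h = (LinearMap.mul' K H ∘ₗ TensorProduct.map g h) ∘ₗ Coalgebra.comul from rfl,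
    map_split₁, map_split₂, coassoc_pt]
  generalize (TensorProduct.map Coalgebra.comul LinearMap.id (Coalgebra.comul x) :
      (H ⊗[K] H) ⊗[K] H) = t
  have key : (LinearMap.mul' K H ∘ₗ
        TensorProduct.map (LinearMap.mul' K H ∘ₗ TensorProduct.map f g) h) =
      (LinearMap.mul' K H ∘ₗ
        TensorProduct.map f (LinearMap.mul' K H ∘ₗ TensorProduct.map g h)) ∘ₗ
        (TensorProduct.assoc K H H H).toLinearMap := by
    apply TensorProduct.ext_threefold
    intro a b c
    simp [mul_assoc, LinearMap.mul'_apply]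
  have := DFunLike.congr_fun key t
  simpa using this

lemma conv_e_left (f : H →ₗ[K] H) : conv (eH K H) f = f := by
  ext x
  have h1 : TensorProduct.map (eH K H) f =
      (TensorProduct.map (Algebra.linearMap K H) f) ∘ₗ
        TensorProduct.map Coalgebra.counit LinearMap.id := by
    rw [← TensorProduct.map_comp]; simp [eH]
  have h2 : TensorProduct.map Coalgebra.counit LinearMap.id (Coalgebra.comul x) =
      (1 : K) ⊗ₜ[K] x := by
    have := Coalgebra.rTensor_counit_comul (R := K) x
    simpa [LinearMap.rTensor] using this
  simp [conv_apply, h1, h2, LinearMap.mul'_apply]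

lemma conv_e_right (f : H →ₗ[K] H) : conv f (eH K H) = f := by
  ext x
  have h1 : TensorProduct.map f (eH K H) =
      (TensorProduct.map f (Algebra.linearMap K H)) ∘ₗ
        TensorProduct.map LinearMap.id Coalgebra.counit := by
    rw [← TensorProduct.map_comp]; simp [eH]
  have h2 : TensorProduct.map LinearMap.id Coalgebra.counit (Coalgebra.comul x) =
      x ⊗ₜ[K] (1 : K) := by
    have := Coalgebra.lTensor_counit_comul (R := K) x
    simpa [LinearMap.lTensor] using this
  simp [conv_apply, h1, h2, LinearMap.mul'_apply]

lemma conv_aS_id : conv (aS K H) LinearMap.id = eH K H := by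
  ext x
  have := HopfAlgebra.mul_antipode_rTensor_comul_apply (R := K) x
  simpa [conv_apply, aS, eH, LinearMap.rTensor] using this

lemma conv_id_aS : conv LinearMap.id (aS K H) = eH K H := by
  ext x
  have := HopfAlgebra.mul_antipode_lTensor_comul_apply (R := K) x
  simpa [conv_apply, aS, eH, LinearMap.lTensor] using this

section RB

variable (B : H →ₗ[K] H)

lemma comul_B (hB1 : Coalgebra.comul ∘ₗ B = TensorProduct.map B B ∘ₗ Coalgebra.comul) (x : H) :
    Coalgebra.comul (B x) = TensorProduct.map B B (Coalgebra.comul x) :=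
  DFunLike.congr_fun hB1 x

lemma conv_comp_B (hB1 : Coalgebra.comul ∘ₗ B = TensorProduct.map B B ∘ₗ Coalgebra.comul)
    (f g : H →ₗ[K] H) : conv f g ∘ₗ B = conv (f ∘ₗ B) (g ∘ₗ B) := by
  ext x
  simp only [comp_apply, conv_apply]
  rw [comul_B B hB1, ← comp_apply (TensorProduct.map f g), ← TensorProduct.map_comp]

lemma eH_comp_B (hB2 : Coalgebra.counit ∘ₗ B = (Coalgebra.counit : H →ₗ[K] K)) :
    eH K H ∘ₗ B = eH K H := by
  rw [eH, LinearMap.comp_assoc, hB2]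

lemma conv_B_aSB (hB1 : Coalgebra.comul ∘ₗ B = TensorProduct.map B B ∘ₗ Coalgebra.comul)
    (hB2 : Coalgebra.counit ∘ₗ B = (Coalgebra.counit : H →ₗ[K] K)) :
    conv B (aS K H ∘ₗ B) = eH K H := by
  ext x
  rw [conv_apply]
  have h1 : TensorProduct.map B (aS K H ∘ₗ B) (Coalgebra.comul x) =
      TensorProduct.map LinearMap.id (aS K H) (TensorProduct.map B B (Coalgebra.comul x)) := by
    rw [← comp_apply (TensorProduct.map LinearMap.id (aS K H)), ← TensorProduct.map_comp,
      LinearMap.id_comp]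
  rw [h1, ← comul_B B hB1]
  have h2 : Coalgebra.counit (B x) = (Coalgebra.counit x : K) := DFunLike.congr_fun hB2 x
  have h3 := HopfAlgebra.mul_antipode_lTensor_comul_apply (R := K) (B x)
  simpa [aS, eH, LinearMap.lTensor, h2] using h3

lemma conv_aSB_B (hB1 : Coalgebra.comul ∘ₗ B = TensorProduct.map B B ∘ₗ Coalgebra.comul)
    (hB2 : Coalgebra.counit ∘ₗ B = (Coalgebra.counit : H →ₗ[K] K)) :
    conv (aS K H ∘ₗ B) B = eH K H := by
  ext x
  rw [conv_apply]
  have h1 : TensorProduct.map (aS K H ∘ₗ B) B (Coalgebra.comul x) =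
      TensorProduct.map (aS K H) LinearMap.id (TensorProduct.map B B (Coalgebra.comul x)) := by
    rw [← comp_apply (TensorProduct.map (aS K H) LinearMap.id), ← TensorProduct.map_comp,
      LinearMap.id_comp]
  rw [h1, ← comul_B B hB1]
  have h2 : Coalgebra.counit (B x) = (Coalgebra.counit x : K) := DFunLike.congr_fun hB2 x
  have h3 := HopfAlgebra.mul_antipode_rTensor_comul_apply (R := K) (B x)
  simpa [aS, eH, LinearMap.rTensor, h2] using h3

lemma B_mulB_pt (hB3 : ∀ x y : H, B x * B y = B (mulB B (x ⊗ₜ[K] y))) (t : H ⊗[K] H) :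
    B (mulB B t) = LinearMap.mul' K H (TensorProduct.map B B t) := by
  induction t using TensorProduct.induction_on with
  | zero => simp
  | tmul a b => rw [TensorProduct.map_tmul, LinearMap.mul'_apply, hB3 a b]
  | add s t hs ht => simp only [map_add, hs, ht]

lemma mulB_tmul (z c : H) :
    mulB B (z ⊗ₜ[K] c) =
      conv B (LinearMap.mulLeft K c ∘ₗ conv (aS K H ∘ₗ B) LinearMap.id) z := by
  rw [conv_apply]
  simp only [mulB, wrap, comp_apply, TensorProduct.map_tmul, LinearMap.id_coe, id_eq]
  generalize Coalgebra.comul (R := K) z = s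
  induction s using TensorProduct.induction_on with
  | zero =>
      rw [TensorProduct.zero_tmul]
      simp only [_root_.map_zero]
  | tmul p q =>
      simp only [LinearEquiv.coe_coe, TensorProduct.assoc_tmul, TensorProduct.map_tmul,
        TensorProduct.comm_tmul, comp_apply, LinearMap.mul'_apply, LinearMap.id_coe, id_eq,
        LinearMap.mulLeft_apply]
  | add s t hs ht =>
      rw [TensorProduct.add_tmul]
      simp only [_root_.map_add, hs, ht]

lemma B_one_s3 (hB1 : Coalgebra.comul ∘ₗ B = TensorProduct.map B B ∘ₗ Coalgebra.comul)
    (hB2 : Coalgebra.counit ∘ₗ B = (Coalgebra.counit : H →ₗ[K] K))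
    (hB3 : ∀ x y : H, B x * B y = B (mulB B (x ⊗ₜ[K] y))) : B 1 = 1 := by
  have hδ1 : Coalgebra.comul (R := K) (1 : H) = (1 : H) ⊗ₜ[K] (1 : H) := by
    rw [Bialgebra.comul_one, Algebra.TensorProduct.one_def]
  have hδB1 : Coalgebra.comul (R := K) (B 1) = B 1 ⊗ₜ[K] B 1 := by
    rw [comul_B B hB1, hδ1, TensorProduct.map_tmul]
  have hε : Coalgebra.counit (R := K) (B 1) = 1 := by
    have := DFunLike.congr_fun hB2 (1 : H)
    simpa using this
  have h1 : B 1 * HopfAlgebra.antipode (R := K) (B 1) = 1 := by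
    have h3 := HopfAlgebra.mul_antipode_lTensor_comul_apply (R := K) (B 1)
    rw [hδB1] at h3
    simpa [LinearMap.lTensor, LinearMap.mul'_apply, hε] using h3
  have hm : mulB B ((1 : H) ⊗ₜ[K] (1 : H)) = 1 := by
    rw [mulB_tmul, conv_apply, hδ1]
    simp only [TensorProduct.map_tmul, LinearMap.mul'_apply, comp_apply,
      LinearMap.mulLeft_apply, conv_apply, hδ1, LinearMap.id_coe, id_eq, one_mul, mul_one, aS]
    exact h1
  have hsq : B 1 * B 1 = B 1 := by rw [hB3 1 1, hm]
  have h2 : B 1 = B 1 * (B 1 * HopfAlgebra.antipode (R := K) (B 1)) := by rw [h1, mul_one]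
  rw [← mul_assoc, hsq, h1] at h2
  exact h2

lemma Q_eq (hcc : ∀ x : H, (TensorProduct.comm K H H) (Coalgebra.comul x) = Coalgebra.comul x) :
    mulB B ∘ₗ TensorProduct.map LinearMap.id (SB B) ∘ₗ Coalgebra.comul =
      conv B (conv (SB B) (conv (aS K H ∘ₗ B) LinearMap.id)) := by
  set u : H →ₗ[K] H := conv (aS K H ∘ₗ B) LinearMap.id with hu
  set R' : H ⊗[K] H →ₗ[K] H :=
    LinearMap.mul' K H ∘ₗ TensorProduct.map (SB B) u ∘ₗ (TensorProduct.comm K H H).toLinearMap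
    with hR
  have hRδ : R' ∘ₗ Coalgebra.comul = conv (SB B) u := by
    ext z
    simp only [comp_apply, conv_apply, LinearEquiv.coe_coe, hR]
    rw [hcc z]
  ext x
  simp only [comp_apply]
  have stepA : ∀ t : H ⊗[K] H,
      mulB B (TensorProduct.map LinearMap.id (SB B) t) =
        (LinearMap.mul' K H ∘ₗ TensorProduct.map B R')
          ((TensorProduct.assoc K H H H)
            (TensorProduct.map Coalgebra.comul LinearMap.id t)) := by
    intro t
    induction t using TensorProduct.induction_on with
    | zero => simp only [_root_.map_zero]
    | tmul a c =>
        simp only [TensorProduct.map_tmul, LinearMap.id_coe, id_eq, mulB, wrap, comp_apply]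
        generalize Coalgebra.comul (R := K) a = s
        induction s using TensorProduct.induction_on with
        | zero =>
            rw [TensorProduct.zero_tmul, TensorProduct.zero_tmul]
            simp only [_root_.map_zero]
        | tmul p q =>
            simp only [LinearEquiv.coe_coe, TensorProduct.assoc_tmul, TensorProduct.map_tmul,
              TensorProduct.comm_tmul, comp_apply, LinearMap.mul'_apply, LinearMap.id_coe,
              id_eq, hR, hu]
        | add s t hs ht =>
            rw [TensorProduct.add_tmul, TensorProduct.add_tmul]
            simp only [_root_.map_add, hs, ht]
    | add s t hs ht => simp only [_root_.map_add, hs, ht]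
  rw [stepA (Coalgebra.comul x), ← coassoc_pt, comp_apply,
    ← map_split₂ B R' (Coalgebra.comul x), hRδ, conv_apply]

lemma Q_eH (hB1 : Coalgebra.comul ∘ₗ B = TensorProduct.map B B ∘ₗ Coalgebra.comul)
    (hB2 : Coalgebra.counit ∘ₗ B = (Coalgebra.counit : H →ₗ[K] K))
    (hcc : ∀ x : H, (TensorProduct.comm K H H) (Coalgebra.comul x) = Coalgebra.comul x) :
    mulB B ∘ₗ TensorProduct.map LinearMap.id (SB B) ∘ₗ Coalgebra.comul = eH K H := by
  rw [Q_eq B hcc, SB,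
    conv_assoc (aS K H ∘ₗ B) (conv (aS K H) B) (conv (aS K H ∘ₗ B) LinearMap.id),
    ← conv_assoc B (aS K H ∘ₗ B) _, conv_B_aSB B hB1 hB2, conv_e_left,
    conv_assoc (aS K H) B (conv (aS K H ∘ₗ B) LinearMap.id),
    ← conv_assoc B (aS K H ∘ₗ B) LinearMap.id, conv_B_aSB B hB1 hB2, conv_e_left, conv_aS_id]

lemma B_SB_s3 (hB1 : Coalgebra.comul ∘ₗ B = TensorProduct.map B B ∘ₗ Coalgebra.comul)
    (hB2 : Coalgebra.counit ∘ₗ B = (Coalgebra.counit : H →ₗ[K] K))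
    (hB3 : ∀ x y : H, B x * B y = B (mulB B (x ⊗ₜ[K] y)))
    (hcc : ∀ x : H, (TensorProduct.comm K H H) (Coalgebra.comul x) = Coalgebra.comul x) :
    B ∘ₗ SB B = aS K H ∘ₗ B := by
  have hBone : B 1 = 1 := B_one_s3 B hB1 hB2 hB3
  have h1 : conv B (B ∘ₗ SB B) = eH K H := by
    ext x
    rw [conv_apply]
    have hsplit : TensorProduct.map B (B ∘ₗ SB B) (Coalgebra.comul x) =
        TensorProduct.map B B
          (TensorProduct.map LinearMap.id (SB B) (Coalgebra.comul x)) := by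
      rw [← comp_apply (TensorProduct.map B B), ← TensorProduct.map_comp, LinearMap.comp_id]
    rw [hsplit, ← B_mulB_pt B hB3]
    have hq := DFunLike.congr_fun (Q_eH B hB1 hB2 hcc) x
    simp only [comp_apply] at hq
    rw [hq]
    simp [eH, Algebra.algebraMap_eq_smul_one, hBone]
  calc B ∘ₗ SB B = conv (eH K H) (B ∘ₗ SB B) := (conv_e_left _).symm
    _ = conv (conv (aS K H ∘ₗ B) B) (B ∘ₗ SB B) := by rw [conv_aSB_B B hB1 hB2]
    _ = conv (aS K H ∘ₗ B) (conv B (B ∘ₗ SB B)) := conv_assoc _ _ _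
    _ = conv (aS K H ∘ₗ B) (eH K H) := by rw [h1]
    _ = aS K H ∘ₗ B := conv_e_right _

end RB

lemma mulLeft_conv (w : H) (p q : H →ₗ[K] H) :
    LinearMap.mulLeft K w ∘ₗ conv p q = conv (LinearMap.mulLeft K w ∘ₗ p) q := by
  ext x
  simp only [comp_apply, conv_apply]
  generalize Coalgebra.comul (R := K) x = t
  induction t using TensorProduct.induction_on with
  | zero => simp
  | tmul a b =>
      simp only [TensorProduct.map_tmul, LinearMap.mul'_apply, comp_apply,
        LinearMap.mulLeft_apply, mul_assoc]
  | add s t hs ht => simp only [_root_.map_add, hs, ht, mul_add]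

lemma conv_mulLeft_shift (w : H) (f g : H →ₗ[K] H) :
    conv f (LinearMap.mulLeft K w ∘ₗ g) = conv (LinearMap.mulRight K w ∘ₗ f) g := by
  ext x
  simp only [conv_apply]
  generalize Coalgebra.comul (R := K) x = t
  induction t using TensorProduct.induction_on with
  | zero => simp
  | tmul a b =>
      simp only [TensorProduct.map_tmul, LinearMap.mul'_apply, comp_apply,
        LinearMap.mulLeft_apply, LinearMap.mulRight_apply, mul_assoc]
  | add s t hs ht => simp only [_root_.map_add, hs, ht]


/-- `B` is a Rota–Baxter operator of weight `-1` on the descendent Hopf algebra: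
`B(x) *_B B(y) = B(((B(x₁) *_B y) *_B S_B(B(x₂))) *_B x₃)`. -/
theorem stmt3 (B : H →ₗ[K] H) (hcc : IsCocomm K H) (hB : IsRotaBaxter B) :
    ∀ x y : H,
      mulB B (B x ⊗ₜ[K] B y) =
        B ((mulB B ∘ₗ
            TensorProduct.map
              (mulB B ∘ₗ
                TensorProduct.map
                  (mulB B ∘ₗ (TensorProduct.mk K H H).flip y ∘ₗ B)
                  (SB B ∘ₗ B) ∘ₗ Coalgebra.comul)
              LinearMap.id ∘ₗ Coalgebra.comul) x) := by
  obtain ⟨hB1, hB2, hB3⟩ := hB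
  have hcc' : ∀ z : H, (TensorProduct.comm K H H) (Coalgebra.comul z) = Coalgebra.comul z := hcc
  intro x y
  -- the common normal form
  have hL : mulB B (B x ⊗ₜ[K] B y) =
      conv (conv (LinearMap.mulRight K (B y) ∘ₗ (B ∘ₗ B)) (aS K H ∘ₗ (B ∘ₗ B))) B x := by
    rw [mulB_tmul]
    have e1 := DFunLike.congr_fun
      (conv_comp_B B hB1 B
        (LinearMap.mulLeft K (B y) ∘ₗ conv (aS K H ∘ₗ B) LinearMap.id)) x
    simp only [comp_apply] at e1
    rw [e1]
    have e2 : (LinearMap.mulLeft K (B y) ∘ₗ conv (aS K H ∘ₗ B) LinearMap.id) ∘ₗ B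
        = LinearMap.mulLeft K (B y) ∘ₗ conv (aS K H ∘ₗ (B ∘ₗ B)) B := by
      rw [show (LinearMap.mulLeft K (B y) ∘ₗ conv (aS K H ∘ₗ B) LinearMap.id) ∘ₗ B
          = LinearMap.mulLeft K (B y) ∘ₗ (conv (aS K H ∘ₗ B) LinearMap.id ∘ₗ B) from rfl,
        conv_comp_B B hB1, LinearMap.id_comp,
        show (aS K H ∘ₗ B) ∘ₗ B = aS K H ∘ₗ (B ∘ₗ B) from rfl]
    rw [e2, mulLeft_conv, ← conv_assoc, conv_mulLeft_shift]
  rw [hL]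
  -- now the right-hand side
  simp only [comp_apply]
  rw [B_mulB_pt B hB3, ← comp_apply (TensorProduct.map B B), ← TensorProduct.map_comp,
    LinearMap.comp_id]
  have hInner : B ∘ₗ (mulB B ∘ₗ
      TensorProduct.map
        (mulB B ∘ₗ (TensorProduct.mk K H H).flip y ∘ₗ B)
        (SB B ∘ₗ B) ∘ₗ Coalgebra.comul) =
      conv (LinearMap.mulRight K (B y) ∘ₗ (B ∘ₗ B)) (aS K H ∘ₗ (B ∘ₗ B)) := by
    ext z
    simp only [comp_apply]
    rw [B_mulB_pt B hB3, ← comp_apply (TensorProduct.map B B), ← TensorProduct.map_comp]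
    have hf : B ∘ₗ (mulB B ∘ₗ (TensorProduct.mk K H H).flip y ∘ₗ B)
        = LinearMap.mulRight K (B y) ∘ₗ (B ∘ₗ B) := by
      ext z'
      simp only [comp_apply, LinearMap.flip_apply, TensorProduct.mk_apply,
        LinearMap.mulRight_apply]
      rw [← hB3 (B z') y]
    have hg : B ∘ₗ (SB B ∘ₗ B) = aS K H ∘ₗ (B ∘ₗ B) := by
      rw [show B ∘ₗ (SB B ∘ₗ B) = (B ∘ₗ SB B) ∘ₗ B from rfl,
        B_SB_s3 B hB1 hB2 hB3 hcc',
        show (aS K H ∘ₗ B) ∘ₗ B = aS K H ∘ₗ (B ∘ₗ B) from rfl]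
    rw [hf, hg, conv_apply]
  rw [hInner, conv_apply]


end
end

section
/- Let (H, B) be a Rota–Baxter Hopf algebra of weight −1 and define B̃ : H → H by B̃(x) = x₁ B(S(x₂)). Then for all x ∈ H the following two identities hold: B̃(x₁) S(B(S(x₂))) = x and B(x₁) S(B̃(S(x₂))) = x. -/
open TensorProduct LinearMap

noncomputable section

universe u

variable {K H : Type u} [Field K] [CharZero K] [Ring H] [HopfAlgebra K H]

section Gen
variable {C A : Type u} [AddCommGroup C] [Module K C] [Coalgebra K C]
  [Ring A] [Algebra K A]

/-- general convolution -/
def cv (f g : C →ₗ[K] A) : C →ₗ[K] A :=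
  LinearMap.mul' K A ∘ₗ TensorProduct.map f g ∘ₗ Coalgebra.comul

/-- convolution unit -/
def ce : C →ₗ[K] A := Algebra.linearMap K A ∘ₗ Coalgebra.counit

lemma cv_apply (f g : C →ₗ[K] A) (x : C) :
    cv f g x = LinearMap.mul' K A (TensorProduct.map f g (Coalgebra.comul x)) := rfl

lemma cv_unit_right (f : C →ₗ[K] A) : cv f ce = f := by
  have h1 : TensorProduct.map f (Algebra.linearMap K A ∘ₗ (Coalgebra.counit : C →ₗ[K] K)) =
      TensorProduct.map f (Algebra.linearMap K A) ∘ₗ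
        (Coalgebra.counit (R := K)).lTensor C := by
    ext x y; simp
  apply LinearMap.ext; intro x
  rw [cv_apply]
  show LinearMap.mul' K A (TensorProduct.map f
    (Algebra.linearMap K A ∘ₗ (Coalgebra.counit : C →ₗ[K] K)) (Coalgebra.comul x)) = f x
  rw [h1]
  simp only [LinearMap.comp_apply]
  rw [Coalgebra.lTensor_counit_comul]
  simp

lemma cv_unit_left (f : C →ₗ[K] A) : cv ce f = f := by
  have h1 : TensorProduct.map (Algebra.linearMap K A ∘ₗ (Coalgebra.counit : C →ₗ[K] K)) f =
      TensorProduct.map (Algebra.linearMap K A) f ∘ₗ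
        (Coalgebra.counit (R := K)).rTensor C := by
    ext x y; simp
  apply LinearMap.ext; intro x
  rw [cv_apply]
  show LinearMap.mul' K A (TensorProduct.map
    (Algebra.linearMap K A ∘ₗ (Coalgebra.counit : C →ₗ[K] K)) f (Coalgebra.comul x)) = f x
  rw [h1]
  simp only [LinearMap.comp_apply]
  rw [Coalgebra.rTensor_counit_comul]
  simp

lemma cv_assoc (f g h : C →ₗ[K] A) : cv (cv f g) h = cv f (cv g h) := by
  have e1 : TensorProduct.map (cv f g) h =
      TensorProduct.map (LinearMap.mul' K A) h ∘ₗ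
        (TensorProduct.map f g).rTensor C ∘ₗ (Coalgebra.comul (R := K)).rTensor C := by
    ext x y; simp [cv_apply]
  have e2 : TensorProduct.map f (cv g h) =
      TensorProduct.map f (LinearMap.mul' K A) ∘ₗ
        (TensorProduct.map g h).lTensor C ∘ₗ (Coalgebra.comul (R := K)).lTensor C := by
    ext x y; simp [cv_apply]
  have M1 : (LinearMap.mul' K A) ∘ₗ TensorProduct.map (LinearMap.mul' K A) h ∘ₗ
      (TensorProduct.map f g).rTensor C ∘ₗ
        (TensorProduct.assoc K C C C).symm.toLinearMap =
      (LinearMap.mul' K A) ∘ₗ TensorProduct.map f (LinearMap.mul' K A) ∘ₗ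
        (TensorProduct.map g h).lTensor C := by
    apply TensorProduct.ext'
    intro x w
    induction w with
    | zero => simp
    | tmul y z => simp [mul_assoc]
    | add w1 w2 ih1 ih2 => simp_all [tmul_add]
  apply LinearMap.ext; intro x
  rw [cv_apply, e1, cv_apply, e2]
  simp only [LinearMap.comp_apply]
  rw [← Coalgebra.coassoc_symm_apply (R := K)]
  exact LinearMap.congr_fun M1 ((Coalgebra.comul (R := K)).lTensor C (Coalgebra.comul x))

lemma cv_inv_unique {f a b : C →ₗ[K] A} (h1 : cv a f = ce) (h2 : cv f b = ce) :
    a = b := by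
  have : cv a (cv f b) = cv (cv a f) b := (cv_assoc a f b).symm
  rw [h1, h2, cv_unit_right, cv_unit_left] at this
  exact this

/-- precompose with a coalgebra morphism -/
lemma cv_comp {C' : Type u} [AddCommGroup C'] [Module K C'] [Coalgebra K C']
    (f g : C →ₗ[K] A) (Φ : C' →ₗ[K] C)
    (hΦ : Coalgebra.comul ∘ₗ Φ = TensorProduct.map Φ Φ ∘ₗ Coalgebra.comul) :
    cv (f ∘ₗ Φ) (g ∘ₗ Φ) = cv f g ∘ₗ Φ := by
  apply LinearMap.ext; intro x
  simp only [cv_apply, LinearMap.comp_apply]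
  have hx : Coalgebra.comul (Φ x) = TensorProduct.map Φ Φ (Coalgebra.comul x) := by
    simpa using LinearMap.congr_fun hΦ x
  rw [hx, ← LinearMap.comp_apply (TensorProduct.map f g), ← TensorProduct.map_comp]

/-- postcompose with an algebra morphism (given as multiplicative linear map) -/
lemma comp_cv {A' : Type u} [Ring A'] [Algebra K A'] (f g : C →ₗ[K] A)
    (Ψ : A →ₗ[K] A')
    (hΨ : Ψ ∘ₗ LinearMap.mul' K A = LinearMap.mul' K A' ∘ₗ TensorProduct.map Ψ Ψ) :
    Ψ ∘ₗ cv f g = cv (Ψ ∘ₗ f) (Ψ ∘ₗ g) := by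
  apply LinearMap.ext; intro x
  simp only [cv_apply, LinearMap.comp_apply]
  rw [← LinearMap.comp_apply Ψ, LinearMap.congr_fun hΨ, LinearMap.comp_apply,
    ← LinearMap.comp_apply (TensorProduct.map Ψ Ψ), ← TensorProduct.map_comp]

end Gen

section Hopf
variable (K H) in
def sH : H →ₗ[K] H := HopfAlgebra.antipode K

lemma cv_S_id : cv (sH K H) LinearMap.id = (ce : H →ₗ[K] H) := by
  apply LinearMap.ext; intro x
  exact HopfAlgebra.mul_antipode_rTensor_comul_apply (R := K) x

lemma cv_id_S : cv LinearMap.id (sH K H) = (ce : H →ₗ[K] H) := by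
  apply LinearMap.ext; intro x
  exact HopfAlgebra.mul_antipode_lTensor_comul_apply (R := K) x

lemma comul_mul_map :
    (Coalgebra.comul : H →ₗ[K] H ⊗[K] H) ∘ₗ LinearMap.mul' K H =
      LinearMap.mul' K (H ⊗[K] H) ∘ₗ
        TensorProduct.map Coalgebra.comul Coalgebra.comul := by
  apply TensorProduct.ext'; intro x y; simp

lemma counit_mul_map :
    (Coalgebra.counit : H →ₗ[K] K) ∘ₗ LinearMap.mul' K H =
      LinearMap.mul' K K ∘ₗ TensorProduct.map Coalgebra.counit Coalgebra.counit := by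
  apply TensorProduct.ext'; intro x y; simp

lemma mul'HH :
    LinearMap.mul' K (H ⊗[K] H) =
      TensorProduct.map (LinearMap.mul' K H) (LinearMap.mul' K H) ∘ₗ
        (TensorProduct.tensorTensorTensorComm K H H H H).toLinearMap := by
  apply TensorProduct.ext_fourfold'; intro a b c d
  simp [Algebra.TensorProduct.tmul_mul_tmul]

lemma comulHH :
    (Coalgebra.comul : H ⊗[K] H →ₗ[K] (H ⊗[K] H) ⊗[K] (H ⊗[K] H)) =
      (TensorProduct.tensorTensorTensorComm K H H H H).toLinearMap ∘ₗ
        TensorProduct.map Coalgebra.comul Coalgebra.comul := rfl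

lemma counitHH :
    (Coalgebra.counit : H ⊗[K] H →ₗ[K] K) =
      LinearMap.mul' K K ∘ₗ TensorProduct.map Coalgebra.counit Coalgebra.counit := by
  apply TensorProduct.ext'; intro x y; simp [mul_comm]

lemma mul_coalgHom :
    (Coalgebra.comul : H →ₗ[K] H ⊗[K] H) ∘ₗ LinearMap.mul' K H =
      TensorProduct.map (LinearMap.mul' K H) (LinearMap.mul' K H) ∘ₗ
        Coalgebra.comul := by
  rw [comulHH, ← LinearMap.comp_assoc, ← mul'HH, comul_mul_map]

lemma counit_mul_coalg :
    (Coalgebra.counit : H →ₗ[K] K) ∘ₗ LinearMap.mul' K H =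
      (Coalgebra.counit : H ⊗[K] H →ₗ[K] K) := by
  rw [counitHH, counit_mul_map]

end Hopf

section Anti
variable (K H) in
def mm : H ⊗[K] H →ₗ[K] H := LinearMap.mul' K H ∘ₗ TensorProduct.map LinearMap.id (sH K H)

variable (K H) in
def Wm : (H ⊗[K] H) ⊗[K] H →ₗ[K] H :=
  LinearMap.mul' K H ∘ₗ TensorProduct.map (LinearMap.mul' K H) (sH K H) ∘ₗ
    (TensorProduct.assoc K H H H).symm.toLinearMap ∘ₗ
    ((TensorProduct.comm K H H).toLinearMap).lTensor H ∘ₗ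
    (TensorProduct.assoc K H H H).toLinearMap

variable (K H) in
def bS : H ⊗[K] H →ₗ[K] H :=
  LinearMap.mul' K H ∘ₗ TensorProduct.map (sH K H) (sH K H) ∘ₗ
    (TensorProduct.comm K H H).toLinearMap

lemma sub1 :
    LinearMap.mul' K H ∘ₗ TensorProduct.map (LinearMap.mul' K H) (bS K H) ∘ₗ
        (TensorProduct.tensorTensorTensorComm K H H H H).toLinearMap =
      Wm K H ∘ₗ (mm K H).lTensor (H ⊗[K] H) := by
  apply TensorProduct.ext_fourfold'; intro a b c d
  simp [Wm, bS, mm, mul_assoc]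

lemma sub2 (u : H ⊗[K] H) : Wm K H (u ⊗ₜ[K] 1) = mm K H u := by
  have h : Wm K H ∘ₗ ((TensorProduct.mk K (H ⊗[K] H) H).flip 1) = mm K H := by
    apply TensorProduct.ext'; intro a b
    simp [Wm, mm]
  exact LinearMap.congr_fun h u

lemma mm_comul (y : H) : mm K H (Coalgebra.comul y) =
    algebraMap K H (Coalgebra.counit y) := by
  exact LinearMap.congr_fun (cv_id_S (K := K) (H := H)) y

lemma cv_mul_bS :
    cv (LinearMap.mul' K H) (bS K H) = (ce : H ⊗[K] H →ₗ[K] H) := by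
  apply TensorProduct.ext'; intro x y
  rw [cv_apply]
  have hΔ : (Coalgebra.comul (R := K) (x ⊗ₜ[K] y)) =
      (TensorProduct.tensorTensorTensorComm K H H H H)
        (Coalgebra.comul x ⊗ₜ[K] Coalgebra.comul y) := rfl
  rw [hΔ]
  have := LinearMap.congr_fun (sub1 (K := K) (H := H))
    (Coalgebra.comul x ⊗ₜ[K] Coalgebra.comul y)
  simp only [LinearMap.comp_apply, LinearEquiv.coe_coe] at this
  rw [this, LinearMap.lTensor_tmul, mm_comul, Algebra.algebraMap_eq_smul_one,
    TensorProduct.tmul_smul, map_smul, sub2, mm_comul]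
  show _ = algebraMap K H (Coalgebra.counit (R := K) (x ⊗ₜ[K] y))
  have hε : (Coalgebra.counit (R := K) (x ⊗ₜ[K] y)) =
      Coalgebra.counit (R := K) x * Coalgebra.counit (R := K) y := by
    rw [counitHH]; simp
  rw [hε, Algebra.algebraMap_eq_smul_one, Algebra.algebraMap_eq_smul_one,
    smul_smul, mul_comm]

lemma cv_Smul_mul :
    cv (sH K H ∘ₗ LinearMap.mul' K H) (LinearMap.mul' K H) =
      (ce : H ⊗[K] H →ₗ[K] H) := by
  have h := cv_comp (C := H) (C' := H ⊗[K] H) (sH K H) LinearMap.id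
    (LinearMap.mul' K H) mul_coalgHom
  rw [LinearMap.id_comp] at h
  rw [h, cv_S_id]
  show (Algebra.linearMap K H ∘ₗ Coalgebra.counit) ∘ₗ LinearMap.mul' K H = _
  rw [LinearMap.comp_assoc, counit_mul_coalg]
  rfl

lemma antimult :
    sH K H ∘ₗ LinearMap.mul' K H = bS K H :=
  cv_inv_unique cv_Smul_mul cv_mul_bS

lemma comm_map (f g : H →ₗ[K] H) :
    (TensorProduct.comm K H H).toLinearMap ∘ₗ TensorProduct.map f g =
      TensorProduct.map g f ∘ₗ (TensorProduct.comm K H H).toLinearMap := by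
  apply TensorProduct.ext'; intro x y; simp

lemma S_one : sH K H 1 = 1 := by
  have h := HopfAlgebra.mul_antipode_rTensor_comul_apply (R := K) (1 : H)
  exact HopfAlgebra.antipode_one (R := K)

lemma S_eta : sH K H ∘ₗ Algebra.linearMap K H = Algebra.linearMap K H := by
  apply LinearMap.ext; intro t
  simp [Algebra.linearMap_apply, Algebra.algebraMap_eq_smul_one, map_smul, S_one]

lemma Srule (hcc : (TensorProduct.comm K H H).toLinearMap ∘ₗ Coalgebra.comul =
      (Coalgebra.comul : H →ₗ[K] H ⊗[K] H)) (f g : H →ₗ[K] H) :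
    sH K H ∘ₗ cv f g = cv (sH K H ∘ₗ g) (sH K H ∘ₗ f) := by
  apply LinearMap.ext; intro x
  simp only [LinearMap.comp_apply, cv_apply]
  rw [← LinearMap.comp_apply (sH K H), antimult, bS]
  simp only [LinearMap.comp_apply, LinearEquiv.coe_coe]
  have h2 := LinearMap.congr_fun (comm_map (K := K) (H := H) f g) (Coalgebra.comul x)
  simp only [LinearMap.comp_apply, LinearEquiv.coe_coe] at h2
  rw [h2]
  have h3 := LinearMap.congr_fun hcc x
  simp only [LinearMap.comp_apply, LinearEquiv.coe_coe] at h3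
  rw [h3]
  rw [← LinearMap.comp_apply (TensorProduct.map (sH K H) (sH K H)),
    ← TensorProduct.map_comp]

lemma S_S (hcc : (TensorProduct.comm K H H).toLinearMap ∘ₗ Coalgebra.comul =
      (Coalgebra.comul : H →ₗ[K] H ⊗[K] H)) :
    sH K H ∘ₗ sH K H = LinearMap.id := by
  apply cv_inv_unique (f := sH K H) _ cv_S_id
  have h := Srule hcc LinearMap.id (sH K H)
  rw [cv_id_S, LinearMap.comp_id] at h
  rw [← h]
  show sH K H ∘ₗ Algebra.linearMap K H ∘ₗ Coalgebra.counit = _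
  rw [← LinearMap.comp_assoc, S_eta]
  rfl

end Anti

section Scoalg

lemma comul_eta :
    (Coalgebra.comul : H →ₗ[K] H ⊗[K] H) ∘ₗ Algebra.linearMap K H =
      Algebra.linearMap K (H ⊗[K] H) := by
  apply LinearMap.ext; intro t
  simp

lemma cv_DS_D :
    cv ((Coalgebra.comul : H →ₗ[K] H ⊗[K] H) ∘ₗ sH K H) Coalgebra.comul =
      (ce : H →ₗ[K] H ⊗[K] H) := by
  have h := comp_cv (A := H) (A' := H ⊗[K] H) (sH K H) LinearMap.id
    (Coalgebra.comul : H →ₗ[K] H ⊗[K] H) comul_mul_map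
  rw [cv_S_id, LinearMap.comp_id] at h
  rw [← h]
  show Coalgebra.comul ∘ₗ (Algebra.linearMap K H ∘ₗ Coalgebra.counit) = _
  rw [← LinearMap.comp_assoc, comul_eta]
  rfl

variable (K H) in
def Phm : H ⊗[K] ((H ⊗[K] H) ⊗[K] H) →ₗ[K] (H ⊗[K] H) ⊗[K] (H ⊗[K] H) :=
  (TensorProduct.assoc K H H (H ⊗[K] H)).symm.toLinearMap ∘ₗ
    ((TensorProduct.assoc K H H H).toLinearMap).lTensor H

variable (K H) in
def R3m : H ⊗[K] (H ⊗[K] H) →ₗ[K] H ⊗[K] H :=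
  (LinearMap.mul' K H).rTensor H ∘ₗ
    ((TensorProduct.map LinearMap.id (sH K H)).rTensor H) ∘ₗ
    (TensorProduct.assoc K H H H).symm.toLinearMap ∘ₗ
    ((TensorProduct.comm K H H).toLinearMap).lTensor H

set_option synthInstance.maxHeartbeats 400000 in
set_option maxHeartbeats 1600000 in
lemma Epure2 :
    (Coalgebra.comul : H →ₗ[K] H ⊗[K] H).lTensor (H ⊗[K] H) ∘ₗ
        (TensorProduct.assoc K H H H).symm.toLinearMap =
      Phm K H ∘ₗ
        ((TensorProduct.assoc K H H H).symm.toLinearMap).lTensor H ∘ₗ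
        ((Coalgebra.comul : H →ₗ[K] H ⊗[K] H).lTensor H).lTensor H := by
  apply TensorProduct.ext'; intro a w
  induction w with
  | zero => simp only [TensorProduct.tmul_zero, map_zero]
  | add w1 w2 ih1 ih2 =>
    simp only [TensorProduct.tmul_add, map_add, ih1, ih2]
  | tmul b c =>
    simp only [LinearMap.comp_apply, LinearEquiv.coe_coe, TensorProduct.assoc_symm_tmul,
      LinearMap.lTensor_tmul]
    generalize (Coalgebra.comul (R := K) c) = u
    induction u with
    | zero => simp only [TensorProduct.tmul_zero, map_zero]
    | add u1 u2 ih1 ih2 =>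
      simp only [TensorProduct.tmul_add, map_add, ih1, ih2]
    | tmul c1 c2 => simp [Phm]

lemma E_applied (x : H) :
    TensorProduct.map Coalgebra.comul Coalgebra.comul
        (Coalgebra.comul (R := K) x) =
      Phm K H (((Coalgebra.comul : H →ₗ[K] H ⊗[K] H).rTensor H).lTensor H
        ((Coalgebra.comul : H →ₗ[K] H ⊗[K] H).lTensor H (Coalgebra.comul x))) := by
  have h1 : TensorProduct.map (Coalgebra.comul : H →ₗ[K] H ⊗[K] H) Coalgebra.comul =
      (Coalgebra.comul : H →ₗ[K] H ⊗[K] H).lTensor (H ⊗[K] H) ∘ₗ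
        (Coalgebra.comul : H →ₗ[K] H ⊗[K] H).rTensor H := by
    apply TensorProduct.ext'; intro x y; simp
  have h4 : ((Coalgebra.comul : H →ₗ[K] H ⊗[K] H).rTensor H).lTensor H ∘ₗ
      (Coalgebra.comul : H →ₗ[K] H ⊗[K] H).lTensor H =
      ((TensorProduct.assoc K H H H).symm.toLinearMap).lTensor H ∘ₗ
        ((Coalgebra.comul : H →ₗ[K] H ⊗[K] H).lTensor H).lTensor H ∘ₗ
        (Coalgebra.comul : H →ₗ[K] H ⊗[K] H).lTensor H := by
    rw [← LinearMap.lTensor_comp, ← Coalgebra.coassoc_symm]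
    rw [LinearMap.lTensor_comp, LinearMap.lTensor_comp]
  have h4x := LinearMap.congr_fun h4 (Coalgebra.comul x)
  simp only [LinearMap.comp_apply] at h4x
  rw [h1, LinearMap.comp_apply, ← Coalgebra.coassoc_symm_apply, h4x]
  have h5 := LinearMap.congr_fun (Epure2 (K := K) (H := H))
    (((Coalgebra.comul : H →ₗ[K] H ⊗[K] H).lTensor H) (Coalgebra.comul x))
  simp only [LinearMap.comp_apply] at h5
  exact h5

end Scoalg

section Scoalg2

set_option synthInstance.maxHeartbeats 400000 in
set_option maxHeartbeats 1600000 in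
lemma C0 :
    LinearMap.mul' K (H ⊗[K] H) ∘ₗ
        (TensorProduct.map (sH K H) (sH K H) ∘ₗ
          (TensorProduct.comm K H H).toLinearMap).lTensor (H ⊗[K] H) ∘ₗ
        Phm K H =
      R3m K H ∘ₗ ((mm K H).rTensor H).lTensor H := by
  apply TensorProduct.ext'; intro a w
  induction w with
  | zero => simp only [TensorProduct.tmul_zero, map_zero]
  | add w1 w2 ih1 ih2 => simp only [TensorProduct.tmul_add, map_add, ih1, ih2]
  | tmul u d =>
    induction u with
    | zero => simp only [TensorProduct.zero_tmul, TensorProduct.tmul_zero, map_zero]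
    | add u1 u2 ih1 ih2 =>
      simp only [TensorProduct.add_tmul, TensorProduct.tmul_add, map_add, ih1, ih2]
    | tmul b c =>
      simp [Phm, R3m, mm, Algebra.TensorProduct.tmul_mul_tmul, mul_assoc]

lemma Gk : (Algebra.linearMap K H).rTensor H ∘ₗ TensorProduct.mk K K H 1 =
    TensorProduct.mk K H H 1 := by
  apply LinearMap.ext; intro d
  simp

lemma C2 : R3m K H ∘ₗ (TensorProduct.mk K H H 1).lTensor H =
    ((TensorProduct.mk K H H).flip 1) ∘ₗ mm K H := by
  apply TensorProduct.ext'; intro a d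
  simp [R3m, mm]

lemma C3 : ((TensorProduct.mk K H H).flip 1) ∘ₗ Algebra.linearMap K H =
    Algebra.linearMap K (H ⊗[K] H) := by
  apply LinearMap.ext; intro t
  simp only [LinearMap.comp_apply, Algebra.linearMap_apply, TensorProduct.mk_apply,
    LinearMap.flip_apply]
  rw [Algebra.TensorProduct.algebraMap_apply]

lemma cv_D_SSD (hcc : (TensorProduct.comm K H H).toLinearMap ∘ₗ Coalgebra.comul =
      (Coalgebra.comul : H →ₗ[K] H ⊗[K] H)) :
    cv (Coalgebra.comul : H →ₗ[K] H ⊗[K] H)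
        (TensorProduct.map (sH K H) (sH K H) ∘ₗ Coalgebra.comul) =
      (ce : H →ₗ[K] H ⊗[K] H) := by
  have hq : TensorProduct.map (sH K H) (sH K H) ∘ₗ
      (Coalgebra.comul : H →ₗ[K] H ⊗[K] H) =
      (TensorProduct.map (sH K H) (sH K H) ∘ₗ (TensorProduct.comm K H H).toLinearMap) ∘ₗ
        Coalgebra.comul := by
    rw [LinearMap.comp_assoc, hcc]
  rw [hq]
  set q := TensorProduct.map (sH K H) (sH K H) ∘ₗ (TensorProduct.comm K H H).toLinearMap
    with hqdef
  apply LinearMap.ext; intro x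
  rw [cv_apply]
  have hsplit : TensorProduct.map (Coalgebra.comul : H →ₗ[K] H ⊗[K] H)
      (q ∘ₗ Coalgebra.comul) =
      q.lTensor (H ⊗[K] H) ∘ₗ
        TensorProduct.map (Coalgebra.comul : H →ₗ[K] H ⊗[K] H) Coalgebra.comul := by
    apply TensorProduct.ext'; intro x y; simp
  rw [LinearMap.congr_fun hsplit (Coalgebra.comul x)]
  simp only [LinearMap.comp_apply]
  rw [E_applied x]
  have hC0 := LinearMap.congr_fun (C0 (K := K) (H := H))
    ((((Coalgebra.comul : H →ₗ[K] H ⊗[K] H).rTensor H).lTensor H)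
      (((Coalgebra.comul : H →ₗ[K] H ⊗[K] H).lTensor H) (Coalgebra.comul x)))
  simp only [LinearMap.comp_apply] at hC0
  rw [hC0]
  -- fuse the lTensor/rTensor chain
  have hmmD : (mm K H) ∘ₗ (Coalgebra.comul : H →ₗ[K] H ⊗[K] H) =
      Algebra.linearMap K H ∘ₗ Coalgebra.counit := by
    apply LinearMap.ext; intro y
    exact mm_comul y
  have inner : (mm K H).rTensor H ∘ₗ
      ((Coalgebra.comul : H →ₗ[K] H ⊗[K] H).rTensor H ∘ₗ Coalgebra.comul) =
      TensorProduct.mk K H H 1 := by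
    rw [← LinearMap.comp_assoc, ← LinearMap.rTensor_comp, hmmD, LinearMap.rTensor_comp,
      LinearMap.comp_assoc, Coalgebra.rTensor_counit_comp_comul, Gk]
  have hfuse : ((mm K H).rTensor H).lTensor H ∘ₗ
      ((Coalgebra.comul : H →ₗ[K] H ⊗[K] H).rTensor H).lTensor H ∘ₗ
      (Coalgebra.comul : H →ₗ[K] H ⊗[K] H).lTensor H =
      (TensorProduct.mk K H H 1).lTensor H := by
    rw [← LinearMap.lTensor_comp, ← LinearMap.lTensor_comp, inner]
  have hfx := LinearMap.congr_fun hfuse (Coalgebra.comul x)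
  simp only [LinearMap.comp_apply] at hfx
  rw [hfx]
  have hC2 := LinearMap.congr_fun (C2 (K := K) (H := H)) (Coalgebra.comul x)
  simp only [LinearMap.comp_apply] at hC2
  rw [hC2, mm_comul]
  exact LinearMap.congr_fun (C3 (K := K) (H := H)) (Coalgebra.counit x)

lemma S_coalg (hcc : (TensorProduct.comm K H H).toLinearMap ∘ₗ Coalgebra.comul =
      (Coalgebra.comul : H →ₗ[K] H ⊗[K] H)) :
    (Coalgebra.comul : H →ₗ[K] H ⊗[K] H) ∘ₗ sH K H =
      TensorProduct.map (sH K H) (sH K H) ∘ₗ Coalgebra.comul :=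
  cv_inv_unique cv_DS_D (cv_D_SSD hcc)

end Scoalg2

section Main

lemma eps_ce : (Coalgebra.counit : H →ₗ[K] K) = (ce : H →ₗ[K] K) := by
  apply LinearMap.ext; intro x
  simp [ce]

lemma counit_S :
    (Coalgebra.counit : H →ₗ[K] K) ∘ₗ sH K H = Coalgebra.counit := by
  have hmap : TensorProduct.map (Coalgebra.counit : H →ₗ[K] K) Coalgebra.counit ∘ₗ
      (sH K H).rTensor H =
      TensorProduct.map ((Coalgebra.counit : H →ₗ[K] K) ∘ₗ sH K H) Coalgebra.counit := by
    apply TensorProduct.ext'; intro x y; simp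
  apply LinearMap.ext; intro x
  have h := congrArg (Coalgebra.counit (R := K))
    (HopfAlgebra.mul_antipode_rTensor_comul_apply (R := K) x)
  rw [Bialgebra.counit_algebraMap] at h
  rw [show (HopfAlgebra.antipode K : H →ₗ[K] H) = sH K H from rfl] at h
  have h2 := LinearMap.congr_fun (counit_mul_map (K := K) (H := H))
    ((sH K H).rTensor H (Coalgebra.comul x))
  simp only [LinearMap.comp_apply] at h2
  rw [h2] at h
  have h3 := LinearMap.congr_fun hmap (Coalgebra.comul x)
  simp only [LinearMap.comp_apply] at h3
  rw [h3] at h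
  have h4 : cv ((Coalgebra.counit : H →ₗ[K] K) ∘ₗ sH K H) Coalgebra.counit x =
      Coalgebra.counit x := h
  rw [eps_ce, cv_unit_right] at h4
  exact h4

variable {B : H →ₗ[K] H}

lemma cv_B_SB (hBc : Coalgebra.comul ∘ₗ B = TensorProduct.map B B ∘ₗ Coalgebra.comul)
    (hBe : (Coalgebra.counit : H →ₗ[K] K) ∘ₗ B = Coalgebra.counit) :
    cv B (sH K H ∘ₗ B) = (ce : H →ₗ[K] H) := by
  have h := cv_comp (C' := H) LinearMap.id (sH K H) B hBc
  rw [LinearMap.id_comp, cv_id_S] at h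
  calc cv B (sH K H ∘ₗ B) = cv (LinearMap.id ∘ₗ B) (sH K H ∘ₗ B) := by
        rw [LinearMap.id_comp]
    _ = (ce : H →ₗ[K] H) ∘ₗ B := h
    _ = ce := by
        show (Algebra.linearMap K H ∘ₗ Coalgebra.counit) ∘ₗ B = _
        rw [LinearMap.comp_assoc, hBe]; rfl

lemma goal1 (hcc : (TensorProduct.comm K H H).toLinearMap ∘ₗ Coalgebra.comul =
      (Coalgebra.comul : H →ₗ[K] H ⊗[K] H))
    (hBc : Coalgebra.comul ∘ₗ B = TensorProduct.map B B ∘ₗ Coalgebra.comul)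
    (hBe : (Coalgebra.counit : H →ₗ[K] K) ∘ₗ B = Coalgebra.counit) :
    cv (cv LinearMap.id (B ∘ₗ sH K H)) (sH K H ∘ₗ B ∘ₗ sH K H) = LinearMap.id := by
  rw [cv_assoc]
  have hS := S_coalg (K := K) (H := H) hcc
  have h1 : cv (B ∘ₗ sH K H) ((sH K H ∘ₗ B) ∘ₗ sH K H) =
      cv B (sH K H ∘ₗ B) ∘ₗ sH K H := cv_comp _ _ _ hS
  have h3 : sH K H ∘ₗ B ∘ₗ sH K H = (sH K H ∘ₗ B) ∘ₗ sH K H := by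
    rw [LinearMap.comp_assoc]
  rw [h3, h1, cv_B_SB hBc hBe]
  have h4 : (ce : H →ₗ[K] H) ∘ₗ sH K H = ce := by
    show (Algebra.linearMap K H ∘ₗ Coalgebra.counit) ∘ₗ sH K H = _
    rw [LinearMap.comp_assoc, counit_S]; rfl
  rw [h4, cv_unit_right]

lemma goal2 (hcc : (TensorProduct.comm K H H).toLinearMap ∘ₗ Coalgebra.comul =
      (Coalgebra.comul : H →ₗ[K] H ⊗[K] H))
    (hBc : Coalgebra.comul ∘ₗ B = TensorProduct.map B B ∘ₗ Coalgebra.comul)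
    (hBe : (Coalgebra.counit : H →ₗ[K] K) ∘ₗ B = Coalgebra.counit) :
    cv B (sH K H ∘ₗ (cv LinearMap.id (B ∘ₗ sH K H)) ∘ₗ sH K H) = LinearMap.id := by
  have hS := S_coalg (K := K) (H := H) hcc
  have hSS := S_S (K := K) (H := H) hcc
  have hg : sH K H ∘ₗ (cv LinearMap.id (B ∘ₗ sH K H)) ∘ₗ sH K H =
      cv (sH K H ∘ₗ B) LinearMap.id := by
    have h1 : sH K H ∘ₗ cv LinearMap.id (B ∘ₗ sH K H) =
        cv (sH K H ∘ₗ (B ∘ₗ sH K H)) (sH K H) := by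
      rw [Srule hcc, LinearMap.comp_id]
    rw [← LinearMap.comp_assoc, h1, ← cv_comp _ _ _ hS, hSS]
    have e1 : (sH K H ∘ₗ (B ∘ₗ sH K H)) ∘ₗ sH K H = sH K H ∘ₗ B := by
      rw [LinearMap.comp_assoc, LinearMap.comp_assoc, hSS, LinearMap.comp_id]
    rw [e1]
  rw [hg, ← cv_assoc, cv_B_SB hBc hBe, cv_unit_left]

end Main


/-- `B̃(x₁) S(B(S(x₂))) = x` and `B(x₁) S(B̃(S(x₂))) = x`. -/
theorem stmt4 (B : H →ₗ[K] H) (hcc : IsCocomm K H) (hB : IsRotaBaxter B) :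
    ∀ x : H, conv (Bt B) (aS K H ∘ₗ B ∘ₗ aS K H) x = x ∧ conv B (aS K H ∘ₗ Bt B ∘ₗ aS K H) x = x := by
  have hccm : (TensorProduct.comm K H H).toLinearMap ∘ₗ Coalgebra.comul =
      (Coalgebra.comul : H →ₗ[K] H ⊗[K] H) := by
    apply LinearMap.ext; intro x
    simpa using hcc x
  intro x
  exact ⟨LinearMap.congr_fun (goal1 hccm hB.1 hB.2.1) x,
    LinearMap.congr_fun (goal2 hccm hB.1 hB.2.1) x⟩

end
end
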